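/- arXiv:2009.12454 — 14 statements merged into one kernel-verified Lean document; each statement's English description precedes it below -/
import Mathlib

section
/- Let H = {h_1 = 1, h_2, …, h_m} be as in the context. The map ψ_H is additive and multiplicative: ψ_H(s + t) = ψ_H(s) + ψ_H(t) and ψ_H(s·t) = ψ_H(s)·ψ_H(t) for all s, t ∈ T; moreover ψ_H(1_T) = e_H. (Proposition 2.1(i).) -/
/-- Proposition 2.1(i): ψ_H is additive and multiplicative, and ψ_H(1_T) = e_H. -/
theorem stmt_0 {T : Type*} [Ring T] {G : Type*} [Group G]
    (β : G →* RingAut T) (oneS : T)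
    (hcentral : ∀ t : T, oneS * t = t * oneS)
    (hidem : oneS * oneS = oneS)
    (m : ℕ) (hm : 0 < m) (h : ℕ → G) (h1 : h 0 = 1)
    (hinj : ∀ i < m, ∀ j < m, h i = h j → i = j)
    (hmulc : ∀ i < m, ∀ j < m, ∃ k < m, h i * h j = h k)
    (e : ℕ → T)
    (he : ∀ i, e i = (((List.range i).map fun j => 1 - β (h j) oneS).prod) * β (h i) oneS)
    (ψ : T → T) (hψ : ∀ t, ψ t = ∑ i ∈ Finset.range m, β (h i) t * e i)
    (eH : T) (heH : eH = ψ oneS) :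
    (∀ s t : T, ψ (s + t) = ψ s + ψ t) ∧
    (∀ s t : T, ψ (s * t) = ψ s * ψ t) ∧
    ψ 1 = eH := by
  -- β g oneS is central
  have fcen : ∀ (g : G) (t : T), Commute (β g oneS) t := by
    intro g t
    show β g oneS * t = t * β g oneS
    conv_lhs => rw [show t = β g ((β g).symm t) from ((β g).apply_symm_apply t).symm]
    rw [← map_mul, hcentral, map_mul, (β g).apply_symm_apply]
  have fidem : ∀ g : G, β g oneS * β g oneS = β g oneS := fun g => by
    rw [← map_mul, hidem]
  set P : ℕ → T := fun i => ((List.range i).map fun j => 1 - β (h j) oneS).prod with hP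
  have he' : ∀ i, e i = P i * β (h i) oneS := he
  have Pcen : ∀ (i : ℕ) (t : T), Commute (P i) t := by
    intro i t
    refine (Commute.list_prod_right _ _ ?_).symm
    intro x hx
    simp only [List.mem_map] at hx
    obtain ⟨j, -, rfl⟩ := hx
    exact (Commute.one_right t).sub_right (fcen (h j) t).symm
  have ecen : ∀ (i : ℕ) (t : T), Commute (e i) t := by
    intro i t
    rw [he']
    exact (Pcen i t).mul_left (fcen (h i) t)
  have Padd : ∀ a b : ℕ, P (a + b) =
      P a * ((List.range b).map fun j => 1 - β (h (a + j)) oneS).prod := by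
    intro a b
    simp [hP, List.range_add, List.map_map, Function.comp_def]
  have Psucc : ∀ i, P (i + 1) = P i * (1 - β (h i) oneS) := by
    intro i
    simp [hP, List.range_succ]
  have Pidem : ∀ i, P i * P i = P i := by
    intro i
    induction i with
    | zero => simp [hP]
    | succ n ih =>
      have hs : (1 - β (h n) oneS) * (1 - β (h n) oneS) = 1 - β (h n) oneS := by
        rw [mul_sub, mul_one, sub_mul, one_mul, fidem]; abel
      rw [Psucc, ((Commute.one_left (P n)).sub_left (fcen (h n) (P n))).mul_mul_mul_comm,
        ih, hs]
  have fe : ∀ i, β (h i) oneS * e i = e i := by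
    intro i
    rw [he']
    calc β (h i) oneS * (P i * β (h i) oneS)
        = (β (h i) oneS * P i) * β (h i) oneS := by rw [mul_assoc]
      _ = (P i * β (h i) oneS) * β (h i) oneS := by rw [(fcen (h i) (P i)).eq]
      _ = P i * (β (h i) oneS * β (h i) oneS) := by rw [mul_assoc]
      _ = P i * β (h i) oneS := by rw [fidem]
  have ei0 : ∀ i, e i * (1 - β (h i) oneS) = 0 := by
    intro i
    rw [he', mul_assoc, mul_sub, mul_one, fidem, sub_self, mul_zero]
  have eorth : ∀ i j, i < j → e i * e j = 0 := by
    intro i j hij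
    obtain ⟨k, rfl⟩ := Nat.exists_eq_add_of_lt hij
    set Q : T := ((List.range k).map fun j => 1 - β (h (i + 1 + j)) oneS).prod with hQ
    have hPj : P (i + k + 1) = P i * (1 - β (h i) oneS) * Q := by
      have : i + k + 1 = (i + 1) + k := by omega
      rw [this, Padd (i + 1) k, ← hQ]
      congr 1
      simp [hP, List.range_succ]
    rw [he' (i + k + 1), hPj]
    have hc : P i * (1 - β (h i) oneS) = (1 - β (h i) oneS) * P i :=
      ((Commute.one_left (P i)).sub_left (fcen (h i) (P i))).symm.eq
    rw [hc, mul_assoc, mul_assoc, ← mul_assoc (e i), ei0, zero_mul]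
  have eorth' : ∀ i j, i ≠ j → e i * e j = 0 := by
    intro i j hij
    rcases lt_or_gt_of_ne hij with hlt | hgt
    · exact eorth i j hlt
    · rw [(ecen i (e j)).eq]
      exact eorth j i hgt
  have eidem : ∀ i, e i * e i = e i := by
    intro i
    rw [he', (fcen (h i) (P i)).mul_mul_mul_comm, Pidem, fidem]
  have key : ∀ (i j : ℕ) (a b : T), (a * e i) * (b * e j) = (a * b) * (e i * e j) := by
    intro i j a b
    rw [mul_assoc, ← mul_assoc (e i), (ecen i b).eq, mul_assoc, ← mul_assoc]
  refine ⟨?_, ?_, ?_⟩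
  · intro s t
    simp only [hψ, map_add, add_mul, Finset.sum_add_distrib]
  · intro s t
    rw [hψ, hψ, hψ, Finset.sum_mul_sum]
    refine Finset.sum_congr rfl fun i hi => ?_
    rw [Finset.sum_eq_single i]
    · rw [key, eidem, map_mul]
    · intro j _ hji
      rw [key, eorth' i j (Ne.symm hji), mul_zero]
    · intro hni
      exact absurd hi hni
  · rw [heH, hψ, hψ]
    refine Finset.sum_congr rfl fun i _ => ?_
    rw [map_one, one_mul, fe]
end

section
/- For every t ∈ T one has ψ_H(t)·1_S = t·1_S (in particular the restriction of ψ_H to the ideal S = T·1_S is injective), and the element e_H = ψ_H(1_S) is a central idempotent of T. (Proposition 2.1(iii),(iv).) -/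
/-- Proposition 2.1(iii),(iv): ψ_H(t)·1_S = t·1_S (hence ψ_H is injective on S = T·1_S),
and e_H is a central idempotent of T. -/
theorem stmt_1 {T : Type*} [Ring T] {G : Type*} [Group G]
    (β : G →* RingAut T) (oneS : T)
    (hcentral : ∀ t : T, oneS * t = t * oneS)
    (hidem : oneS * oneS = oneS)
    (m : ℕ) (hm : 0 < m) (h : ℕ → G) (h1 : h 0 = 1)
    (hinj : ∀ i < m, ∀ j < m, h i = h j → i = j)
    (hmulc : ∀ i < m, ∀ j < m, ∃ k < m, h i * h j = h k)
    (e : ℕ → T)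
    (he : ∀ i, e i = (((List.range i).map fun j => 1 - β (h j) oneS).prod) * β (h i) oneS)
    (ψ : T → T) (hψ : ∀ t, ψ t = ∑ i ∈ Finset.range m, β (h i) t * e i)
    (eH : T) (heH : eH = ψ oneS) :
    (∀ t : T, ψ t * oneS = t * oneS) ∧
    (∀ x y : T, ψ (x * oneS) = ψ (y * oneS) → x * oneS = y * oneS) ∧
    (∀ t : T, eH * t = t * eH) ∧
    eH * eH = eH := by
  obtain ⟨f, hfdef⟩ : ∃ f : ℕ → T, ∀ j, f j = β (h j) oneS :=
    ⟨fun j => β (h j) oneS, fun _ => rfl⟩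
  -- each f j is central
  have hf_cent : ∀ j t, f j * t = t * f j := by
    intro j t
    rw [hfdef]
    calc β (h j) oneS * t
        = β (h j) oneS * β (h j) ((β (h j)).symm t) := by
          rw [RingEquiv.apply_symm_apply]
      _ = β (h j) (oneS * (β (h j)).symm t) := by rw [map_mul]
      _ = β (h j) ((β (h j)).symm t * oneS) := by rw [hcentral]
      _ = β (h j) ((β (h j)).symm t) * β (h j) oneS := by rw [map_mul]
      _ = t * β (h j) oneS := by rw [RingEquiv.apply_symm_apply]
  have hf_idem : ∀ j, f j * f j = f j := by
    intro j; rw [hfdef, ← map_mul, hidem]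
  have hf0 : f 0 = oneS := by
    rw [hfdef, h1, map_one]; rfl
  obtain ⟨P, hPdef⟩ : ∃ P : ℕ → T, ∀ n, P n = ((List.range n).map fun j => 1 - f j).prod :=
    ⟨fun n => ((List.range n).map fun j => 1 - f j).prod, fun _ => rfl⟩
  have hP0 : P 0 = 1 := by simp [hPdef]
  have hPsucc : ∀ n, P (n + 1) = P n * (1 - f n) := by
    intro n
    rw [hPdef, hPdef, List.range_succ]
    simp
  have h1f_cent : ∀ k t, (1 - f k) * t = t * (1 - f k) := by
    intro k t
    rw [sub_mul, mul_sub, one_mul, mul_one, hf_cent]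
  have hPcent : ∀ n t, P n * t = t * P n := by
    intro n
    induction n with
    | zero => intro t; simp [hP0]
    | succ k ih =>
      intro t
      rw [hPsucc, mul_assoc, h1f_cent, ← mul_assoc, ih, mul_assoc]
  have h1f_idem : ∀ k, (1 - f k) * (1 - f k) = 1 - f k := by
    intro k
    rw [sub_mul, one_mul, mul_sub, mul_one, hf_idem, sub_self, sub_zero]
  have hPidem : ∀ n, P n * P n = P n := by
    intro n
    induction n with
    | zero => simp [hP0]
    | succ k ih =>
      rw [hPsucc]
      calc P k * (1 - f k) * (P k * (1 - f k))
          = P k * ((1 - f k) * P k * (1 - f k)) := by noncomm_ring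
        _ = P k * (P k * (1 - f k) * (1 - f k)) := by rw [h1f_cent]
        _ = P k * P k * ((1 - f k) * (1 - f k)) := by noncomm_ring
        _ = P k * P k * (1 - f k) := by rw [h1f_idem]
        _ = P k * (1 - f k) := by rw [ih]
  have hprodP : ∀ i, ((List.range i).map fun j => 1 - β (h j) oneS).prod = P i := by
    intro i
    rw [hPdef]
    congr 1
    exact List.map_congr_left fun j _ => by rw [hfdef]
  have he2 : ∀ i, e i = P i * f i := by
    intro i; rw [he, hprodP, hfdef]
  have he' : ∀ i, e i = P i - P (i + 1) := by
    intro i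
    rw [he2, hPsucc, mul_sub, mul_one, sub_sub_cancel]
  -- e i * oneS = 0 for i ≥ 1
  have hPone : ∀ n, P (n + 1) * oneS = 0 := by
    intro n
    induction n with
    | zero =>
      rw [hPsucc, hP0, one_mul, hf0, sub_mul, one_mul, hidem, sub_self]
    | succ k ih =>
      have hcomm : (1 - f (k + 1)) * oneS = oneS * (1 - f (k + 1)) := h1f_cent _ _
      rw [hPsucc, mul_assoc, hcomm, ← mul_assoc, ih, zero_mul]
  have he_one : ∀ i, 1 ≤ i → e i * oneS = 0 := by
    intro i hi
    obtain ⟨k, rfl⟩ : ∃ k, i = k + 1 := ⟨i - 1, by omega⟩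
    rw [he2, mul_assoc, hf_cent, ← mul_assoc, hPone, zero_mul]
  have he0 : e 0 = oneS := by
    rw [he2, hP0, one_mul, hf0]
  -- Part (iii): ψ t * oneS = t * oneS
  have part1 : ∀ t : T, ψ t * oneS = t * oneS := by
    intro t
    rw [hψ, Finset.sum_mul]
    rw [Finset.sum_eq_single_of_mem 0 (Finset.mem_range.mpr hm)]
    · rw [he0, h1, map_one]
      show t * oneS * oneS = t * oneS
      rw [mul_assoc, hidem]
    · intro b _ hb
      rw [mul_assoc, he_one b (Nat.one_le_iff_ne_zero.mpr hb), mul_zero]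
  -- eH = 1 - P m
  have heH' : eH = 1 - P m := by
    rw [heH, hψ]
    have hterm : ∀ i, β (h i) oneS * e i = e i := by
      intro i
      rw [he2, ← hfdef, ← mul_assoc, hf_cent, mul_assoc, hf_idem]
    calc (∑ i ∈ Finset.range m, β (h i) oneS * e i)
        = ∑ i ∈ Finset.range m, e i := Finset.sum_congr rfl fun i _ => hterm i
      _ = ∑ i ∈ Finset.range m, (P i - P (i + 1)) :=
          Finset.sum_congr rfl fun i _ => he' i
      _ = P 0 - P m := Finset.sum_range_sub' P m
      _ = 1 - P m := by rw [hP0]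
  refine ⟨part1, ?_, ?_, ?_⟩
  · intro x y hxy
    have hx := part1 (x * oneS)
    have hy := part1 (y * oneS)
    rw [mul_assoc, hidem] at hx hy
    rw [hxy] at hx
    exact hx.symm.trans hy
  · intro t
    rw [heH', sub_mul, mul_sub, one_mul, mul_one, hPcent]
  · rw [heH', sub_mul, one_mul, mul_sub, mul_one, hPidem, sub_self, sub_zero]
end

section
/- If s ∈ S^{α_H}, i.e. s = s·1_S and β_h(s)·1_S = s·1_h for all h ∈ H, then β_h(ψ_H(s)) = ψ_H(s) for all h ∈ H; that is, ψ_H maps the invariants S^{α_H} into the fixed ring T^{β_H}. (Proposition 2.1(v).) -/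
namespace Stmt2Aux

variable {T : Type*} [Ring T]

lemma cent_one_sub {x : T} (hx : ∀ t, x * t = t * x) : ∀ t, (1 - x) * t = t * (1 - x) :=
  fun t => by rw [sub_mul, mul_sub, one_mul, mul_one, hx]

lemma cent_mul {x y : T} (hx : ∀ t, x * t = t * x) (hy : ∀ t, y * t = t * y) :
    ∀ t, (x * y) * t = t * (x * y) := fun t => by
  rw [mul_assoc, hy, ← mul_assoc, hx, mul_assoc]

lemma cent_list_prod (l : List T) (hc : ∀ x ∈ l, ∀ t, x * t = t * x) :
    ∀ t, l.prod * t = t * l.prod := by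
  induction l with
  | nil => simp
  | cons a l ih =>
    intro t
    rw [List.prod_cons, mul_assoc, ih (fun x hx => hc x (List.mem_cons_of_mem _ hx)) t,
      ← mul_assoc, hc a List.mem_cons_self, mul_assoc]

lemma cent_mem_prod_eq_zero (l : List T) {x : T} (hx : ∀ t, x * t = t * x)
    (hmem : (1 - x) ∈ l) (hid : x * x = x) : x * l.prod = 0 := by
  obtain ⟨a, b, rfl⟩ := List.append_of_mem hmem
  have h0 : x * (1 - x) = 0 := by rw [mul_sub, mul_one, hid, sub_self]
  rw [List.prod_append, List.prod_cons, ← mul_assoc, hx a.prod, mul_assoc, ← mul_assoc x,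
    h0, zero_mul, mul_zero]

lemma cent_ringequiv (σ : T ≃+* T) {x : T} (hx : ∀ t, x * t = t * x) :
    ∀ t, σ x * t = t * σ x := fun t => by
  have h1 : σ x * t = σ (x * σ.symm t) := by rw [map_mul, RingEquiv.apply_symm_apply]
  rw [h1, hx, map_mul, RingEquiv.apply_symm_apply]

/-- The "tail" product `∏_{j<i} (1 - f j)`. -/
def Pl (f : ℕ → T) (i : ℕ) : T := ((List.range i).map fun j => 1 - f j).prod

lemma Pl_cent (f : ℕ → T) (fcent : ∀ j t, f j * t = t * f j) (i : ℕ) :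
    ∀ t, Pl f i * t = t * Pl f i := by
  refine cent_list_prod _ ?_
  intro x hx
  simp only [List.mem_map, List.mem_range] at hx
  obtain ⟨j, _, rfl⟩ := hx
  exact cent_one_sub (fcent j)

lemma f_mul_Pl (f : ℕ → T) (fcent : ∀ j t, f j * t = t * f j)
    (fidem : ∀ j, f j * f j = f j) {j m : ℕ} (hj : j < m) : f j * Pl f m = 0 :=
  cent_mem_prod_eq_zero _ (fcent j) (List.mem_map_of_mem (f := fun j => 1 - f j) (List.mem_range.mpr hj)) (fidem j)

lemma Pl_succ (f : ℕ → T) (i : ℕ) : Pl f (i + 1) = Pl f i * (1 - f i) := by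
  simp [Pl, List.range_succ]

lemma sum_Pl_f (f : ℕ → T) (m : ℕ) :
    ∑ i ∈ Finset.range m, Pl f i * f i = 1 - Pl f m := by
  have h1 : ∀ i, Pl f i * f i = Pl f i - Pl f (i + 1) := fun i => by
    rw [Pl_succ, mul_sub, mul_one, sub_sub_cancel]
  rw [Finset.sum_congr rfl fun i _ => h1 i, Finset.sum_range_sub' (Pl f)]
  simp [Pl]

lemma repr_unique (m : ℕ) (f c : ℕ → T) (fcent : ∀ j t, f j * t = t * f j)
    (w : T) (hwf : ∀ j, j < m → w * f j = c j) (hwP : w * Pl f m = 0) :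
    w = ∑ j ∈ Finset.range m, c j * Pl f j := by
  have h1 : w = w * (1 - Pl f m) := by rw [mul_sub, mul_one, hwP, sub_zero]
  rw [h1, ← sum_Pl_f, Finset.mul_sum]
  refine Finset.sum_congr rfl fun j hj => ?_
  rw [Pl_cent f fcent j (f j), ← mul_assoc, hwf j (Finset.mem_range.mp hj)]

end Stmt2Aux

open Stmt2Aux in
/-- Proposition 2.1(v): ψ_H maps the invariants S^{α_H} into the fixed ring T^{β_H}. -/
theorem stmt_2 {T : Type*} [Ring T] {G : Type*} [Group G]
    (β : G →* RingAut T) (oneS : T)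
    (hcentral : ∀ t : T, oneS * t = t * oneS)
    (hidem : oneS * oneS = oneS)
    (m : ℕ) (hm : 0 < m) (h : ℕ → G) (h1 : h 0 = 1)
    (hinj : ∀ i < m, ∀ j < m, h i = h j → i = j)
    (hmulc : ∀ i < m, ∀ j < m, ∃ k < m, h i * h j = h k)
    (e : ℕ → T)
    (he : ∀ i, e i = (((List.range i).map fun j => 1 - β (h j) oneS).prod) * β (h i) oneS)
    (ψ : T → T) (hψ : ∀ t, ψ t = ∑ i ∈ Finset.range m, β (h i) t * e i)
    (eH : T) (heH : eH = ψ oneS) :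
    ∀ s : T, s * oneS = s →
      (∀ i < m, β (h i) s * oneS = s * (β (h i) oneS * oneS)) →
      ∀ i < m, β (h i) (ψ s) = ψ s := by
  intro s hs1 hsinv k hk
  classical
  have bcomp : ∀ (a b : G) (x : T), β a (β b x) = β (a * b) x := fun a b x => by
    rw [map_mul]; rfl
  have fcent : ∀ (g : G) (t : T), β g oneS * t = t * β g oneS := fun g =>
    cent_ringequiv (β g : T ≃+* T) hcentral
  set F : ℕ → T := fun j => β (h j) oneS with hF
  have Fcent : ∀ (j : ℕ) (t : T), F j * t = t * F j := fun j => fcent (h j)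
  have Fidem : ∀ j : ℕ, F j * F j = F j := fun j => by
    show β (h j) oneS * β (h j) oneS = β (h j) oneS
    rw [← map_mul, hidem]
  have sfix : ∀ j : ℕ, β (h j) s * F j = β (h j) s := fun j => by
    show β (h j) s * β (h j) oneS = β (h j) s
    rw [← map_mul, hs1]
  have he' : ∀ i, e i = Pl F i * F i := fun i => he i
  -- surjectivity of left multiplication on the enumeration
  have hsurj : ∀ i, i < m → ∀ j, j < m → ∃ l, l < m ∧ h i * h l = h j := by
    intro i hi j hj
    choose φ hφ1 hφ2 using hmulc i hi
    let g' : Fin m → Fin m := fun l => ⟨φ l.1 l.2, hφ1 l.1 l.2⟩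
    have hginj : Function.Injective g' := by
      intro a b hab
      have hval : φ a.1 a.2 = φ b.1 b.2 := congrArg Fin.val hab
      have : h i * h a.1 = h i * h b.1 := by rw [hφ2 a.1 a.2, hφ2 b.1 b.2, hval]
      have := hinj a.1 a.2 b.1 b.2 (mul_left_cancel this)
      exact Fin.ext this
    obtain ⟨l, hl⟩ := (Finite.injective_iff_surjective.mp hginj) ⟨j, hj⟩
    refine ⟨l.1, l.2, ?_⟩
    rw [hφ2 l.1 l.2]
    exact congrArg h (congrArg Fin.val hl)
  -- the key symmetric relation
  have star : ∀ i, i < m → ∀ j, j < m → β (h j) s * F i = β (h i) s * F j := by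
    intro i hi j hj
    show β (h j) s * β (h i) oneS = β (h i) s * β (h j) oneS
    obtain ⟨l, hl, hil⟩ := hsurj i hi j hj
    have hrel : β (h l) s * oneS = s * β (h l) oneS := by
      rw [hsinv l hl, fcent (h l) oneS, ← mul_assoc, hs1]
    have h2 := congrArg (β (h i)) hrel
    rw [map_mul, map_mul, bcomp, bcomp, hil] at h2
    exact h2
  -- ψ s multiplied by the idempotents
  have uf : ∀ l, l < m → ψ s * F l = β (h l) s := by
    intro l hl
    rw [hψ, Finset.sum_mul]
    have hterm : ∀ i ∈ Finset.range m, β (h i) s * e i * F l = β (h l) s * e i := by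
      intro i hi
      rw [Finset.mem_range] at hi
      rw [he' i]
      have hc : Pl F i * F i * F l = F l * (Pl F i * F i) :=
        cent_mul (Pl_cent F Fcent i) (Fcent i) _
      have hrr : F i * (Pl F i * F i) = Pl F i * F i := by
        rw [← mul_assoc, Fcent i (Pl F i), mul_assoc, Fidem i]
      calc β (h i) s * (Pl F i * F i) * F l
          = β (h i) s * F l * (Pl F i * F i) := by rw [mul_assoc, hc, ← mul_assoc]
        _ = β (h l) s * F i * (Pl F i * F i) := by rw [star l hl i hi]
        _ = β (h l) s * (F i * (Pl F i * F i)) := by rw [mul_assoc]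
        _ = β (h l) s * (Pl F i * F i) := by rw [hrr]
    rw [Finset.sum_congr rfl hterm, ← Finset.mul_sum]
    have hsum : ∑ i ∈ Finset.range m, e i = 1 - Pl F m := by
      rw [Finset.sum_congr rfl fun i _ => he' i, sum_Pl_f]
    rw [hsum, mul_sub, mul_one]
    have h0 : β (h l) s * Pl F m = 0 := by
      rw [← sfix l, mul_assoc, f_mul_Pl F Fcent Fidem hl, mul_zero]
    rw [h0, sub_zero]
  have uP : ψ s * Pl F m = 0 := by
    rw [hψ, Finset.sum_mul]
    refine Finset.sum_eq_zero fun i hi => ?_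
    rw [Finset.mem_range] at hi
    rw [he' i, mul_assoc, mul_assoc, f_mul_Pl F Fcent Fidem hi, mul_zero, mul_zero]
  -- the transported facts for v = β (h k) (ψ s)
  have vf : ∀ j, j < m → β (h k) (ψ s) * F j = β (h j) s := by
    intro j hj
    obtain ⟨l, hl, hkl⟩ := hsurj k hk j hj
    have h1 : F j = β (h k) (F l) := by
      show β (h j) oneS = β (h k) (β (h l) oneS)
      rw [bcomp, hkl]
    rw [h1, ← map_mul, uf l hl, bcomp, hkl]
  have vP : β (h k) (ψ s) * Pl F m = 0 := by
    rw [hψ, map_sum, Finset.sum_mul]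
    refine Finset.sum_eq_zero fun i hi => ?_
    rw [Finset.mem_range] at hi
    obtain ⟨l, hl, hkl⟩ := hmulc k hk i hi
    have hCcent : ∀ t, β (h k) (Pl F i * F i) * t = t * β (h k) (Pl F i * F i) :=
      cent_ringequiv (β (h k) : T ≃+* T) (cent_mul (Pl_cent F Fcent i) (Fcent i))
    have hbk : β (h k) (β (h i) s) = β (h l) s := by rw [bcomp, hkl]
    rw [he' i, map_mul, hbk, mul_assoc, hCcent (Pl F m), ← mul_assoc]
    have h0 : β (h l) s * Pl F m = 0 := by
      rw [← sfix l, mul_assoc, f_mul_Pl F Fcent Fidem hl, mul_zero]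
    rw [h0, zero_mul]
  have urepr := repr_unique m F (fun j => β (h j) s) Fcent (ψ s) uf uP
  have vrepr := repr_unique m F (fun j => β (h j) s) Fcent (β (h k) (ψ s)) vf vP
  exact vrepr.trans urepr.symm
end

section
/- Multiplication by 1_S is a bijection from T^{β_H}·e_H onto S^{α_H}, with inverse ψ_H. Precisely: (a) for every x ∈ T^{β_H}, the element x·1_S lies in S^{α_H} and ψ_H(x·1_S) = x·e_H; (b) for every s ∈ S^{α_H}, ψ_H(s) lies in T^{β_H}·e_H and ψ_H(s)·1_S = s. In particular {x·1_S : x ∈ T^{β_H}} = S^{α_H}. (Proposition 2.1(vi).) -/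
namespace Stmt3Aux
variable {T : Type*} [Ring T] (F : ℕ → Subring.center T)

def P (n : ℕ) : Subring.center T := ∏ j ∈ Finset.range n, (1 - F j)

def E (i : ℕ) : Subring.center T := P F i * F i

theorem P_succ (n : ℕ) : P F (n + 1) = P F n * (1 - F n) :=
  Finset.prod_range_succ _ _

theorem P_mul_F (hFidem : ∀ i, F i * F i = F i) :
    ∀ {n j : ℕ}, j < n → P F n * F j = 0 := by
  intro n
  induction n with
  | zero => intro j hj; exact absurd hj (Nat.not_lt_zero j)
  | succ n ih =>
    intro j hj
    rw [P_succ]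
    rcases Nat.lt_succ_iff_lt_or_eq.mp hj with hj' | rfl
    · calc P F n * (1 - F n) * F j = P F n * F j * (1 - F n) := by ring
        _ = 0 := by rw [ih hj', zero_mul]
    · calc P F j * (1 - F j) * F j = P F j * (F j - F j * F j) := by ring
        _ = 0 := by rw [hFidem, sub_self, mul_zero]

theorem P_idem (hFidem : ∀ i, F i * F i = F i) : ∀ n, P F n * P F n = P F n := by
  intro n
  induction n with
  | zero => simp [P]
  | succ n ih =>
    rw [P_succ]
    have h1 : (1 - F n) * (1 - F n) = 1 - F n := by
      calc (1 - F n) * (1 - F n) = 1 - F n - (F n - F n * F n) := by ring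
        _ = 1 - F n := by rw [hFidem, sub_self, sub_zero]
    calc P F n * (1 - F n) * (P F n * (1 - F n))
        = P F n * P F n * ((1 - F n) * (1 - F n)) := by ring
      _ = P F n * (1 - F n) := by rw [ih, h1]

theorem E_mul_F (hFidem : ∀ i, F i * F i = F i) (i : ℕ) : E F i * F i = E F i := by
  unfold E; rw [mul_assoc, hFidem]

theorem sum_E (n : ℕ) : ∑ i ∈ Finset.range n, E F i = 1 - P F n := by
  induction n with
  | zero => simp [P]
  | succ n ih =>
    rw [Finset.sum_range_succ, ih, P_succ]
    unfold E; ring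

theorem E_orth (hFidem : ∀ i, F i * F i = F i) {i j : ℕ} (hij : i ≠ j) :
    E F i * E F j = 0 := by
  unfold E
  rcases Nat.lt_or_ge i j with hlt | hge
  · calc P F i * F i * (P F j * F j) = P F i * (P F j * F i) * F j := by ring
      _ = 0 := by rw [P_mul_F F hFidem hlt]; ring
  · have hlt : j < i := lt_of_le_of_ne hge (Ne.symm hij)
    calc P F i * F i * (P F j * F j) = P F j * (P F i * F j) * F i := by ring
      _ = 0 := by rw [P_mul_F F hFidem hlt]; ring

theorem E_idem (hFidem : ∀ i, F i * F i = F i) (i : ℕ) : E F i * E F i = E F i := by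
  unfold E
  calc P F i * F i * (P F i * F i) = P F i * P F i * (F i * F i) := by ring
    _ = P F i * F i := by rw [P_idem F hFidem, hFidem]

theorem P_mul_E (hFidem : ∀ i, F i * F i = F i) {n j : ℕ} (hj : j < n) :
    P F n * E F j = 0 := by
  unfold E
  calc P F n * (P F j * F j) = P F j * (P F n * F j) := by ring
    _ = 0 := by rw [P_mul_F F hFidem hj, mul_zero]

theorem E_mul_sum (hFidem : ∀ i, F i * F i = F i) {n i : ℕ} (hi : i < n) :
    E F i * ∑ j ∈ Finset.range n, E F j = E F i := by
  rw [Finset.mul_sum,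
    Finset.sum_eq_single_of_mem i (Finset.mem_range.mpr hi)
      (fun j _ hne => E_orth F hFidem (Ne.symm hne))]
  exact E_idem F hFidem i

end Stmt3Aux

/-- Proposition 2.1(vi): multiplication by 1_S is a bijection from T^{β_H}·e_H onto
S^{α_H}, with inverse ψ_H; in particular T^{β_H}·1_S = S^{α_H}. -/
theorem stmt_3 {T : Type*} [Ring T] {G : Type*} [Group G]
    (β : G →* RingAut T) (oneS : T)
    (hcentral : ∀ t : T, oneS * t = t * oneS)
    (hidem : oneS * oneS = oneS)
    (m : ℕ) (hm : 0 < m) (h : ℕ → G) (h1 : h 0 = 1)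
    (hinj : ∀ i < m, ∀ j < m, h i = h j → i = j)
    (hmulc : ∀ i < m, ∀ j < m, ∃ k < m, h i * h j = h k)
    (e : ℕ → T)
    (he : ∀ i, e i = (((List.range i).map fun j => 1 - β (h j) oneS).prod) * β (h i) oneS)
    (ψ : T → T) (hψ : ∀ t, ψ t = ∑ i ∈ Finset.range m, β (h i) t * e i)
    (eH : T) (heH : eH = ψ oneS) :
    (∀ x : T, (∀ i < m, β (h i) x = x) →
      (x * oneS) * oneS = x * oneS ∧
      (∀ i < m, β (h i) (x * oneS) * oneS = (x * oneS) * (β (h i) oneS * oneS)) ∧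
      ψ (x * oneS) = x * eH) ∧
    (∀ s : T, s * oneS = s →
      (∀ i < m, β (h i) s * oneS = s * (β (h i) oneS * oneS)) →
      (∃ x : T, (∀ i < m, β (h i) x = x) ∧ ψ s = x * eH) ∧ ψ s * oneS = s) ∧
    ({t : T | ∃ x : T, (∀ i < m, β (h i) x = x) ∧ t = x * oneS} =
      {s : T | s * oneS = s ∧ ∀ i < m, β (h i) s * oneS = s * (β (h i) oneS * oneS)}) := by
  classical
  have hβmul : ∀ (a b : G) (t : T), β a (β b t) = β (a * b) t := fun a b t => by
    rw [map_mul]; rfl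
  have hβ0 : ∀ t : T, β (h 0) t = t := fun t => by rw [h1, map_one]; rfl
  have hC : ∀ (g : G) (t : T), β g oneS * t = t * β g oneS := by
    intro g t
    conv_lhs => rw [← (β g).apply_symm_apply t]
    conv_rhs => rw [← (β g).apply_symm_apply t]
    rw [← map_mul, ← map_mul, hcentral]
  have hcent : ∀ i : ℕ, β (h i) oneS ∈ Subring.center T :=
    fun i => Subring.mem_center_iff.mpr fun t => (hC (h i) t).symm
  set F : ℕ → Subring.center T := fun i => ⟨β (h i) oneS, hcent i⟩ with hF
  have hFidem : ∀ i, F i * F i = F i := fun i => Subtype.ext (by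
    show β (h i) oneS * β (h i) oneS = β (h i) oneS
    rw [← map_mul, hidem])
  have coeMul : ∀ a b : Subring.center T,
      ((a * b : Subring.center T) : T) = (a : T) * (b : T) := fun _ _ => rfl
  have coeSum : ∀ (n : ℕ) (g : ℕ → Subring.center T),
      ((∑ i ∈ Finset.range n, g i : Subring.center T) : T)
        = ∑ i ∈ Finset.range n, (g i : T) := by
    intro n g
    induction n with
    | zero => rfl
    | succ n ih => rw [Finset.sum_range_succ, Finset.sum_range_succ, ← ih]; rfl
  have hPlist : ∀ n, ((List.range n).map fun j => 1 - β (h j) oneS).prod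
      = ((Stmt3Aux.P F n : Subring.center T) : T) := by
    intro n
    induction n with
    | zero => simp [Stmt3Aux.P]
    | succ n ih =>
      rw [List.range_succ, List.map_append, List.prod_append, ih, Stmt3Aux.P_succ,
        List.map_cons, List.map_nil, List.prod_cons, List.prod_nil, mul_one, coeMul]
      rfl
  have heE : ∀ i, e i = ((Stmt3Aux.E F i : Subring.center T) : T) := by
    intro i
    rw [he, hPlist]
    rfl
  -- permutation data
  choose σ hσlt hσeq using hmulc
  have hsurj : ∀ k (hk : k < m), ∀ j, j < m → ∃ i, ∃ hi : i < m, j = σ k hk i hi := by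
    intro k hk
    have hmain := Finset.surj_on_of_inj_on_of_card_le
      (s := Finset.range m) (t := Finset.range m)
      (fun i hi => σ k hk i (Finset.mem_range.mp hi))
      (fun i hi => Finset.mem_range.mpr (hσlt k hk i (Finset.mem_range.mp hi)))
      (fun i₁ i₂ hi₁ hi₂ hEq => by
        apply hinj i₁ (Finset.mem_range.mp hi₁) i₂ (Finset.mem_range.mp hi₂)
        apply mul_left_cancel (a := h k)
        rw [hσeq k hk i₁ (Finset.mem_range.mp hi₁), hσeq k hk i₂ (Finset.mem_range.mp hi₂)]
        exact congrArg h hEq)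
      le_rfl
    intro j hj
    obtain ⟨i, hi, hij⟩ := hmain j (Finset.mem_range.mpr hj)
    exact ⟨i, Finset.mem_range.mp hi, hij⟩
  -- the swap lemma
  have hswap : ∀ s : T, s * oneS = s →
      (∀ i < m, β (h i) s * oneS = s * (β (h i) oneS * oneS)) →
      ∀ i, i < m → ∀ j, j < m →
        β (h i) s * (β (h i) oneS * β (h j) oneS)
          = β (h j) s * (β (h i) oneS * β (h j) oneS) := by
    intro s hs1 hs2 i hi j hj
    obtain ⟨l, hl, hlj⟩ := hsurj j hj i hi
    have hji : h j * h l = h i := by rw [hσeq j hj l hl, ← hlj]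
    have key2 := congrArg (β (h j)) (hs2 l hl)
    simp only [map_mul, hβmul, hji] at key2
    have hfix : β (h i) s * β (h i) oneS = β (h i) s := by rw [← map_mul, hs1]
    calc β (h i) s * (β (h i) oneS * β (h j) oneS)
        = β (h i) s * β (h i) oneS * β (h j) oneS := by rw [mul_assoc]
      _ = β (h i) s * β (h j) oneS := by rw [hfix]
      _ = β (h j) s * (β (h i) oneS * β (h j) oneS) := key2
  -- β maps the center into the center
  have hβcent : ∀ (g : G) (x : T), x ∈ Subring.center T → β g x ∈ Subring.center T := by
    intro g x hx
    rw [Subring.mem_center_iff] at hx ⊢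
    intro t
    conv_lhs => rw [← (β g).apply_symm_apply t]
    rw [← map_mul, hx, map_mul, (β g).apply_symm_apply]
  set bc : G → (Subring.center T →+* Subring.center T) := fun g =>
    RingHom.codRestrict ((β g).toRingHom.comp (Subring.center T).subtype)
      (Subring.center T) (fun x => hβcent g (x : T) x.2) with hbc
  have hbcapp : ∀ (g : G) (x : Subring.center T), ((bc g x : Subring.center T) : T) = β g (x : T) :=
    fun g x => rfl
  have hbcF : ∀ k (hk : k < m), ∀ i (hi : i < m), bc (h k) (F i) = F (σ k hk i hi) := by
    intro k hk i hi
    apply Subtype.ext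
    rw [hbcapp]
    show β (h k) (β (h i) oneS) = β (h (σ k hk i hi)) oneS
    rw [hβmul, hσeq k hk i hi]
  have hbcP : ∀ k (hk : k < m), bc (h k) (Stmt3Aux.P F m) = Stmt3Aux.P F m := by
    intro k hk
    unfold Stmt3Aux.P
    rw [map_prod]
    refine Finset.prod_bij (fun i hi => σ k hk i (Finset.mem_range.mp hi)) ?_ ?_ ?_ ?_
    · intro a ha
      exact Finset.mem_range.mpr (hσlt k hk a (Finset.mem_range.mp ha))
    · intro a₁ ha₁ a₂ ha₂ hEq
      apply hinj a₁ (Finset.mem_range.mp ha₁) a₂ (Finset.mem_range.mp ha₂)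
      apply mul_left_cancel (a := h k)
      rw [hσeq k hk a₁ (Finset.mem_range.mp ha₁), hσeq k hk a₂ (Finset.mem_range.mp ha₂)]
      exact congrArg h hEq
    · intro b hb
      obtain ⟨i, hi, hib⟩ := hsurj k hk b (Finset.mem_range.mp hb)
      exact ⟨i, Finset.mem_range.mpr hi, hib.symm⟩
    · intro a ha
      rw [map_sub, map_one, hbcF k hk a (Finset.mem_range.mp ha)]
  -- ψ in terms of E
  have hψE : ∀ s : T, ψ s = ∑ i ∈ Finset.range m, β (h i) s * ((Stmt3Aux.E F i : Subring.center T) : T) := by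
    intro s
    rw [hψ]
    exact Finset.sum_congr rfl fun i _ => by rw [heE]
  have heHsum : eH = ∑ i ∈ Finset.range m, ((Stmt3Aux.E F i : Subring.center T) : T) := by
    rw [heH, hψE]
    refine Finset.sum_congr rfl fun i _ => ?_
    calc β (h i) oneS * ((Stmt3Aux.E F i : Subring.center T) : T)
        = ((F i * Stmt3Aux.E F i : Subring.center T) : T) := (coeMul (F i) _).symm
      _ = ((Stmt3Aux.E F i : Subring.center T) : T) := by
          rw [mul_comm, Stmt3Aux.E_mul_F F hFidem]
  -- Part (a)
  have partA : ∀ x : T, (∀ i < m, β (h i) x = x) →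
      (x * oneS) * oneS = x * oneS ∧
      (∀ i < m, β (h i) (x * oneS) * oneS = (x * oneS) * (β (h i) oneS * oneS)) ∧
      ψ (x * oneS) = x * eH := by
    intro x hx
    refine ⟨by rw [mul_assoc, hidem], ?_, ?_⟩
    · intro i hi
      rw [map_mul, hx i hi]
      calc x * β (h i) oneS * oneS
          = x * (β (h i) oneS * oneS * oneS) := by rw [mul_assoc, mul_assoc, hidem]
        _ = x * (oneS * (β (h i) oneS * oneS)) := by rw [← hcentral (β (h i) oneS * oneS)]
        _ = x * oneS * (β (h i) oneS * oneS) := by rw [mul_assoc]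
    · rw [hψ, heH, hψ, Finset.mul_sum]
      refine Finset.sum_congr rfl fun i hi => ?_
      rw [map_mul, hx i (Finset.mem_range.mp hi), mul_assoc]
  -- b1 : ψ s * oneS = s
  have hE0 : ((Stmt3Aux.E F 0 : Subring.center T) : T) = oneS := by
    have hP0 : Stmt3Aux.E F 0 = F 0 := by
      unfold Stmt3Aux.E Stmt3Aux.P
      simp
    rw [hP0]
    exact hβ0 oneS
  have hEoneS : ∀ i, 0 < i → ((Stmt3Aux.E F i : Subring.center T) : T) * oneS = 0 := by
    intro i hi
    have h0 : Stmt3Aux.E F i * F 0 = 0 := by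
      unfold Stmt3Aux.E
      calc Stmt3Aux.P F i * F i * F 0 = Stmt3Aux.P F i * F 0 * F i := by ring
        _ = 0 := by rw [Stmt3Aux.P_mul_F F hFidem hi, zero_mul]
    have hF0 : ((F 0 : Subring.center T) : T) = oneS := hβ0 oneS
    calc ((Stmt3Aux.E F i : Subring.center T) : T) * oneS
        = ((Stmt3Aux.E F i : Subring.center T) : T) * ((F 0 : Subring.center T) : T) := by rw [hF0]
      _ = ((Stmt3Aux.E F i * F 0 : Subring.center T) : T) := (coeMul _ _).symm
      _ = 0 := by rw [h0]; rfl
  have hb1 : ∀ s : T, s * oneS = s → ψ s * oneS = s := by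
    intro s hs1
    rw [hψE, Finset.sum_mul,
      Finset.sum_eq_single_of_mem 0 (Finset.mem_range.mpr hm)
        (fun b _ hb => by rw [mul_assoc, hEoneS b (Nat.pos_of_ne_zero hb), mul_zero])]
    rw [hβ0, mul_assoc, hE0, hidem, hs1]
  -- hb2 : ψ s * eH = ψ s
  have hb2 : ∀ s : T, ψ s * eH = ψ s := by
    intro s
    rw [hψE, heHsum, Finset.sum_mul]
    refine Finset.sum_congr rfl fun i hi => ?_
    rw [mul_assoc]
    congr 1
    calc ((Stmt3Aux.E F i : Subring.center T) : T) * ∑ j ∈ Finset.range m, ((Stmt3Aux.E F j : Subring.center T) : T)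
        = ((Stmt3Aux.E F i : Subring.center T) : T) * ((∑ j ∈ Finset.range m, Stmt3Aux.E F j : Subring.center T) : T) := by
          rw [coeSum]
      _ = ((Stmt3Aux.E F i * ∑ j ∈ Finset.range m, Stmt3Aux.E F j : Subring.center T) : T) := (coeMul _ _).symm
      _ = ((Stmt3Aux.E F i : Subring.center T) : T) := by
          rw [Stmt3Aux.E_mul_sum F hFidem (Finset.mem_range.mp hi)]
  -- invariance
  have hinv : ∀ s : T, s * oneS = s →
      (∀ i < m, β (h i) s * oneS = s * (β (h i) oneS * oneS)) →
      ∀ k, k < m → β (h k) (ψ s) = ψ s := by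
    intro s hs1 hs2 k hk
    rw [hψE, map_sum]
    have hterm : ∀ i ∈ Finset.range m,
        β (h k) (β (h i) s * ((Stmt3Aux.E F i : Subring.center T) : T))
          = ∑ j ∈ Finset.range m, β (h j) s
              * ((bc (h k) (Stmt3Aux.E F i) * Stmt3Aux.E F j : Subring.center T) : T) := by
      intro i hi'
      have hi := Finset.mem_range.mp hi'
      have hsilt : σ k hk i hi < m := hσlt k hk i hi
      have hstep1 : β (h k) (β (h i) s * ((Stmt3Aux.E F i : Subring.center T) : T))
          = β (h (σ k hk i hi)) s * ((bc (h k) (Stmt3Aux.E F i) : Subring.center T) : T) := by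
        rw [map_mul, hβmul, hσeq k hk i hi, hbcapp]
      have hBF : bc (h k) (Stmt3Aux.E F i) * F (σ k hk i hi) = bc (h k) (Stmt3Aux.E F i) := by
        have h2 := congrArg (bc (h k)) (Stmt3Aux.E_mul_F F hFidem i)
        rw [map_mul, hbcF k hk i hi] at h2
        exact h2
      have hBP : bc (h k) (Stmt3Aux.E F i) * Stmt3Aux.P F m = 0 := by
        calc bc (h k) (Stmt3Aux.E F i) * Stmt3Aux.P F m
            = bc (h k) (Stmt3Aux.E F i) * F (σ k hk i hi) * Stmt3Aux.P F m := by rw [hBF]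
          _ = bc (h k) (Stmt3Aux.E F i) * (Stmt3Aux.P F m * F (σ k hk i hi)) := by ring
          _ = 0 := by rw [Stmt3Aux.P_mul_F F hFidem hsilt, mul_zero]
      have hone : (1 : Subring.center T)
          = (∑ j ∈ Finset.range m, Stmt3Aux.E F j) + Stmt3Aux.P F m := by
        rw [Stmt3Aux.sum_E]; ring
      calc β (h k) (β (h i) s * ((Stmt3Aux.E F i : Subring.center T) : T))
          = β (h (σ k hk i hi)) s * ((bc (h k) (Stmt3Aux.E F i) : Subring.center T) : T) := hstep1
        _ = β (h (σ k hk i hi)) s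
            * ((bc (h k) (Stmt3Aux.E F i)
                * ((∑ j ∈ Finset.range m, Stmt3Aux.E F j) + Stmt3Aux.P F m) : Subring.center T) : T) := by
            rw [← hone, mul_one]
        _ = β (h (σ k hk i hi)) s
            * ((∑ j ∈ Finset.range m, bc (h k) (Stmt3Aux.E F i) * Stmt3Aux.E F j : Subring.center T) : T) := by
            rw [mul_add, hBP, add_zero, Finset.mul_sum]
        _ = ∑ j ∈ Finset.range m, β (h (σ k hk i hi)) s
            * ((bc (h k) (Stmt3Aux.E F i) * Stmt3Aux.E F j : Subring.center T) : T) := by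
            rw [coeSum, Finset.mul_sum]
        _ = ∑ j ∈ Finset.range m, β (h j) s
            * ((bc (h k) (Stmt3Aux.E F i) * Stmt3Aux.E F j : Subring.center T) : T) := by
            refine Finset.sum_congr rfl fun j hj' => ?_
            have hj := Finset.mem_range.mp hj'
            have hBE : bc (h k) (Stmt3Aux.E F i) * Stmt3Aux.E F j
                = (F (σ k hk i hi) * F j) * (bc (h k) (Stmt3Aux.E F i) * Stmt3Aux.E F j) := by
              calc bc (h k) (Stmt3Aux.E F i) * Stmt3Aux.E F j
                  = (bc (h k) (Stmt3Aux.E F i) * F (σ k hk i hi)) * (Stmt3Aux.E F j * F j) := by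
                    rw [hBF, Stmt3Aux.E_mul_F F hFidem]
                _ = (F (σ k hk i hi) * F j) * (bc (h k) (Stmt3Aux.E F i) * Stmt3Aux.E F j) := by
                    ring
            have hbT : ((bc (h k) (Stmt3Aux.E F i) * Stmt3Aux.E F j : Subring.center T) : T)
                = β (h (σ k hk i hi)) oneS * β (h j) oneS
                  * ((bc (h k) (Stmt3Aux.E F i) * Stmt3Aux.E F j : Subring.center T) : T) := by
              conv_lhs => rw [hBE]
              rfl
            have hsw := hswap s hs1 hs2 (σ k hk i hi) hsilt j hj
            calc β (h (σ k hk i hi)) s * ((bc (h k) (Stmt3Aux.E F i) * Stmt3Aux.E F j : Subring.center T) : T)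
                = β (h (σ k hk i hi)) s * (β (h (σ k hk i hi)) oneS * β (h j) oneS
                    * ((bc (h k) (Stmt3Aux.E F i) * Stmt3Aux.E F j : Subring.center T) : T)) := by
                  conv_lhs => rw [hbT]
              _ = β (h (σ k hk i hi)) s * (β (h (σ k hk i hi)) oneS * β (h j) oneS)
                    * ((bc (h k) (Stmt3Aux.E F i) * Stmt3Aux.E F j : Subring.center T) : T) := by
                  rw [← mul_assoc]
              _ = β (h j) s * (β (h (σ k hk i hi)) oneS * β (h j) oneS)
                    * ((bc (h k) (Stmt3Aux.E F i) * Stmt3Aux.E F j : Subring.center T) : T) := by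
                  rw [hsw]
              _ = β (h j) s * (β (h (σ k hk i hi)) oneS * β (h j) oneS
                    * ((bc (h k) (Stmt3Aux.E F i) * Stmt3Aux.E F j : Subring.center T) : T)) := by
                  rw [mul_assoc]
              _ = β (h j) s * ((bc (h k) (Stmt3Aux.E F i) * Stmt3Aux.E F j : Subring.center T) : T) := by
                  rw [← hbT]
    calc ∑ i ∈ Finset.range m, β (h k) (β (h i) s * ((Stmt3Aux.E F i : Subring.center T) : T))
        = ∑ i ∈ Finset.range m, ∑ j ∈ Finset.range m, β (h j) s
            * ((bc (h k) (Stmt3Aux.E F i) * Stmt3Aux.E F j : Subring.center T) : T) :=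
          Finset.sum_congr rfl hterm
      _ = ∑ j ∈ Finset.range m, ∑ i ∈ Finset.range m, β (h j) s
            * ((bc (h k) (Stmt3Aux.E F i) * Stmt3Aux.E F j : Subring.center T) : T) :=
          Finset.sum_comm
      _ = ∑ j ∈ Finset.range m, β (h j) s * ((Stmt3Aux.E F j : Subring.center T) : T) := by
          refine Finset.sum_congr rfl fun j hj' => ?_
          have hj := Finset.mem_range.mp hj'
          have hsum : ∑ i ∈ Finset.range m, bc (h k) (Stmt3Aux.E F i) * Stmt3Aux.E F j
              = Stmt3Aux.E F j := by
            rw [← Finset.sum_mul, ← map_sum, Stmt3Aux.sum_E, map_sub, map_one, hbcP k hk,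
              sub_mul, one_mul, Stmt3Aux.P_mul_E F hFidem hj, sub_zero]
          rw [← Finset.mul_sum, ← coeSum, hsum]
  -- assemble
  refine ⟨partA, ?_, ?_⟩
  · intro s hs1 hs2
    exact ⟨⟨ψ s, fun k hk => hinv s hs1 hs2 k hk, (hb2 s).symm⟩, hb1 s hs1⟩
  · ext t
    simp only [Set.mem_setOf_eq]
    constructor
    · rintro ⟨x, hx, rfl⟩
      obtain ⟨ha1, ha2, _⟩ := partA x hx
      exact ⟨ha1, ha2⟩
    · rintro ⟨ht1, ht2⟩
      exact ⟨ψ t, hinv t ht1 ht2, (hb1 t ht1).symm⟩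
end

section
/- There exists a family (t_g)_{g∈G} of elements of T^{β_H} such that Σ_{g∈G} t_g·β_g(e_H) = 1_T. Consequently T^{β_H} = Σ_{g∈G} β_g(T^{β_H}·e_H), i.e. the pair (T^{β_H}, β restricted to representatives of G/H) satisfies the globalization condition (G4) for the partial action of G/H on the ideal T^{β_H}·e_H obtained by restriction of β. (Proposition 3.2.) -/
/-- Proposition 3.2: there is a family (t_g) in T^{β_H} with Σ t_g·β_g(e_H) = 1_T;
consequently T^{β_H} = Σ_{g∈G} β_g(T^{β_H}·e_H) (globalization condition (G4)). -/
theorem stmt_4 {T : Type*} [CommRing T] {G : Type*} [Group G] [Fintype G]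
    (β : G →* RingAut T) (oneS : T) (hidem : oneS * oneS = oneS)
    (hglob : ∏ g : G, (1 - β g oneS) = 0)
    (m : ℕ) (hm : 0 < m) (h : ℕ → G) (h1 : h 0 = 1)
    (hinj : ∀ i < m, ∀ j < m, h i = h j → i = j)
    (hmulc : ∀ i < m, ∀ j < m, ∃ k < m, h i * h j = h k)
    (hnormal : ∀ g : G, ∀ i < m, ∃ j < m, g * h i * g⁻¹ = h j)
    (e : ℕ → T)
    (he : ∀ i, e i = (∏ j ∈ Finset.range i, (1 - β (h j) oneS)) * β (h i) oneS)
    (ψ : T → T) (hψ : ∀ t, ψ t = ∑ i ∈ Finset.range m, β (h i) t * e i)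
    (eH : T) (heH : eH = ψ oneS) :
    (∃ t : G → T, (∀ g : G, ∀ i < m, β (h i) (t g) = t g) ∧
      ∑ g : G, t g * β g eH = 1) ∧
    (∀ x : T, (∀ i < m, β (h i) x = x) →
      ∃ c : G → T, (∀ g : G, ∀ i < m, β (h i) (c g) = c g) ∧
        x = ∑ g : G, β g (c g * eH)) := by
  classical
  -- basic composition helper
  have hcomp : ∀ (a b : G) (z : T), β (a * b) z = β a (β b z) := by
    intro a b z; rw [map_mul]; rfl
  set f : ℕ → T := fun i => β (h i) oneS with hf
  set P : T := ∏ j ∈ Finset.range m, (1 - f j) with hP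
  -- Step 1: eH = 1 - P
  have hfidem : ∀ i, f i * f i = f i := by
    intro i; simp only [hf]; rw [← map_mul, hidem]
  have heH1 : eH = 1 - P := by
    have hterm : ∀ i, β (h i) oneS * e i =
        (∏ j ∈ Finset.range i, (1 - f j)) - ∏ j ∈ Finset.range (i+1), (1 - f j) := by
      intro i
      rw [he i, Finset.prod_range_succ]
      have : f i * ((∏ j ∈ Finset.range i, (1 - f j)) * f i)
          = (∏ j ∈ Finset.range i, (1 - f j)) * f i := by
        ring_nf
        rw [sq, hfidem i]
      calc f i * ((∏ j ∈ Finset.range i, (1 - f j)) * f i)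
          = (∏ j ∈ Finset.range i, (1 - f j)) * f i := this
        _ = (∏ j ∈ Finset.range i, (1 - f j)) -
            (∏ j ∈ Finset.range i, (1 - f j)) * (1 - f i) := by ring
    rw [heH, hψ]
    have : ∑ i ∈ Finset.range m, β (h i) oneS * e i
        = ∑ i ∈ Finset.range m,
          ((∏ j ∈ Finset.range i, (1 - f j)) - ∏ j ∈ Finset.range (i+1), (1 - f j)) := by
      exact Finset.sum_congr rfl (fun i _ => hterm i)
    rw [this, Finset.sum_range_sub' (fun i => ∏ j ∈ Finset.range i, (1 - f j)) m]
    simp [hP]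
  -- Step 2: P is H-invariant
  have hPinv : ∀ k < m, β (h k) P = P := by
    intro k hk
    -- φ i is the index with h k * h i = h (φ i)
    have hφ : ∀ i, i < m → ∃ j < m, h k * h i = h j := fun i hi => hmulc k hk i hi
    set φ : ℕ → ℕ := fun i => if hi : i < m then (hφ i hi).choose else 0 with hφdef
    have hφlt : ∀ i < m, φ i < m := by
      intro i hi; simp only [hφdef, dif_pos hi]; exact (hφ i hi).choose_spec.1
    have hφeq : ∀ i < m, h k * h i = h (φ i) := by
      intro i hi; simp only [hφdef, dif_pos hi]; exact (hφ i hi).choose_spec.2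
    have hφinj : ∀ i ∈ Finset.range m, ∀ j ∈ Finset.range m, φ i = φ j → i = j := by
      intro i hi j hj hij
      simp only [Finset.mem_range] at hi hj
      apply hinj i hi j hj
      have := (hφeq i hi).trans (hij ▸ (hφeq j hj).symm)
      exact mul_left_cancel this
    have himg : Finset.image φ (Finset.range m) = Finset.range m := by
      apply Finset.eq_of_subset_of_card_le
      · intro j hj
        simp only [Finset.mem_image, Finset.mem_range] at hj ⊢
        obtain ⟨i, hi, rfl⟩ := hj
        exact hφlt i hi
      · rw [Finset.card_image_of_injOn (fun i hi j hj => hφinj i hi j hj)]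
    have : β (h k) P = ∏ i ∈ Finset.range m, (1 - f (φ i)) := by
      rw [hP, map_prod]
      apply Finset.prod_congr rfl
      intro i hi
      simp only [Finset.mem_range] at hi
      rw [map_sub, map_one, hf]
      simp only
      rw [← hcomp, hφeq i hi]
    rw [this, ← Finset.prod_image (f := fun j => 1 - f j)
      (fun i hi j hj => hφinj i hi j hj), himg]
  have heHinv : ∀ k < m, β (h k) eH = eH := by
    intro k hk
    rw [heH1, map_sub, map_one, hPinv k hk]
  -- Step 3: β g eH is H-invariant for every g, using normality
  have hxinv : ∀ (g : G), ∀ i < m, β (h i) (β g eH) = β g eH := by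
    intro g i hi
    obtain ⟨j, hj, hji⟩ := hnormal g⁻¹ i hi
    have : h i * g = g * h j := by
      have := hji
      rw [inv_inv] at this
      calc h i * g = g * (g⁻¹ * h i * g) := by group
        _ = g * h j := by rw [this]
    rw [← hcomp, this, hcomp, heHinv j hj]
  -- Step 4: ∏ g, β g P = 0
  have hP0 : ∏ g : G, β g P = 0 := by
    have : ∀ g : G, β g P = ∏ i ∈ Finset.range m, (1 - β (g * h i) oneS) := by
      intro g
      rw [hP, map_prod]
      apply Finset.prod_congr rfl
      intro i _
      rw [map_sub, map_one, hf]
      simp only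
      rw [← hcomp]
    calc ∏ g : G, β g P = ∏ g : G, ∏ i ∈ Finset.range m, (1 - β (g * h i) oneS) := by
          exact Finset.prod_congr rfl (fun g _ => this g)
      _ = ∏ i ∈ Finset.range m, ∏ g : G, (1 - β (g * h i) oneS) := Finset.prod_comm
      _ = 0 := by
          apply Finset.prod_eq_zero (Finset.mem_range.mpr hm)
          calc ∏ g : G, (1 - β (g * h 0) oneS)
              = ∏ g : G, (1 - β g oneS) :=
                Equiv.prod_comp (Equiv.mulRight (h 0)) (fun g => 1 - β g oneS)
            _ = 0 := hglob
  -- Step 5: construct the family t via a linear order on G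
  set n : ℕ := Fintype.card G with hn
  set ι : G ≃ Fin n := Fintype.equivFin G with hι
  set x : G → T := fun g => β g eH with hx
  set y : ℕ → T := fun j => if hj : j < n then (1 - x (ι.symm ⟨j, hj⟩)) else 1 with hy
  set t : G → T := fun g => ∏ j ∈ Finset.range (ι g : ℕ), y j with ht
  have hyinv : ∀ (j : ℕ), ∀ i < m, β (h i) (y j) = y j := by
    intro j i hi
    simp only [hy]
    split
    · rw [map_sub, map_one, hx]; simp only
      rw [hxinv _ i hi]
    · rw [map_one]
  have htinv : ∀ (g : G), ∀ i < m, β (h i) (t g) = t g := by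
    intro g i hi
    simp only [ht]
    rw [map_prod]
    exact Finset.prod_congr rfl (fun j _ => hyinv j i hi)
  have hsum1 : ∑ g : G, t g * x g = 1 := by
    have key : ∀ g : G, t g * x g
        = (∏ j ∈ Finset.range (ι g : ℕ), y j) - ∏ j ∈ Finset.range ((ι g : ℕ) + 1), y j := by
      intro g
      rw [Finset.prod_range_succ]
      have hxy : x g = 1 - y (ι g : ℕ) := by
        simp only [hy]
        rw [dif_pos (ι g).isLt]
        simp
      rw [hxy, ht]; ring
    calc ∑ g : G, t g * x g
        = ∑ g : G, ((∏ j ∈ Finset.range (ι g : ℕ), y j)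
            - ∏ j ∈ Finset.range ((ι g : ℕ) + 1), y j) :=
          Finset.sum_congr rfl (fun g _ => key g)
      _ = ∑ k : Fin n, ((∏ j ∈ Finset.range (k : ℕ), y j)
            - ∏ j ∈ Finset.range ((k : ℕ) + 1), y j) := by
          exact Equiv.sum_comp ι (fun k : Fin n => (∏ j ∈ Finset.range (k : ℕ), y j)
            - ∏ j ∈ Finset.range ((k : ℕ) + 1), y j)
      _ = ∑ k ∈ Finset.range n, ((∏ j ∈ Finset.range k, y j)
            - ∏ j ∈ Finset.range (k + 1), y j) := by
          exact Fin.sum_univ_eq_sum_range (fun k => (∏ j ∈ Finset.range k, y j)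
            - ∏ j ∈ Finset.range (k + 1), y j) n
      _ = (∏ j ∈ Finset.range 0, y j) - ∏ j ∈ Finset.range n, y j :=
          Finset.sum_range_sub' (fun k => ∏ j ∈ Finset.range k, y j) n
      _ = 1 - ∏ j ∈ Finset.range n, y j := by simp
      _ = 1 := by
          have : ∏ j ∈ Finset.range n, y j = ∏ g : G, β g P := by
            calc ∏ j ∈ Finset.range n, y j = ∏ k : Fin n, y (k : ℕ) :=
                  (Fin.prod_univ_eq_prod_range _ n).symm
              _ = ∏ g : G, y ((ι g : ℕ)) := (Equiv.prod_comp ι (fun k : Fin n => y (k : ℕ))).symm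
              _ = ∏ g : G, β g P := by
                  apply Finset.prod_congr rfl
                  intro g _
                  simp only [hy]
                  rw [dif_pos (ι g).isLt]
                  simp only [Fin.eta, Equiv.symm_apply_apply, hx]
                  rw [heH1, map_sub, map_one]
                  ring
          rw [this, hP0, sub_zero]
  refine ⟨⟨t, htinv, hsum1⟩, ?_⟩
  -- Second part
  intro w hw
  refine ⟨fun g => β g⁻¹ (w * t g), ?_, ?_⟩
  · intro g i hi
    obtain ⟨j, hj, hji⟩ := hnormal g i hi
    have hkey : h i * g⁻¹ = g⁻¹ * h j := by
      calc h i * g⁻¹ = g⁻¹ * (g * h i * g⁻¹) := by group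
        _ = g⁻¹ * h j := by rw [hji]
    show β (h i) (β g⁻¹ (w * t g)) = β g⁻¹ (w * t g)
    rw [← hcomp, hkey, hcomp, map_mul, hw j hj, htinv g j hj]
  · have : ∀ g : G, β g (β g⁻¹ (w * t g) * eH) = w * t g * x g := by
      intro g
      rw [map_mul, ← hcomp, mul_inv_cancel, map_one]
      rfl
    calc w = w * 1 := (mul_one w).symm
      _ = w * ∑ g : G, t g * x g := by rw [hsum1]
      _ = ∑ g : G, w * t g * x g := by rw [Finset.mul_sum]; ring_nf
      _ = ∑ g : G, β g (β g⁻¹ (w * t g) * eH) :=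
          Finset.sum_congr rfl (fun g _ => (this g).symm)
end

section
/- The invariants of the ideal T^{β_H}·e_H under the restricted partial action γ of G/H coincide with T^{β_G}·e_H; explicitly, {x ∈ T : x = x·e_H, β_h(x) = x for all h ∈ H, and β_g(x)·β_g(e_H)·e_H = x·β_g(e_H)·e_H for all g ∈ G} = {t·e_H : t ∈ T with β_g(t) = t for all g ∈ G}. (Corollary 3.3(iii).) -/
/-- Telescoping identity for products of complements of idempotents. -/
lemma stmt_5_tel {T : Type*} [CommRing T] (x : ℕ → T) (n : ℕ) :
    ∑ i ∈ Finset.range n, (∏ j ∈ Finset.range i, (1 - x j)) * x i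
      = 1 - ∏ j ∈ Finset.range n, (1 - x j) := by
  induction n with
  | zero => simp
  | succ n ih => rw [Finset.sum_range_succ, Finset.prod_range_succ, ih]; ring

/-- Corollary 3.3(iii): the invariants of the ideal T^{β_H}·e_H under the restricted
partial action of G/H coincide with T^{β_G}·e_H. -/
theorem stmt_5 {T : Type*} [CommRing T] {G : Type*} [Group G] [Fintype G]
    (β : G →* RingAut T) (oneS : T) (hidem : oneS * oneS = oneS)
    (hglob : ∏ g : G, (1 - β g oneS) = 0)
    (m : ℕ) (hm : 0 < m) (h : ℕ → G) (h1 : h 0 = 1)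
    (hinj : ∀ i < m, ∀ j < m, h i = h j → i = j)
    (hmulc : ∀ i < m, ∀ j < m, ∃ k < m, h i * h j = h k)
    (hnormal : ∀ g : G, ∀ i < m, ∃ j < m, g * h i * g⁻¹ = h j)
    (e : ℕ → T)
    (he : ∀ i, e i = (∏ j ∈ Finset.range i, (1 - β (h j) oneS)) * β (h i) oneS)
    (ψ : T → T) (hψ : ∀ t, ψ t = ∑ i ∈ Finset.range m, β (h i) t * e i)
    (eH : T) (heH : eH = ψ oneS) :
    {x : T | x * eH = x ∧ (∀ i < m, β (h i) x = x) ∧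
        ∀ g : G, β g x * (β g eH * eH) = x * (β g eH * eH)} =
    {y : T | ∃ t : T, (∀ g : G, β g t = t) ∧ y = t * eH} := by
  classical
  have hcomp2 : ∀ (a b : G) (t : T), β a (β b t) = β (a * b) t := by
    intro a b t; rw [map_mul]; rfl
  have hβ1 : ∀ t : T, β (1 : G) t = t := by
    intro t; rw [map_one]; rfl
  have hβidem : ∀ g : G, β g oneS * β g oneS = β g oneS := fun g => by
    rw [← map_mul, hidem]
  -- eH = 1 - Q
  have heHQ : eH = 1 - ∏ j ∈ Finset.range m, (1 - β (h j) oneS) := by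
    rw [heH, hψ]
    rw [Finset.sum_congr rfl (fun i _ => ?_), stmt_5_tel]
    rw [he i, ← mul_assoc, mul_comm (β (h i) oneS), mul_assoc, hβidem]
  have hQidem : (∏ j ∈ Finset.range m, (1 - β (h j) oneS)) *
      (∏ j ∈ Finset.range m, (1 - β (h j) oneS)) = ∏ j ∈ Finset.range m, (1 - β (h j) oneS) := by
    rw [← Finset.prod_mul_distrib]
    exact Finset.prod_congr rfl fun j _ => by linear_combination hβidem (h j)
  have heHidem : eH * eH = eH := by rw [heHQ]; linear_combination hQidem
  have hEidem : ∀ g : G, β g eH * β g eH = β g eH := fun g => by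
    rw [← map_mul, heHidem]
  -- eH is H-invariant
  have hinvH : ∀ i < m, β (h i) eH = eH := by
    intro i hi
    rw [heHQ, map_sub, map_one, map_prod]
    congr 1
    have hterm : ∀ j, β (h i) (1 - β (h j) oneS) = 1 - β (h i * h j) oneS := by
      intro j; rw [map_sub, map_one, hcomp2]
    rw [Finset.prod_congr rfl fun j _ => hterm j]
    have hinj1 : ∀ a ∈ Finset.range m, ∀ b ∈ Finset.range m,
        h i * h a = h i * h b → a = b := by
      intro a ha b hb hab
      exact hinj a (Finset.mem_range.mp ha) b (Finset.mem_range.mp hb)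
        (mul_left_cancel hab)
    have hinj2 : ∀ a ∈ Finset.range m, ∀ b ∈ Finset.range m, h a = h b → a = b := by
      intro a ha b hb hab
      exact hinj a (Finset.mem_range.mp ha) b (Finset.mem_range.mp hb) hab
    have e1 : ∏ j ∈ Finset.range m, (1 - β (h i * h j) oneS)
        = ∏ g ∈ (Finset.range m).image (fun j => h i * h j), (1 - β g oneS) :=
      (Finset.prod_image (f := fun y => 1 - β y oneS) hinj1).symm
    have e2 : ∏ j ∈ Finset.range m, (1 - β (h j) oneS)
        = ∏ g ∈ (Finset.range m).image h, (1 - β g oneS) :=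
      (Finset.prod_image (f := fun y => 1 - β y oneS) hinj2).symm
    rw [e1, e2]
    congr 1
    apply Finset.eq_of_subset_of_card_le
    · intro y hy
      simp only [Finset.mem_image, Finset.mem_range] at hy ⊢
      obtain ⟨j, hj, rfl⟩ := hy
      obtain ⟨k, hk, hk2⟩ := hmulc i hi j hj
      exact ⟨k, hk, hk2.symm⟩
    · rw [Finset.card_image_of_injOn fun a ha b hb => hinj1 a ha b hb,
        Finset.card_image_of_injOn fun a ha b hb => hinj2 a ha b hb]
  -- ∏_{g} (1 - β g eH) = 0
  have hE0 : ∏ g : G, (1 - β g eH) = 0 := by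
    obtain ⟨m', rfl⟩ : ∃ m', m = m' + 1 := ⟨m - 1, (Nat.succ_pred_eq_of_pos hm).symm⟩
    have hfac : ∀ g : G, (1 - β g eH) =
        (∏ j ∈ Finset.range m', (1 - β (g * h (j + 1)) oneS)) * (1 - β g oneS) := by
      intro g
      have : (1 : T) - β g eH = β g (1 - eH) := by rw [map_sub, map_one]
      rw [this, heHQ]
      have : (1 : T) - (1 - ∏ j ∈ Finset.range (m' + 1), (1 - β (h j) oneS))
          = ∏ j ∈ Finset.range (m' + 1), (1 - β (h j) oneS) := by ring
      rw [this, map_prod, Finset.prod_range_succ']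
      congr 1
      · exact Finset.prod_congr rfl fun j _ => by rw [map_sub, map_one, hcomp2]
      · rw [map_sub, map_one, hcomp2, h1, mul_one]
    rw [Finset.prod_congr rfl fun g _ => hfac g, Finset.prod_mul_distrib, hglob, mul_zero]
  -- enumeration of G
  set n := Fintype.card G with hn
  set σ : Fin n ≃ G := (Fintype.equivFin G).symm with hσ
  set gl : ℕ → G := fun i => if hi : i < n then σ ⟨i, hi⟩ else 1 with hgl
  have hre : ∀ F : G → T, ∏ j ∈ Finset.range n, F (gl j) = ∏ g : G, F g := by
    intro F
    rw [← Fin.prod_univ_eq_prod_range (fun j => F (gl j)) n, ← Equiv.prod_comp σ F]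
    refine Finset.prod_congr rfl fun i _ => ?_
    simp [hgl, i.isLt]
  set f : ℕ → T := fun i => (∏ j ∈ Finset.range i, (1 - β (gl j) eH)) * β (gl i) eH
    with hf
  have hsum : ∑ i ∈ Finset.range n, f i = 1 := by
    rw [hf]
    rw [stmt_5_tel (fun j => β (gl j) eH) n, hre (fun g => 1 - β g eH), hE0, sub_zero]
  ext x
  simp only [Set.mem_setOf_eq]
  constructor
  · rintro ⟨hx1, _hx2, hx3⟩
    -- compatibility on overlaps
    have hstar : ∀ a b : G, β a x * (β a eH * β b eH) = β b x * (β a eH * β b eH) := by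
      intro a b
      have key := congrArg (β a) (hx3 (a⁻¹ * b))
      simp only [map_mul (β a), hcomp2, mul_inv_cancel_left] at key
      linear_combination - key
    set t : T := ∑ i ∈ Finset.range n, β (gl i) x * f i with ht
    have tE : ∀ a : G, t * β a eH = β a x * β a eH := by
      intro a
      rw [ht, Finset.sum_mul]
      have hterm : ∀ i ∈ Finset.range n,
          β (gl i) x * f i * β a eH = β a x * (f i * β a eH) := by
        intro i _
        rw [hf]
        simp only
        linear_combination (∏ j ∈ Finset.range i, (1 - β (gl j) eH)) * hstar (gl i) a
      rw [Finset.sum_congr rfl hterm, ← Finset.mul_sum, ← Finset.sum_mul, hsum, one_mul]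
    have tinv : ∀ k : G, β k t = t := by
      intro k
      have hkE : ∀ a : G, β k t * β a eH = t * β a eH := by
        intro a
        calc β k t * β a eH = β k (t * β (k⁻¹ * a) eH) := by
              rw [map_mul, hcomp2, mul_inv_cancel_left]
          _ = β k (β (k⁻¹ * a) x * β (k⁻¹ * a) eH) := by rw [tE]
          _ = β a x * β a eH := by rw [map_mul, hcomp2, hcomp2, mul_inv_cancel_left]
          _ = t * β a eH := (tE a).symm
      calc β k t = β k t * ∑ i ∈ Finset.range n, f i := by rw [hsum, mul_one]
        _ = ∑ i ∈ Finset.range n, β k t * f i := Finset.mul_sum _ _ _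
        _ = ∑ i ∈ Finset.range n, t * f i := by
            refine Finset.sum_congr rfl fun i _ => ?_
            rw [hf]; simp only
            linear_combination (∏ j ∈ Finset.range i, (1 - β (gl j) eH)) * hkE (gl i)
        _ = t * ∑ i ∈ Finset.range n, f i := (Finset.mul_sum _ _ _).symm
        _ = t := by rw [hsum, mul_one]
    refine ⟨t, tinv, ?_⟩
    calc x = x * eH := hx1.symm
      _ = β (1 : G) x * β (1 : G) eH := by rw [hβ1, hβ1]
      _ = t * β (1 : G) eH := (tE 1).symm
      _ = t * eH := by rw [hβ1]
  · rintro ⟨t, htinv, rfl⟩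
    refine ⟨by rw [mul_assoc, heHidem], fun i hi => ?_, fun g => ?_⟩
    · rw [map_mul, htinv, hinvH i hi]
    · rw [map_mul, htinv]
      linear_combination t * eH * hEidem g - t * β g eH * heHidem
end

section
/- The ideal T^{β_H}·e_H is a partial Galois extension for the restricted partial action of G/H if and only if T^{β_H} is a (global) Galois extension of T^{β_G} for the induced action of G/H. Explicitly: there exist n and elements x_i, y_i ∈ T^{β_H}·e_H (1 ≤ i ≤ n) with Σ_{i=1}^n x_i·β_g(y_i)·β_g(e_H)·e_H = (e_H if g ∈ H, 0 otherwise) for all g ∈ G, if and only if there exist n and elements u_i, v_i ∈ T^{β_H} (1 ≤ i ≤ n) with Σ_{i=1}^n u_i·β_g(v_i) = (1_T if g ∈ H, 0 otherwise) for all g ∈ G. (Corollary 3.3(iv).) -/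
private lemma sum_range_mul_eq {M : Type*} [AddCommMonoid M] (F : ℕ → M) (r n : ℕ) :
    ∑ p ∈ Finset.range (r * n), F p
      = ∑ k ∈ Finset.range r, ∑ i ∈ Finset.range n, F (k * n + i) := by
  induction r with
  | zero => simp
  | succ r ih =>
      rw [Finset.sum_range_succ, ← ih, Nat.succ_mul, Finset.sum_range_add]

/-- Corollary 3.3(iv): T^{β_H}·e_H is a partial Galois extension for the restricted
partial action of G/H iff T^{β_H} is a global Galois extension of T^{β_G} for the
induced G/H-action. -/
theorem stmt_6 {T : Type*} [CommRing T] {G : Type*} [Group G] [Fintype G]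
    (β : G →* RingAut T) (oneS : T) (hidem : oneS * oneS = oneS)
    (hglob : ∏ g : G, (1 - β g oneS) = 0)
    (m : ℕ) (hm : 0 < m) (h : ℕ → G) (h1 : h 0 = 1)
    (hinj : ∀ i < m, ∀ j < m, h i = h j → i = j)
    (hmulc : ∀ i < m, ∀ j < m, ∃ k < m, h i * h j = h k)
    (hnormal : ∀ g : G, ∀ i < m, ∃ j < m, g * h i * g⁻¹ = h j)
    (e : ℕ → T)
    (he : ∀ i, e i = (∏ j ∈ Finset.range i, (1 - β (h j) oneS)) * β (h i) oneS)
    (ψ : T → T) (hψ : ∀ t, ψ t = ∑ i ∈ Finset.range m, β (h i) t * e i)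
    (eH : T) (heH : eH = ψ oneS) :
    (∃ n : ℕ, ∃ x y : ℕ → T,
      (∀ i < n, x i * eH = x i ∧ y i * eH = y i ∧
        (∀ j < m, β (h j) (x i) = x i) ∧ (∀ j < m, β (h j) (y i) = y i)) ∧
      (∀ g : G,
        ((∃ j < m, g = h j) →
          ∑ i ∈ Finset.range n, x i * β g (y i) * (β g eH * eH) = eH) ∧
        ((¬ ∃ j < m, g = h j) →
          ∑ i ∈ Finset.range n, x i * β g (y i) * (β g eH * eH) = 0)))
    ↔
    (∃ n : ℕ, ∃ u v : ℕ → T,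
      (∀ i < n, (∀ j < m, β (h j) (u i) = u i) ∧ (∀ j < m, β (h j) (v i) = v i)) ∧
      (∀ g : G,
        ((∃ j < m, g = h j) → ∑ i ∈ Finset.range n, u i * β g (v i) = 1) ∧
        ((¬ ∃ j < m, g = h j) → ∑ i ∈ Finset.range n, u i * β g (v i) = 0))) := by
  classical
  have hmul : ∀ (s t : G) (w : T), β (s * t) w = β s (β t w) := by
    intro s t w; rw [map_mul]; rfl
  have haidem : ∀ g : G, β g oneS * β g oneS = β g oneS := by
    intro g; rw [← map_mul, hidem]
  -- eH = 1 - ∏ (1 - β (h j) oneS)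
  have heH' : eH = 1 - ∏ j ∈ Finset.range m, (1 - β (h j) oneS) := by
    rw [heH, hψ]
    have hterm : ∀ i ∈ Finset.range m, β (h i) oneS * e i
        = (∏ j ∈ Finset.range i, (1 - β (h j) oneS))
          - (∏ j ∈ Finset.range (i + 1), (1 - β (h j) oneS)) := by
      intro i _
      rw [he i, Finset.prod_range_succ]
      linear_combination (∏ j ∈ Finset.range i, (1 - β (h j) oneS)) * haidem (h i)
    rw [Finset.sum_congr rfl hterm, Finset.sum_range_sub', Finset.prod_range_zero]
  have heH2 : eH * eH = eH := by
    have hc : (∏ j ∈ Finset.range m, (1 - β (h j) oneS)) *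
        (∏ j ∈ Finset.range m, (1 - β (h j) oneS)) = ∏ j ∈ Finset.range m, (1 - β (h j) oneS) := by
      rw [← Finset.prod_mul_distrib]
      exact Finset.prod_congr rfl fun j _ => by linear_combination haidem (h j)
    rw [heH']; linear_combination hc
  -- inverses stay in H
  have hinv : ∀ i < m, ∃ j < m, (h i)⁻¹ = h j := by
    intro i hi
    have hφex : ∀ j : Fin m, ∃ k : Fin m, h i * h (j : ℕ) = h (k : ℕ) := by
      intro j
      obtain ⟨k, hk, hk2⟩ := hmulc i hi j j.2
      exact ⟨⟨k, hk⟩, hk2⟩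
    choose φ hφ using hφex
    have hφinj : Function.Injective φ := by
      intro j j' hjj
      have h2 : h i * h (j : ℕ) = h i * h (j' : ℕ) := by rw [hφ j, hφ j', hjj]
      exact Fin.ext (hinj j j.2 j' j'.2 (mul_left_cancel h2))
    obtain ⟨j, hj⟩ := Finite.injective_iff_surjective.mp hφinj ⟨0, hm⟩
    refine ⟨j, j.2, ?_⟩
    have hj2 := hφ j
    rw [hj] at hj2
    simp only [h1] at hj2
    exact inv_eq_of_mul_eq_one_right hj2
  -- translation invariance of the big product over H
  have hprod_reindex : ∀ jj < m, ∏ l ∈ Finset.range m, (1 - β (h jj * h l) oneS)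
      = ∏ l ∈ Finset.range m, (1 - β (h l) oneS) := by
    intro jj hjj
    refine Finset.prod_bij
      (fun l hl => (hmulc jj hjj l (Finset.mem_range.mp hl)).choose) ?_ ?_ ?_ ?_
    · intro l hl
      exact Finset.mem_range.mpr (hmulc jj hjj l (Finset.mem_range.mp hl)).choose_spec.1
    · intro l1 hl1 l2 hl2 heq
      have s1 := (hmulc jj hjj l1 (Finset.mem_range.mp hl1)).choose_spec.2
      have s2 := (hmulc jj hjj l2 (Finset.mem_range.mp hl2)).choose_spec.2
      have h12 : h jj * h l1 = h jj * h l2 := by rw [s1, s2]; exact congrArg h heq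
      exact hinj _ (Finset.mem_range.mp hl1) _ (Finset.mem_range.mp hl2) (mul_left_cancel h12)
    · intro k hk
      obtain ⟨j0, hj0, hj0e⟩ := hinv jj hjj
      obtain ⟨l, hl, hle⟩ := hmulc j0 hj0 k (Finset.mem_range.mp hk)
      have hjl : h jj * h l = h k := by rw [← hle, ← mul_assoc, ← hj0e]; simp
      refine ⟨l, Finset.mem_range.mpr hl, ?_⟩
      have sc := (hmulc jj hjj l hl).choose_spec
      exact hinj _ sc.1 _ (Finset.mem_range.mp hk) (by rw [← sc.2, hjl])
    · intro l hl
      have sc := (hmulc jj hjj l (Finset.mem_range.mp hl)).choose_spec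
      exact congrArg (fun w => 1 - β w oneS) sc.2
  -- eH is H-invariant
  have hbeta_eH : ∀ j < m, β (h j) eH = eH := by
    intro j hj
    have key : β (h j) (∏ l ∈ Finset.range m, (1 - β (h l) oneS))
        = ∏ l ∈ Finset.range m, (1 - β (h l) oneS) := by
      rw [map_prod, ← hprod_reindex j hj]
      exact Finset.prod_congr rfl fun l _ => by rw [map_sub, map_one, hmul]
    rw [heH', map_sub, map_one, key]
  -- invariance of translates under H
  have hHinvβ : ∀ (t : G) (w : T), (∀ j < m, β (h j) w = w) →
      ∀ j < m, β (h j) (β t w) = β t w := by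
    intro t w hw j hj
    obtain ⟨k, hk, hke⟩ := hnormal t⁻¹ j hj
    have hcomm : h j * t = t * h k := by rw [← hke]; group
    rw [← hmul, hcomm, hmul, hw k hk]
  -- conjugation membership
  have hconj_mem : ∀ (t g : G), (∃ j < m, g = h j) → (∃ j < m, t⁻¹ * g * t = h j) := by
    rintro t g ⟨j, hj, rfl⟩
    obtain ⟨k, hk, hke⟩ := hnormal t⁻¹ j hj
    exact ⟨k, hk, by rw [← hke]; group⟩
  have hconj_iff : ∀ (t g : G), (∃ j < m, t⁻¹ * g * t = h j) ↔ (∃ j < m, g = h j) := by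
    intro t g
    constructor
    · intro hg
      obtain ⟨j, hj, hje⟩ := hconj_mem t⁻¹ _ hg
      exact ⟨j, hj, by rw [← hje]; group⟩
    · exact hconj_mem t g
  -- the subgroup H
  let Hs : Subgroup G :=
    { carrier := {g | ∃ j, j < m ∧ g = h j}
      one_mem' := ⟨0, hm, h1.symm⟩
      mul_mem' := by
        rintro g1 g2 ⟨j1, hj1, rfl⟩ ⟨j2, hj2, rfl⟩
        obtain ⟨k, hk, hke⟩ := hmulc j1 hj1 j2 hj2
        exact ⟨k, hk, hke⟩
      inv_mem' := by
        rintro g ⟨j, hj, rfl⟩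
        obtain ⟨k, hk, hke⟩ := hinv j hj
        exact ⟨k, hk, hke⟩ }
  have hmemHs : ∀ g : G, g ∈ Hs ↔ ∃ j < m, g = h j := fun g => Iff.rfl
  letI : Fintype (G ⧸ Hs) := Fintype.ofFinite _
  set r := Fintype.card (G ⧸ Hs) with hr_def
  have hrpos : 0 < r := Fintype.card_pos
  let idx : Fin r ≃ (G ⧸ Hs) := (Fintype.equivFin (G ⧸ Hs)).symm
  let gg : ℕ → G := fun k => Quotient.out (idx ⟨k % r, Nat.mod_lt _ hrpos⟩)
  have hgg : ∀ k < r, ∀ hk : k < r, gg k = Quotient.out (idx ⟨k, hk⟩) := by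
    intro k hk hk'
    simp only [gg, Nat.mod_eq_of_lt hk]
  have hone_sub : ∀ t : G, 1 - β t eH = ∏ j ∈ Finset.range m, (1 - β (t * h j) oneS) := by
    intro t
    rw [heH', map_sub, map_one, sub_sub_cancel, map_prod]
    exact Finset.prod_congr rfl fun j _ => by rw [map_sub, map_one, hmul]
  -- product of (1 - β q.out eH) over the quotient vanishes
  have hbigprod : ∏ q : G ⧸ Hs, (1 - β (Quotient.out q) eH) = 0 := by
    have h1' : ∏ q : G ⧸ Hs, (1 - β (Quotient.out q) eH)
        = ∏ q : G ⧸ Hs, ∏ j ∈ Finset.range m, (1 - β (Quotient.out q * h j) oneS) :=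
      Finset.prod_congr rfl fun q _ => hone_sub _
    rw [h1', ← hglob, ← Finset.prod_product']
    refine Finset.prod_bij (fun p _ => (Quotient.out p.1) * h p.2)
      (fun p _ => Finset.mem_univ _) ?_ ?_ ?_
    · rintro ⟨q1, j1⟩ hp1 ⟨q2, j2⟩ hp2 heq
      have hj1m : j1 < m := by simpa using (Finset.mem_product.mp hp1).2
      have hj2m : j2 < m := by simpa using (Finset.mem_product.mp hp2).2
      have e1 : ((Quotient.out q1 * h j1 : G) : G ⧸ Hs) = q1 := by
        rw [QuotientGroup.mk_mul_of_mem _ ((hmemHs _).mpr ⟨j1, hj1m, rfl⟩)]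
        exact QuotientGroup.out_eq' q1
      have e2 : ((Quotient.out q2 * h j2 : G) : G ⧸ Hs) = q2 := by
        rw [QuotientGroup.mk_mul_of_mem _ ((hmemHs _).mpr ⟨j2, hj2m, rfl⟩)]
        exact QuotientGroup.out_eq' q2
      have heq' : Quotient.out q1 * h j1 = Quotient.out q2 * h j2 := heq
      have hq : q1 = q2 := by
        rw [← e1, ← e2]; exact congrArg (fun z : G => (z : G ⧸ Hs)) heq'
      subst hq
      have hj12 : h j1 = h j2 := mul_left_cancel heq'
      exact Prod.ext rfl (hinj j1 hj1m j2 hj2m hj12)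
    · intro g _
      have hmem : (Quotient.out ((g : G ⧸ Hs)))⁻¹ * g ∈ Hs := by
        rw [← QuotientGroup.eq]
        exact QuotientGroup.out_eq' _
      obtain ⟨j, hj, hje⟩ := (hmemHs _).mp hmem
      refine ⟨((g : G ⧸ Hs), j), ?_, ?_⟩
      · simp [Finset.mem_product, hj]
      · show Quotient.out ((g : G ⧸ Hs)) * h j = g
        rw [← hje, mul_inv_cancel_left]
    · intro p _; rfl
  have hprod_r : ∏ k ∈ Finset.range r, (1 - β (gg k) eH) = 0 := by
    rw [← Fin.prod_univ_eq_prod_range (fun k => 1 - β (gg k) eH) r, ← hbigprod,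
      ← Equiv.prod_comp idx (fun q => 1 - β (Quotient.out q) eH)]
    refine Finset.prod_congr rfl fun k _ => ?_
    rw [hgg (k : ℕ) k.2 k.2]
  -- the orthogonalized idempotents over coset reps
  set f : ℕ → T := fun k => (∏ l ∈ Finset.range k, (1 - β (gg l) eH)) * β (gg k) eH
    with hf_def
  have hfk : ∀ k, f k = (∏ l ∈ Finset.range k, (1 - β (gg l) eH)) * β (gg k) eH :=
    fun k => by rw [hf_def]
  have hfsum : ∑ k ∈ Finset.range r, f k = 1 := by
    have hterm : ∀ k ∈ Finset.range r, f k
        = (∏ l ∈ Finset.range k, (1 - β (gg l) eH))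
          - (∏ l ∈ Finset.range (k + 1), (1 - β (gg l) eH)) := by
      intro k _
      rw [hfk k, Finset.prod_range_succ]
      ring
    rw [Finset.sum_congr rfl hterm, Finset.sum_range_sub', Finset.prod_range_zero, hprod_r,
      sub_zero]
  have hHinvf : ∀ k, ∀ j < m, β (h j) (f k) = f k := by
    intro k j hj
    rw [hfk k, map_mul, map_prod, hHinvβ (gg k) eH hbeta_eH j hj]
    congr 1
    refine Finset.prod_congr rfl fun l _ => ?_
    rw [map_sub, map_one, hHinvβ (gg l) eH hbeta_eH j hj]
  constructor
  · rintro ⟨n, x, y, hxy, hsum⟩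
    refine ⟨r * n, fun p => β (gg (p / n)) (x (p % n)) * f (p / n),
            fun p => β (gg (p / n)) (y (p % n)), ?_, ?_⟩
    · intro p hp
      have hn : 0 < n := Nat.pos_of_ne_zero (by rintro rfl; simp at hp)
      have him : p % n < n := Nat.mod_lt _ hn
      obtain ⟨-, -, hxinv, hyinv⟩ := hxy (p % n) him
      constructor
      · intro j hj
        rw [map_mul (β (h j)), hHinvβ (gg (p / n)) _ hxinv j hj, hHinvf (p / n) j hj]
      · intro j hj
        exact hHinvβ (gg (p / n)) _ hyinv j hj
    · intro g
      have hinner : ∀ k, ∑ i ∈ Finset.range n,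
          (β (gg k) (x i) * f k) * β g (β (gg k) (y i))
          = (if ∃ j < m, g = h j then f k else 0) := by
        intro k
        have hterm : ∀ i ∈ Finset.range n, (β (gg k) (x i) * f k) * β g (β (gg k) (y i))
            = β (gg k) (x i * β ((gg k)⁻¹ * g * gg k) (y i)
                * (β ((gg k)⁻¹ * g * gg k) eH * eH))
              * (∏ l ∈ Finset.range k, (1 - β (gg l) eH)) := by
          intro i hi
          obtain ⟨-, hy, -, -⟩ := hxy i (Finset.mem_range.mp hi)
          have h1' : β g (β (gg k) (y i)) = β (g * gg k) (y i) := (hmul g (gg k) _).symm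
          have h2' : β (gg k) (β ((gg k)⁻¹ * g * gg k) (y i)) = β (g * gg k) (y i) := by
            rw [← hmul]; congr 2; group
          have h3' : β (gg k) (β ((gg k)⁻¹ * g * gg k) eH) = β (g * gg k) eH := by
            rw [← hmul]; congr 2; group
          have h4' : β (g * gg k) (y i) = β (g * gg k) (y i) * β (g * gg k) eH := by
            rw [← map_mul (β (g * gg k)), hy]
          rw [hfk k, h1', h4']
          simp only [map_mul (β (gg k))]
          rw [h2', h3']
          ring
        rw [Finset.sum_congr rfl hterm, ← Finset.sum_mul, ← map_sum]
        by_cases hg : ∃ j < m, g = h j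
        · rw [(hsum ((gg k)⁻¹ * g * gg k)).1 (hconj_mem (gg k) g hg), if_pos hg, hfk k]
          ring
        · rw [(hsum ((gg k)⁻¹ * g * gg k)).2 (fun hc => hg ((hconj_iff (gg k) g).mp hc)),
            map_zero, zero_mul, if_neg hg]
      have htotal : ∑ p ∈ Finset.range (r * n),
          (β (gg (p / n)) (x (p % n)) * f (p / n)) * β g (β (gg (p / n)) (y (p % n)))
          = (if ∃ j < m, g = h j then (1 : T) else 0) := by
        rw [sum_range_mul_eq
          (fun p => (β (gg (p / n)) (x (p % n)) * f (p / n)) * β g (β (gg (p / n)) (y (p % n))))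
          r n]
        have hcong : ∀ k ∈ Finset.range r, ∑ i ∈ Finset.range n,
            (β (gg ((k * n + i) / n)) (x ((k * n + i) % n)) * f ((k * n + i) / n))
              * β g (β (gg ((k * n + i) / n)) (y ((k * n + i) % n)))
            = (if ∃ j < m, g = h j then f k else 0) := by
          intro k _
          rw [← hinner k]
          refine Finset.sum_congr rfl fun i hi => ?_
          have hin : i < n := Finset.mem_range.mp hi
          have hn : 0 < n := lt_of_le_of_lt (Nat.zero_le i) hin
          have hdiv : (k * n + i) / n = k := by
            rw [mul_comm, Nat.mul_add_div hn, Nat.div_eq_of_lt hin, add_zero]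
          have hmod : (k * n + i) % n = i := by
            rw [mul_comm, Nat.mul_add_mod, Nat.mod_eq_of_lt hin]
          rw [hdiv, hmod]
        rw [Finset.sum_congr rfl hcong]
        by_cases hg : ∃ j < m, g = h j
        · simp only [if_pos hg]; exact hfsum
        · simp only [if_neg hg, Finset.sum_const_zero]
      exact ⟨fun hg => htotal.trans (if_pos hg), fun hg => htotal.trans (if_neg hg)⟩
  · rintro ⟨n, u, v, huv, hsum⟩
    refine ⟨n, fun i => u i * eH, fun i => v i * eH, ?_, ?_⟩
    · intro i hi
      obtain ⟨hu, hv⟩ := huv i hi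
      refine ⟨?_, ?_, ?_, ?_⟩
      · rw [mul_assoc, heH2]
      · rw [mul_assoc, heH2]
      · intro j hj
        rw [map_mul (β (h j)), hu j hj, hbeta_eH j hj]
      · intro j hj
        rw [map_mul (β (h j)), hv j hj, hbeta_eH j hj]
    · intro g
      constructor
      · intro hg
        have hgeH : β g eH = eH := by
          obtain ⟨j, hj, rfl⟩ := hg
          exact hbeta_eH j hj
        have hterm : ∀ i ∈ Finset.range n,
            (u i * eH) * β g (v i * eH) * (β g eH * eH) = (u i * β g (v i)) * eH := by
          intro i _
          rw [map_mul (β g), hgeH]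
          linear_combination (u i * β g (v i) * (eH * eH + eH + 1)) * heH2
        rw [Finset.sum_congr rfl hterm, ← Finset.sum_mul, (hsum g).1 hg, one_mul]
      · intro hg
        have hterm : ∀ i ∈ Finset.range n,
            (u i * eH) * β g (v i * eH) * (β g eH * eH)
              = (u i * β g (v i)) * (eH * β g eH * (β g eH * eH)) := by
          intro i _
          rw [map_mul (β g)]
          ring
        rw [Finset.sum_congr rfl hterm, ← Finset.sum_mul, (hsum g).2 hg, zero_mul]
end

section
/- The data (D̃_{gH}, α̃_{gH}) is a well-defined unital partial action of the quotient group G/H on the ring S^{α_H}. Precisely: (a) if g⁻¹g' ∈ H then β_g(e_H) = β_{g'}(e_H) and β_g(ψ_H(x)) = β_{g'}(ψ_H(x)) for every x ∈ S^{α_H}, so 1̃_{gH}, D̃_{gH} and α̃_{gH} depend only on the coset gH; (b) each 1̃_{gH} is an idempotent lying in S^{α_H}, and 1̃_H = 1_S so D̃_H = S^{α_H}; (c) α̃_{gH} maps D̃_{g⁻¹H} bijectively onto D̃_{gH}, is additive and multiplicative, and α̃_H is the identity on S^{α_H}; (d) α̃_{gH}(1̃_{g⁻¹H}·1̃_{lH})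 = 1̃_{gH}·1̃_{glH} for all g, l ∈ G; (e) α̃_{gH}(α̃_{lH}(x·1̃_{l⁻¹H})·1̃_{g⁻¹H}) = α̃_{glH}(x·1̃_{(gl)⁻¹H})·1̃_{gH} for all x ∈ S^{α_H} and g, l ∈ G. (Theorem 3.5(i).) -/
/-- Theorem 3.5(i): the data (D̃_{gH}, α̃_{gH}) is a well-defined unital partial action
of the quotient group G/H on S^{α_H}. -/
theorem stmt_7 {T : Type*} [CommRing T] {G : Type*} [Group G] [Fintype G]
    (β : G →* RingAut T) (oneS : T) (hidem : oneS * oneS = oneS)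
    (hglob : ∏ g : G, (1 - β g oneS) = 0)
    (m : ℕ) (hm : 0 < m) (h : ℕ → G) (h1 : h 0 = 1)
    (hinj : ∀ i < m, ∀ j < m, h i = h j → i = j)
    (hmulc : ∀ i < m, ∀ j < m, ∃ k < m, h i * h j = h k)
    (hnormal : ∀ g : G, ∀ i < m, ∃ j < m, g * h i * g⁻¹ = h j)
    (e : ℕ → T)
    (he : ∀ i, e i = (∏ j ∈ Finset.range i, (1 - β (h j) oneS)) * β (h i) oneS)
    (ψ : T → T) (hψ : ∀ t, ψ t = ∑ i ∈ Finset.range m, β (h i) t * e i)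
    (eH : T) (heH : eH = ψ oneS)
    (SaH : T → Prop)
    (hSaH : ∀ s : T, SaH s ↔
      (s * oneS = s ∧ ∀ i < m, β (h i) s * oneS = s * (β (h i) oneS * oneS)))
    (oneTil : G → T) (honeTil : ∀ g : G, oneTil g = β g eH * oneS)
    (Dtil : G → Set T) (hDtil : ∀ g : G, Dtil g = {x : T | ∃ s : T, SaH s ∧ x = s * oneTil g})
    (αTil : G → T → T) (hαTil : ∀ (g : G) (x : T), αTil g x = β g (ψ x) * oneS) :
    -- (a) everything depends only on the coset gH
    (∀ g g' : G, (∃ j < m, g⁻¹ * g' = h j) →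
      β g eH = β g' eH ∧ ∀ s : T, SaH s → β g (ψ s) = β g' (ψ s)) ∧
    -- (b) the 1̃_{gH} are idempotents of S^{α_H}, and 1̃_H = 1_S
    (∀ g : G, oneTil g * oneTil g = oneTil g ∧ SaH (oneTil g)) ∧
    (oneTil 1 = oneS ∧ Dtil 1 = {s : T | SaH s}) ∧
    -- (c) α̃_{gH} : D̃_{g⁻¹H} → D̃_{gH} is an additive multiplicative bijection, α̃_H = id
    (∀ g : G, Set.BijOn (αTil g) (Dtil g⁻¹) (Dtil g)) ∧
    (∀ g : G, ∀ x ∈ Dtil g⁻¹, ∀ y ∈ Dtil g⁻¹,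
      αTil g (x + y) = αTil g x + αTil g y ∧ αTil g (x * y) = αTil g x * αTil g y) ∧
    (∀ s : T, SaH s → αTil 1 s = s) ∧
    -- (d)
    (∀ g l : G, αTil g (oneTil g⁻¹ * oneTil l) = oneTil g * oneTil (g * l)) ∧
    -- (e)
    (∀ g l : G, ∀ s : T, SaH s →
      αTil g (αTil l (s * oneTil l⁻¹) * oneTil g⁻¹) =
        αTil (g * l) (s * oneTil (g * l)⁻¹) * oneTil g) := by
  -- ## Basic facts about β
  have β1 : ∀ x : T, β (1 : G) x = x := fun x => by rw [map_one]; rfl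
  have ββ : ∀ (a b : G) (x : T), β a (β b x) = β (a * b) x := fun a b x => by
    rw [map_mul]; rfl
  have βcancel : ∀ (g : G) (x : T), β g (β g⁻¹ x) = x := fun g x => by
    rw [ββ, mul_inv_cancel]; exact β1 x
  have βcancel' : ∀ (g : G) (x : T), β g⁻¹ (β g x) = x := fun g x => by
    rw [ββ, inv_mul_cancel]; exact β1 x
  -- ## Basic facts about the idempotents e i
  have bidem : ∀ i, β (h i) oneS * β (h i) oneS = β (h i) oneS := fun i => by
    rw [← map_mul, hidem]
  have ebi : ∀ i, e i * β (h i) oneS = e i := fun i => by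
    rw [he, mul_assoc, bidem]
  have pidem : ∀ i, (∏ j ∈ Finset.range i, (1 - β (h j) oneS)) *
      (∏ j ∈ Finset.range i, (1 - β (h j) oneS)) = ∏ j ∈ Finset.range i, (1 - β (h j) oneS) := by
    intro i
    rw [← Finset.prod_mul_distrib]
    refine Finset.prod_congr rfl fun j _ => ?_
    linear_combination bidem j
  have eidem : ∀ i, e i * e i = e i := by
    intro i
    rw [he]
    linear_combination (β (h i) oneS * β (h i) oneS) * pidem i +
      (∏ j ∈ Finset.range i, (1 - β (h j) oneS)) * bidem i
  have orthlt : ∀ i j, i < j → e i * e j = 0 := by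
    intro i j hij
    have hz : β (h i) oneS * (1 - β (h i) oneS) = 0 := by linear_combination -bidem i
    rw [he i, he j, ← Finset.mul_prod_erase (Finset.range j) _ (Finset.mem_range.2 hij)]
    linear_combination ((∏ j' ∈ Finset.range i, (1 - β (h j') oneS)) *
      (∏ j' ∈ (Finset.range j).erase i, (1 - β (h j') oneS)) * β (h j) oneS) * hz
  have orth : ∀ i j, i ≠ j → e i * e j = 0 := by
    intro i j hij
    rcases lt_or_gt_of_ne hij with hlt | hgt
    · exact orthlt _ _ hlt
    · rw [mul_comm]; exact orthlt _ _ hgt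
  have sum_e : eH = ∑ i ∈ Finset.range m, e i := by
    rw [heH, hψ]
    exact Finset.sum_congr rfl fun i _ => by rw [mul_comm]; exact ebi i
  have eeH : ∀ i < m, e i * eH = e i := by
    intro i hi
    rw [sum_e, Finset.mul_sum,
      Finset.sum_eq_single i (fun j _ hj => orth i j (Ne.symm hj))
        (fun hnot => absurd (Finset.mem_range.2 hi) hnot)]
    exact eidem i
  have eH_prod : eH = 1 - ∏ i ∈ Finset.range m, (1 - β (h i) oneS) := by
    rw [sum_e]
    have hstep : ∀ i, e i = (∏ j ∈ Finset.range i, (1 - β (h j) oneS)) -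
        (∏ j ∈ Finset.range (i + 1), (1 - β (h j) oneS)) := by
      intro i
      rw [Finset.prod_range_succ, he]
      ring
    rw [Finset.sum_congr rfl fun i _ => hstep i,
      Finset.sum_range_sub' (fun i => ∏ j ∈ Finset.range i, (1 - β (h j) oneS)) m]
    simp
  -- ## choice and permutation machinery
  have choose' : ∀ P : ℕ → ℕ → Prop, (∀ i < m, ∃ j < m, P i j) →
      ∃ σ : ℕ → ℕ, ∀ i < m, σ i < m ∧ P i (σ i) := by
    intro P hP
    have hP' : ∀ i : ℕ, ∃ j : ℕ, i < m → (j < m ∧ P i j) := by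
      intro i
      by_cases hi : i < m
      · obtain ⟨j, hj, hPj⟩ := hP i hi
        exact ⟨j, fun _ => ⟨hj, hPj⟩⟩
      · exact ⟨0, fun hi' => absurd hi' hi⟩
    choose σ hσ using hP'
    exact ⟨σ, hσ⟩
  have injlem : ∀ (u : G) (σ : ℕ → ℕ), (∀ i < m, u * h i = h (σ i)) →
      ∀ i < m, ∀ j < m, σ i = σ j → i = j := by
    intro u σ hσ i hi j hj hij
    apply hinj i hi j hj
    apply mul_left_cancel (a := u)
    rw [hσ i hi, hσ j hj, hij]
  have surjlem : ∀ σ : ℕ → ℕ, (∀ i < m, σ i < m) → (∀ i < m, ∀ j < m, σ i = σ j → i = j) →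
      ∀ k < m, ∃ i < m, σ i = k := by
    intro σ hmap hinjσ k hk
    have hsub : Finset.image σ (Finset.range m) ⊆ Finset.range m := by
      intro x hx
      obtain ⟨i, hi, rfl⟩ := Finset.mem_image.1 hx
      exact Finset.mem_range.2 (hmap i (Finset.mem_range.1 hi))
    have hcard : (Finset.image σ (Finset.range m)).card = m := by
      rw [Finset.card_image_of_injOn, Finset.card_range]
      intro i hi j hj hij
      exact hinjσ i (by simpa using hi) j (by simpa using hj) hij
    have heq : Finset.image σ (Finset.range m) = Finset.range m :=
      Finset.eq_of_subset_of_card_le hsub (by rw [hcard, Finset.card_range])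
    have hmem : k ∈ Finset.image σ (Finset.range m) := by
      rw [heq]; exact Finset.mem_range.2 hk
    obtain ⟨i, hi, hik⟩ := Finset.mem_image.1 hmem
    exact ⟨i, Finset.mem_range.1 hi, hik⟩
  have prodperm : ∀ σ : ℕ → ℕ, (∀ i < m, σ i < m) → (∀ i < m, ∀ j < m, σ i = σ j → i = j) →
      ∏ i ∈ Finset.range m, (1 - β (h (σ i)) oneS) =
        ∏ i ∈ Finset.range m, (1 - β (h i) oneS) := by
    intro σ hmap hinjσ
    refine Finset.prod_nbij σ
      (fun i hi => Finset.mem_range.2 (hmap i (Finset.mem_range.1 hi)))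
      (fun i hi j hj hij => hinjσ i (by simpa using hi) j (by simpa using hj) hij)
      ?_ (fun i hi => rfl)
    intro k hk
    obtain ⟨i, hi, hik⟩ := surjlem σ hmap hinjσ k (by simpa using hk)
    exact ⟨i, by simpa using hi, hik⟩
  have hinvH : ∀ j < m, ∃ k < m, h j * h k = 1 := by
    intro j hj
    obtain ⟨σ, hσ⟩ := choose' (fun a c => h j * h a = h c) (fun a ha => hmulc j hj a ha)
    obtain ⟨k, hk, hk0⟩ := surjlem σ (fun a ha => (hσ a ha).1)
      (injlem (h j) σ (fun a ha => (hσ a ha).2)) 0 hm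
    exact ⟨k, hk, by rw [(hσ k hk).2, hk0, h1]⟩
  have AinvH : ∀ k < m, β (h k) eH = eH := by
    intro k hk
    obtain ⟨σ, hσ⟩ := choose' (fun i j => h k * h i = h j) (fun i hi => hmulc k hk i hi)
    rw [eH_prod, map_sub, map_one, map_prod]
    congr 1
    calc ∏ i ∈ Finset.range m, β (h k) (1 - β (h i) oneS)
        = ∏ i ∈ Finset.range m, (1 - β (h (σ i)) oneS) := by
          refine Finset.prod_congr rfl fun i hi => ?_
          rw [map_sub, map_one, ββ, (hσ i (Finset.mem_range.1 hi)).2]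
      _ = ∏ i ∈ Finset.range m, (1 - β (h i) oneS) :=
          prodperm σ (fun i hi => (hσ i hi).1) (injlem (h k) σ (fun i hi => (hσ i hi).2))
  have hig : ∀ g : G, ∀ i < m, ∃ j, j < m ∧ h i * g = g * h j := by
    intro g i hi
    obtain ⟨j, hj, hji⟩ := hnormal g⁻¹ i hi
    rw [inv_inv] at hji
    exact ⟨j, hj, by rw [← hji]; group⟩
  -- ## facts about SaH and ψ
  have SaH_elem : ∀ s, SaH s → s * oneS = s := fun s hs => ((hSaH s).1 hs).1
  have SaH_rel : ∀ s, SaH s → ∀ i < m, β (h i) s * oneS = s * (β (h i) oneS * oneS) :=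
    fun s hs => ((hSaH s).1 hs).2
  have SaHoneS : SaH oneS := by
    rw [hSaH]
    exact ⟨hidem, fun i hi => by linear_combination (-β (h i) oneS) * hidem⟩
  have sym : ∀ s : T, SaH s → ∀ i < m, ∀ j < m,
      β (h i) s * β (h j) oneS = β (h j) s * (β (h i) oneS * β (h j) oneS) := by
    intro s hs i hi j hj
    obtain ⟨j', hj', hjj'⟩ := hinvH j hj
    obtain ⟨k, hk, hk'⟩ := hmulc j' hj' i hi
    have hcomp : h j * h k = h i := by rw [← hk', ← mul_assoc, hjj', one_mul]
    have happ := congrArg (β (h j)) (SaH_rel s hs k hk)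
    simp only [map_mul] at happ
    rw [ββ, ββ, hcomp] at happ
    exact happ
  have ψ1S : ∀ s : T, ψ s * oneS = s * oneS := by
    intro s
    calc ψ s * oneS = ∑ i ∈ Finset.range m, β (h i) s * e i * oneS := by
          rw [hψ, Finset.sum_mul]
      _ = β (h 0) s * e 0 * oneS := by
          refine Finset.sum_eq_single 0 (fun j hj hj0 => ?_)
            (fun h0 => absurd (Finset.mem_range.2 hm) h0)
          have hj' : 0 ∈ Finset.range j := Finset.mem_range.2 (Nat.pos_of_ne_zero hj0)
          rw [he, ← Finset.mul_prod_erase _ _ hj', h1, β1]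
          linear_combination (-(β (h j) s * (∏ j' ∈ (Finset.range j).erase 0,
            (1 - β (h j') oneS)) * β (h j) oneS)) * hidem
      _ = s * oneS := by
          rw [he, h1]
          simp only [Finset.range_zero, Finset.prod_empty, one_mul, β1]
          rw [mul_assoc, hidem]
  have ψadd : ∀ s t : T, ψ (s + t) = ψ s + ψ t := by
    intro s t
    rw [hψ, hψ, hψ, ← Finset.sum_add_distrib]
    exact Finset.sum_congr rfl fun i _ => by rw [map_add]; ring
  have ψmul : ∀ s t : T, ψ (s * t) = ψ s * ψ t := by
    intro s t
    rw [hψ s, hψ t, hψ (s * t), Finset.sum_mul_sum]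
    refine Finset.sum_congr rfl fun i hi => ?_
    rw [Finset.sum_eq_single i
      (fun j _ hji => by linear_combination (β (h i) s * β (h j) t) * orth i j (Ne.symm hji))
      (fun hni => absurd hi hni), map_mul]
    linear_combination (-(β (h i) s * β (h i) t)) * eidem i
  have eH1S : eH * oneS = oneS := by rw [heH, ψ1S, hidem]
  have eHid : eH * eH = eH := by rw [heH, ← ψmul, hidem]
  -- ## invariance of ψ s for s ∈ S^{α_H}
  have ψinv : ∀ s : T, SaH s → ∀ k < m, β (h k) (ψ s) = ψ s := by
    intro s hs k hk
    obtain ⟨σ, hσ⟩ := choose' (fun i j => h k * h i = h j) (fun i hi => hmulc k hk i hi)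
    have hσm : ∀ i < m, σ i < m := fun i hi => (hσ i hi).1
    have hσe : ∀ i < m, h k * h i = h (σ i) := fun i hi => (hσ i hi).2
    have fb : ∀ i < m, β (h k) (e i) * β (h (σ i)) oneS = β (h k) (e i) := by
      intro i hi
      rw [← hσe i hi, ← ββ, ← map_mul, ebi]
    have feH : ∀ i < m, β (h k) (e i) * eH = β (h k) (e i) := by
      intro i hi
      conv_lhs => rw [← AinvH k hk]
      rw [← map_mul, eeH i hi]
    calc β (h k) (ψ s)
        = ∑ i ∈ Finset.range m, β (h (σ i)) s * β (h k) (e i) := by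
          rw [hψ, map_sum]
          refine Finset.sum_congr rfl fun i hi => ?_
          rw [map_mul, ββ, hσe i (Finset.mem_range.1 hi)]
      _ = ∑ i ∈ Finset.range m, ∑ j ∈ Finset.range m,
            β (h j) s * (β (h k) (e i) * e j) := by
          refine Finset.sum_congr rfl fun i hi => ?_
          have hi' := Finset.mem_range.1 hi
          calc β (h (σ i)) s * β (h k) (e i)
              = β (h (σ i)) s * (β (h k) (e i) * eH) := by rw [feH i hi']
            _ = ∑ j ∈ Finset.range m, β (h (σ i)) s * (β (h k) (e i) * e j) := by
                rw [sum_e, Finset.mul_sum, Finset.mul_sum]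
            _ = ∑ j ∈ Finset.range m, β (h j) s * (β (h k) (e i) * e j) := by
                refine Finset.sum_congr rfl fun j hj => ?_
                have hj' := Finset.mem_range.1 hj
                have r1 := sym s hs (σ i) (hσm i hi') j hj'
                have r2 := fb i hi'
                have r3 := ebi j
                linear_combination (β (h k) (e i) * e j) * r1
                  + (β (h j) s * e j * β (h j) oneS) * r2
                  + (β (h j) s * β (h k) (e i) - β (h (σ i)) s * β (h k) (e i)) * r3
      _ = ∑ j ∈ Finset.range m, ∑ i ∈ Finset.range m,
            β (h j) s * (β (h k) (e i) * e j) := Finset.sum_comm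
      _ = ∑ j ∈ Finset.range m, β (h j) s * e j := by
          refine Finset.sum_congr rfl fun j hj => ?_
          rw [← Finset.mul_sum, ← Finset.sum_mul, ← map_sum, ← sum_e, AinvH k hk,
            mul_comm eH (e j), eeH j (Finset.mem_range.1 hj)]
      _ = ψ s := (hψ s).symm
  -- ## ψ applied to translates
  have ψα : ∀ (g : G) (s : T), (∀ k < m, β (h k) (ψ s) = ψ s) →
      ψ (β g (ψ s) * oneS) = β g (ψ s) * eH := by
    intro g s hinvs
    rw [hψ]
    calc ∑ i ∈ Finset.range m, β (h i) (β g (ψ s) * oneS) * e i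
        = ∑ i ∈ Finset.range m, β g (ψ s) * e i := by
          refine Finset.sum_congr rfl fun i hi => ?_
          have hi' := Finset.mem_range.1 hi
          obtain ⟨j, hj, hjg⟩ := hig g i hi'
          rw [map_mul, ββ, hjg, ← ββ, hinvs j hj, mul_assoc]
          congr 1
          rw [mul_comm]
          exact ebi i
      _ = β g (ψ s) * eH := by rw [← Finset.mul_sum, ← sum_e]
  have ψβ : ∀ (g : G) (s : T), SaH s → ψ (β g (ψ s) * oneS) = β g (ψ s) * eH :=
    fun g s hs => ψα g s (ψinv s hs)
  have ψoneTil : ∀ g : G, ψ (oneTil g) = β g eH * eH := by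
    intro g
    have h0 := ψα g oneS (fun k hk => by rw [← heH]; exact AinvH k hk)
    rw [← heH] at h0
    rw [honeTil]
    exact h0
  have SaHβψ : ∀ (g : G) (s : T), SaH s → SaH (β g (ψ s) * oneS) := by
    intro g s hs
    rw [hSaH]
    refine ⟨by rw [mul_assoc, hidem], fun i hi => ?_⟩
    obtain ⟨j, hj, hjg⟩ := hig g i hi
    rw [map_mul, ββ, hjg, ← ββ, ψinv s hs j hj]
    linear_combination (-(β g (ψ s) * β (h i) oneS)) * hidem
  have SaHoneTil : ∀ g : G, SaH (oneTil g) := by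
    intro g
    have hx := SaHβψ g oneS SaHoneS
    rw [← heH] at hx
    rw [honeTil]
    exact hx
  -- ## main translation lemmas
  have βeHid : ∀ g : G, β g eH * β g eH = β g eH := fun g => by rw [← map_mul, eHid]
  have Mlem : ∀ (g : G) (s : T), SaH s → αTil g (s * oneTil g⁻¹) = αTil g s * oneTil g := by
    intro g s hs
    rw [hαTil, hαTil, ψmul, ψoneTil g⁻¹, honeTil g, map_mul, map_mul, βcancel g eH]
    linear_combination (β g (ψ s) * β g eH) * eH1S - (β g (ψ s) * β g eH) * hidem
  have Nlem : ∀ (g : G) (s : T), SaH s →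
      αTil g⁻¹ (αTil g s * oneTil g) = s * oneTil g⁻¹ := by
    intro g s hs
    rw [hαTil g s, hαTil g⁻¹, ψmul, ψβ g s hs, ψoneTil g, honeTil g⁻¹,
      map_mul, map_mul, map_mul, βcancel' g (ψ s), βcancel' g eH]
    linear_combination (ψ s * eH * oneS) * βeHid g⁻¹ + (ψ s * β g⁻¹ eH) * eH1S
      + β g⁻¹ eH * ψ1S s
  have oneTil1 : oneTil 1 = oneS := by rw [honeTil, β1, eH1S]
  have mapsTo : ∀ g : G, Set.MapsTo (αTil g) (Dtil g⁻¹) (Dtil g) := by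
    intro g x hx
    rw [hDtil] at hx ⊢
    obtain ⟨s, hs, rfl⟩ := hx
    exact ⟨αTil g s, by rw [hαTil]; exact SaHβψ g s hs, Mlem g s hs⟩
  have leftinv : ∀ g : G, ∀ x ∈ Dtil g⁻¹, αTil g⁻¹ (αTil g x) = x := by
    intro g x hx
    rw [hDtil] at hx
    obtain ⟨s, hs, rfl⟩ := hx
    rw [Mlem g s hs]
    exact Nlem g s hs
  -- ## final assembly
  refine ⟨?_, ?_, ⟨?_, ?_⟩, ?_, ?_, ?_, ?_, ?_⟩
  · -- (a)
    rintro g g' ⟨j, hj, hjg⟩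
    have hg' : g' = g * h j := by rw [← hjg]; group
    constructor
    · rw [hg', ← ββ, AinvH j hj]
    · intro s hs
      rw [hg', ← ββ, ψinv s hs j hj]
  · -- (b) idempotents in SaH
    intro g
    refine ⟨?_, SaHoneTil g⟩
    rw [honeTil]
    linear_combination (oneS * oneS) * βeHid g + β g eH * hidem
  · exact oneTil1
  · -- Dtil 1 = SaH
    ext x
    simp only [hDtil, Set.mem_setOf_eq]
    constructor
    · rintro ⟨s, hs, rfl⟩
      rw [oneTil1, SaH_elem s hs]
      exact hs
    · intro hx
      exact ⟨x, hx, by rw [oneTil1, SaH_elem x hx]⟩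
  · -- BijOn
    intro g
    refine ⟨mapsTo g, fun x hx y hy hxy => ?_, fun y hy => ?_⟩
    · rw [← leftinv g x hx, ← leftinv g y hy, hxy]
    · have hy' : y ∈ Dtil (g⁻¹)⁻¹ := by rw [inv_inv]; exact hy
      refine ⟨αTil g⁻¹ y, mapsTo g⁻¹ hy', ?_⟩
      have hli := leftinv g⁻¹ y hy'
      rw [inv_inv] at hli
      exact hli
  · -- additive and multiplicative
    intro g x _ y _
    constructor
    · rw [hαTil, hαTil, hαTil, ψadd, map_add, add_mul]
    · rw [hαTil, hαTil, hαTil, ψmul, map_mul]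
      linear_combination (-(β g (ψ x) * β g (ψ y))) * hidem
  · -- αTil 1 = id
    intro s hs
    rw [hαTil, β1, ψ1S, SaH_elem s hs]
  · -- (d)
    intro g l
    rw [hαTil, ψmul, ψoneTil g⁻¹, ψoneTil l, honeTil g, honeTil (g * l),
      map_mul (β g) (β g⁻¹ eH * eH) (β l eH * eH), map_mul (β g) (β g⁻¹ eH) eH,
      map_mul (β g) (β l eH) eH, βcancel g eH, ββ g l eH]
    linear_combination (eH * β (g * l) eH * oneS) * βeHid g
      + (β g eH * β (g * l) eH) * eH1S - (β g eH * β (g * l) eH) * hidem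
  · -- (e)
    intro g l s hs
    rw [Mlem l s hs, Mlem (g * l) s hs, hαTil g, hαTil l s, hαTil (g * l) s,
      ψmul, ψmul, ψβ l s hs, ψoneTil l, ψoneTil g⁻¹, honeTil (g * l), honeTil g,
      map_mul (β g) (β l (ψ s) * eH * (β l eH * eH)) (β g⁻¹ eH * eH),
      map_mul (β g) (β l (ψ s) * eH) (β l eH * eH),
      map_mul (β g) (β l (ψ s)) eH, map_mul (β g) (β l eH) eH,
      map_mul (β g) (β g⁻¹ eH) eH, βcancel g eH, ββ g l (ψ s), ββ g l eH]
    linear_combination (β (g * l) (ψ s) * β (g * l) eH * eH * β g eH * oneS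
        + β (g * l) (ψ s) * β (g * l) eH * eH * oneS) * βeHid g
      + (β (g * l) (ψ s) * β (g * l) eH * β g eH) * eH1S
      + (-(β (g * l) (ψ s) * β (g * l) eH * β g eH * oneS)
        - β (g * l) (ψ s) * β (g * l) eH * β g eH) * hidem
end

section
/- The invariants of S^{α_H} under the induced partial action α̃ of G/H equal S^{α_G}; explicitly, {s ∈ T : s = s·1_S, β_h(s)·1_S = s·1_h for all h ∈ H, and β_g(ψ_H(s))·1_S = s·β_g(e_H)·1_S for all g ∈ G} = {s ∈ T : s = s·1_S and β_g(s)·1_S = s·1_g for all g ∈ G}. (Theorem 3.5(ii).) -/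
/-- Theorem 3.5(ii): the invariants of S^{α_H} under the induced partial action of G/H
equal S^{α_G}. -/
theorem stmt_8 {T : Type*} [CommRing T] {G : Type*} [Group G] [Fintype G]
    (β : G →* RingAut T) (oneS : T) (hidem : oneS * oneS = oneS)
    (hglob : ∏ g : G, (1 - β g oneS) = 0)
    (m : ℕ) (hm : 0 < m) (h : ℕ → G) (h1 : h 0 = 1)
    (hinj : ∀ i < m, ∀ j < m, h i = h j → i = j)
    (hmulc : ∀ i < m, ∀ j < m, ∃ k < m, h i * h j = h k)
    (hnormal : ∀ g : G, ∀ i < m, ∃ j < m, g * h i * g⁻¹ = h j)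
    (e : ℕ → T)
    (he : ∀ i, e i = (∏ j ∈ Finset.range i, (1 - β (h j) oneS)) * β (h i) oneS)
    (ψ : T → T) (hψ : ∀ t, ψ t = ∑ i ∈ Finset.range m, β (h i) t * e i)
    (eH : T) (heH : eH = ψ oneS) :
    {s : T | s * oneS = s ∧
        (∀ i < m, β (h i) s * oneS = s * (β (h i) oneS * oneS)) ∧
        ∀ g : G, β g (ψ s) * oneS = s * (β g eH * oneS)} =
    {s : T | s * oneS = s ∧ ∀ g : G, β g s * oneS = s * (β g oneS * oneS)} := by
  have hone : ∀ x : T, β (1 : G) x = x := fun x => by rw [map_one]; rfl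
  -- e 0 = oneS
  have he0 : e 0 = oneS := by
    rw [he, Finset.range_zero, Finset.prod_empty, one_mul, h1, hone]
  -- e i * oneS = 0 for 0 < i
  have hz : ∀ i, 0 < i → e i * oneS = 0 := by
    intro i hi
    rw [he]
    have h0mem : (0 : ℕ) ∈ Finset.range i := Finset.mem_range.mpr hi
    rw [← Finset.mul_prod_erase _ _ h0mem, h1]
    have key : (1 - (β (1 : G)) oneS) * oneS = 0 := by
      rw [sub_mul, one_mul, hone, hidem, sub_self]
    linear_combination ((∏ j ∈ (Finset.range i).erase 0, (1 - β (h j) oneS)) *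
      β (h i) oneS) * key
  -- ψ s * oneS = s whenever s * oneS = s
  have hA : ∀ s : T, s * oneS = s → ψ s * oneS = s := by
    intro s hs
    rw [hψ, Finset.sum_mul]
    rw [Finset.sum_eq_single 0]
    · rw [he0, h1, hone, hs, hs]
    · intro i _ hi0
      rw [mul_assoc, hz i (Nat.pos_of_ne_zero hi0), mul_zero]
    · intro habs
      exact absurd (Finset.mem_range.mpr hm) habs
  have heH1 : eH * oneS = oneS := by
    rw [heH]; exact hA oneS hidem
  ext s
  simp only [Set.mem_setOf_eq]
  constructor
  · rintro ⟨hs, -, hG⟩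
    refine ⟨hs, fun g => ?_⟩
    have hψs : β g (ψ s) * β g oneS = β g s := by
      rw [← map_mul, hA s hs]
    have hBe : β g eH * β g oneS = β g oneS := by
      rw [← map_mul, heH1]
    have hg := hG g
    linear_combination (β g oneS) * hg - oneS * hψs + (s * oneS) * hBe
  · rintro ⟨hs, hG⟩
    refine ⟨hs, fun i _ => hG (h i), fun g => ?_⟩
    rw [hψ, heH, hψ, map_sum, map_sum, Finset.sum_mul, Finset.sum_mul,
      Finset.mul_sum]
    refine Finset.sum_congr rfl fun i _ => ?_
    have key := hG (g * h i)
    rw [map_mul β] at key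
    have hmul : ∀ x : T, (β g * β (h i)) x = β g (β (h i) x) := fun x => rfl
    rw [hmul, hmul] at key
    rw [map_mul, map_mul]
    linear_combination (β g (e i)) * key
end

section
/- The pair (T^{β_H}, induced G/H-action of β) together with ψ_H satisfies the globalization conditions for the induced partial action α̃ of G/H on S^{α_H}: (G1) the image ψ_H(S^{α_H}) equals T^{β_H}·e_H, an ideal of the ring T^{β_H}; (G2) ψ_H(D̃_{gH}) = T^{β_H}·e_H·β_g(e_H) = ψ_H(S^{α_H}) ∩ β_g(ψ_H(S^{α_H})) for all g ∈ G; (G3) ψ_H(α̃_{gH}(s·1̃_{g⁻¹H})) = β_g(ψ_H(s·1̃_{g⁻¹H})) for all s ∈ S^{α_H} and g ∈ G. (Theorem 3.5(iii); together with Proposition 3.2 this shows (T^{β_H}, β_{G/H}) is the globalization of (S^{α_H}, α̃_{G/H}).) -/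
/-- Theorem 3.5(iii): (T^{β_H}, β_{G/H}) together with ψ_H satisfies the globalization
conditions (G1)-(G3) for the induced partial action of G/H on S^{α_H}. -/
theorem stmt_9 {T : Type*} [CommRing T] {G : Type*} [Group G] [Fintype G]
    (β : G →* RingAut T) (oneS : T) (hidem : oneS * oneS = oneS)
    (hglob : ∏ g : G, (1 - β g oneS) = 0)
    (m : ℕ) (hm : 0 < m) (h : ℕ → G) (h1 : h 0 = 1)
    (hinj : ∀ i < m, ∀ j < m, h i = h j → i = j)
    (hmulc : ∀ i < m, ∀ j < m, ∃ k < m, h i * h j = h k)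
    (hnormal : ∀ g : G, ∀ i < m, ∃ j < m, g * h i * g⁻¹ = h j)
    (e : ℕ → T)
    (he : ∀ i, e i = (∏ j ∈ Finset.range i, (1 - β (h j) oneS)) * β (h i) oneS)
    (ψ : T → T) (hψ : ∀ t, ψ t = ∑ i ∈ Finset.range m, β (h i) t * e i)
    (eH : T) (heH : eH = ψ oneS)
    (SaH : T → Prop)
    (hSaH : ∀ s : T, SaH s ↔
      (s * oneS = s ∧ ∀ i < m, β (h i) s * oneS = s * (β (h i) oneS * oneS)))
    (oneTil : G → T) (honeTil : ∀ g : G, oneTil g = β g eH * oneS)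
    (Dtil : G → Set T) (hDtil : ∀ g : G, Dtil g = {x : T | ∃ s : T, SaH s ∧ x = s * oneTil g})
    (αTil : G → T → T) (hαTil : ∀ (g : G) (x : T), αTil g x = β g (ψ x) * oneS) :
    -- (G1): ψ_H(S^{α_H}) = T^{β_H}·e_H, an ideal of T^{β_H}
    ({x : T | ∃ s : T, SaH s ∧ x = ψ s} =
      {x : T | ∃ t : T, (∀ i < m, β (h i) t = t) ∧ x = t * eH}) ∧
    (∀ t : T, (∀ i < m, β (h i) t = t) →
      ∀ x ∈ {x : T | ∃ s : T, SaH s ∧ x = ψ s},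
        t * x ∈ {x : T | ∃ s : T, SaH s ∧ x = ψ s}) ∧
    -- (G2)
    (∀ g : G,
      ({x : T | ∃ d ∈ Dtil g, x = ψ d} =
        {x : T | ∃ t : T, (∀ i < m, β (h i) t = t) ∧ x = t * (eH * β g eH)}) ∧
      ({x : T | ∃ d ∈ Dtil g, x = ψ d} =
        {x : T | ∃ s : T, SaH s ∧ x = ψ s} ∩ {x : T | ∃ s : T, SaH s ∧ x = β g (ψ s)})) ∧
    -- (G3)
    (∀ g : G, ∀ s : T, SaH s →
      ψ (αTil g (s * oneTil g⁻¹)) = β g (ψ (s * oneTil g⁻¹))) := by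
  have hβmul : ∀ (a b : G) (x : T), β (a * b) x = β a (β b x) := by
    intro a b x; rw [map_mul]; rfl
  have hβone : ∀ x : T, β 1 x = x := by
    intro x; rw [map_one]; rfl
  have hu_idem : ∀ k : G, β k oneS * β k oneS = β k oneS := by
    intro k; rw [← map_mul, hidem]
  -- powers stay in H
  have hpow : ∀ i < m, ∀ n : ℕ, ∃ j < m, h i ^ n = h j := by
    intro i hi n
    induction n with
    | zero => exact ⟨0, hm, by rw [pow_zero, h1]⟩
    | succ n ih =>
      obtain ⟨j, hj, hje⟩ := ih
      obtain ⟨k, hk, hke⟩ := hmulc j hj i hi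
      exact ⟨k, hk, by rw [pow_succ, hje, hke]⟩
  -- inverses
  have hinvex : ∀ i < m, ∃ j < m, h i * h j = 1 := by
    intro i hi
    obtain ⟨j, hj, hje⟩ := hpow i hi (orderOf (h i) - 1)
    refine ⟨j, hj, ?_⟩
    rw [← hje, ← pow_succ', Nat.sub_add_cancel (orderOf_pos (h i)), pow_orderOf_eq_one]
  -- division
  have hdiv : ∀ i < m, ∀ k < m, ∃ j < m, h i * h j = h k := by
    intro i hi k hk
    obtain ⟨i', hi', hie⟩ := hinvex i hi
    obtain ⟨j, hj, hje⟩ := hmulc i' hi' k hk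
    exact ⟨j, hj, by rw [← hje, ← mul_assoc, hie, one_mul]⟩
  have hc_idem : ∀ i : ℕ, (∏ j ∈ Finset.range i, (1 - β (h j) oneS)) *
      (∏ j ∈ Finset.range i, (1 - β (h j) oneS)) =
      ∏ j ∈ Finset.range i, (1 - β (h j) oneS) := by
    intro i
    rw [← Finset.prod_mul_distrib]
    exact Finset.prod_congr rfl fun j _ => by linear_combination hu_idem (h j)
  have he_idem : ∀ i : ℕ, e i * e i = e i := by
    intro i; rw [he i, mul_mul_mul_comm, hc_idem, hu_idem]
  have hue : ∀ i : ℕ, β (h i) oneS * e i = e i := by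
    intro i
    rw [he i]
    calc β (h i) oneS * ((∏ j ∈ Finset.range i, (1 - β (h j) oneS)) * β (h i) oneS)
        = (∏ j ∈ Finset.range i, (1 - β (h j) oneS)) * (β (h i) oneS * β (h i) oneS) := by ring
      _ = _ := by rw [hu_idem]
  have horthlt : ∀ i j : ℕ, i < j → e i * e j = 0 := by
    intro i j hij
    have hd : (1 - β (h i) oneS) ∣ ∏ k ∈ Finset.range j, (1 - β (h k) oneS) :=
      Finset.dvd_prod_of_mem _ (Finset.mem_range.mpr hij)
    obtain ⟨q, hq⟩ := hd
    have h0 : e i * (1 - β (h i) oneS) = 0 := by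
      rw [he i]; linear_combination (-(∏ k ∈ Finset.range i, (1 - β (h k) oneS))) * hu_idem (h i)
    rw [he j, hq]
    linear_combination (q * β (h j) oneS) * h0
  have horth : ∀ i j : ℕ, i ≠ j → e i * e j = 0 := by
    intro i j hij
    rcases lt_or_gt_of_ne hij with hl | hl
    · exact horthlt i j hl
    · rw [mul_comm]; exact horthlt j i hl
  -- ψ t * e k = β (h k) t * e k for k < m
  have hψe : ∀ (t : T) (k : ℕ), k < m → ψ t * e k = β (h k) t * e k := by
    intro t k hk
    rw [hψ, Finset.sum_mul]
    rw [Finset.sum_eq_single k (fun i _ hik => by rw [mul_assoc, horth i k hik, mul_zero])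
      (fun hn => absurd (Finset.mem_range.mpr hk) hn)]
    rw [mul_assoc, he_idem]
  -- multiplicativity
  have hψ_mul : ∀ s t : T, ψ (s * t) = ψ s * ψ t := by
    intro s t
    rw [hψ s, Finset.sum_mul]
    rw [hψ (s * t)]
    refine Finset.sum_congr rfl fun i hi => ?_
    have hi' := Finset.mem_range.mp hi
    calc β (h i) (s * t) * e i = β (h i) s * (β (h i) t * e i) := by rw [map_mul]; ring
      _ = β (h i) s * (ψ t * e i) := by rw [hψe t i hi']
      _ = β (h i) s * e i * ψ t := by ring
  -- absorption of oneS
  have hψ_abs : ∀ t : T, ψ (t * oneS) = ψ t := by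
    intro t
    rw [hψ, hψ]
    refine Finset.sum_congr rfl fun i _ => ?_
    rw [map_mul, mul_assoc, hue]
  have hψ_eH : ∀ t : T, ψ t * eH = ψ t := by
    intro t
    rw [heH, ← hψ_mul, hψ_abs]
  have heH_idem : eH * eH = eH := by
    have h2 := hψ_eH oneS; rw [← heH] at h2; exact h2
  have heH_sum : eH = ∑ i ∈ Finset.range m, e i := by
    rw [heH, hψ]
    exact Finset.sum_congr rfl fun i _ => hue i
  -- eH = 1 - full product
  have heH_eq : eH = 1 - ∏ j ∈ Finset.range m, (1 - β (h j) oneS) := by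
    rw [heH_sum]
    have : ∀ i ∈ Finset.range m, e i =
        (∏ j ∈ Finset.range i, (1 - β (h j) oneS)) -
        (∏ j ∈ Finset.range (i + 1), (1 - β (h j) oneS)) := by
      intro i _
      rw [he i, Finset.prod_range_succ]; ring
    rw [Finset.sum_congr rfl this, Finset.sum_range_sub', Finset.prod_range_zero]
  -- invariance of eH
  have heH_inv : ∀ k < m, β (h k) eH = eH := by
    intro k hk
    rw [heH_eq, map_sub, map_one, map_prod]
    congr 1
    have : ∀ j ∈ Finset.range m, β (h k) (1 - β (h j) oneS)
        = 1 - β (h k * h j) oneS := by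
      intro j _
      rw [map_sub, map_one, hβmul]
    rw [Finset.prod_congr rfl this]
    choose σ hσm hσe using hmulc k hk
    refine Finset.prod_bij (fun j hj => σ j (Finset.mem_range.mp hj)) ?_ ?_ ?_ ?_
    · intro a ha; exact Finset.mem_range.mpr (hσm a (Finset.mem_range.mp ha))
    · intro a ha b hb hab
      have : h k * h a = h k * h b := by
        rw [hσe a (Finset.mem_range.mp ha), hσe b (Finset.mem_range.mp hb), hab]
      exact hinj a (Finset.mem_range.mp ha) b (Finset.mem_range.mp hb) (mul_left_cancel this)
    · intro b hb
      obtain ⟨j, hj, hje⟩ := hdiv k hk b (Finset.mem_range.mp hb)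
      refine ⟨j, Finset.mem_range.mpr hj, ?_⟩
      exact hinj _ (hσm j hj) _ (Finset.mem_range.mp hb) (by rw [← hσe j hj, hje])
    · intro a ha
      rw [hσe a (Finset.mem_range.mp ha)]
  -- key normalized SaH identity
  have hkey : ∀ s : T, SaH s → ∀ i < m, β (h i) s * oneS = s * β (h i) oneS := by
    intro s hs i hi
    obtain ⟨hs1, hs2⟩ := (hSaH s).mp hs
    linear_combination hs2 i hi + β (h i) oneS * hs1
  -- lemma B
  have hB : ∀ s : T, SaH s → ∀ i < m, ∀ k < m,
      β (h k) s * β (h i) oneS = β (h i) s * β (h k) oneS := by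
    intro s hs i hi k hk
    obtain ⟨j, hj, hij⟩ := hdiv i hi k hk
    have key := congrArg (β (h i)) (hkey s hs j hj)
    rw [map_mul, map_mul, ← hβmul, ← hβmul, hij] at key
    exact key
  -- ψ s * u k = eH * β (h k) s
  have hψu : ∀ s : T, SaH s → ∀ k < m, ψ s * β (h k) oneS = eH * β (h k) s := by
    intro s hs k hk
    rw [hψ, heH_sum, Finset.sum_mul, Finset.sum_mul]
    refine Finset.sum_congr rfl fun i hi => ?_
    have hi' := Finset.mem_range.mp hi
    calc β (h i) s * e i * β (h k) oneS = (β (h i) s * β (h k) oneS) * e i := by ring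
      _ = (β (h k) s * β (h i) oneS) * e i := by rw [← hB s hs i hi' k hk]
      _ = β (h k) s * (β (h i) oneS * e i) := by ring
      _ = β (h k) s * e i := by rw [hue]
      _ = e i * β (h k) s := by ring
  -- eH * s = s for s with s * oneS = s
  have hE : ∀ s : T, s * oneS = s → eH * s = s := by
    intro s hs1
    rw [heH_sum, Finset.sum_mul]
    rw [Finset.sum_eq_single 0 ?_ (fun hn => absurd (Finset.mem_range.mpr hm) hn)]
    · rw [he 0, Finset.prod_range_zero, h1, hβone, one_mul]
      linear_combination hs1
    · intro i _ hi0
      obtain ⟨q, hq⟩ : (1 - β (h 0) oneS) ∣ ∏ k ∈ Finset.range i, (1 - β (h k) oneS) :=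
        Finset.dvd_prod_of_mem _ (Finset.mem_range.mpr (Nat.pos_of_ne_zero hi0))
      rw [he i, hq, h1, hβone]
      linear_combination (-(q * β (h i) oneS)) * hs1
  have hψ_oneS : ∀ s : T, SaH s → ψ s * oneS = s := by
    intro s hs
    have := hψu s hs 0 hm
    rw [h1, hβone, hβone] at this
    rw [this]
    exact hE s ((hSaH s).mp hs).1
  -- invariance of ψ s
  have hψ_inv : ∀ s : T, SaH s → ∀ k < m, β (h k) (ψ s) = ψ s := by
    intro s hs k hk
    have hAll : ∀ j < m, β (h k) (ψ s) * β (h j) oneS = ψ s * β (h j) oneS := by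
      intro j hj
      obtain ⟨k', hk', hkk'⟩ := hdiv k hk j hj
      calc β (h k) (ψ s) * β (h j) oneS = β (h k) (ψ s * β (h k') oneS) := by
            rw [map_mul, ← hβmul, hkk']
        _ = β (h k) (eH * β (h k') s) := by rw [hψu s hs k' hk']
        _ = β (h k) eH * β (h j) s := by rw [map_mul, ← hβmul, hkk']
        _ = eH * β (h j) s := by rw [heH_inv k hk]
        _ = ψ s * β (h j) oneS := (hψu s hs j hj).symm
    calc β (h k) (ψ s) = β (h k) (ψ s * eH) := by rw [hψ_eH]
      _ = β (h k) (ψ s) * eH := by rw [map_mul, heH_inv k hk]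
      _ = ∑ j ∈ Finset.range m, β (h k) (ψ s) * e j := by rw [heH_sum, Finset.mul_sum]
      _ = ∑ j ∈ Finset.range m, ψ s * e j := by
          refine Finset.sum_congr rfl fun j hj => ?_
          have hj' := Finset.mem_range.mp hj
          calc β (h k) (ψ s) * e j
              = (β (h k) (ψ s) * β (h j) oneS) * ∏ l ∈ Finset.range j, (1 - β (h l) oneS) := by
                rw [he j]; ring
            _ = (ψ s * β (h j) oneS) * ∏ l ∈ Finset.range j, (1 - β (h l) oneS) := by
                rw [hAll j hj']
            _ = ψ s * e j := by rw [he j]; ring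
      _ = ψ s * eH := by rw [heH_sum, Finset.mul_sum]
      _ = ψ s := hψ_eH s
  -- Lemma D
  have hD1 : ∀ t : T, (∀ i < m, β (h i) t = t) → SaH (t * oneS) := by
    intro t ht
    rw [hSaH]
    constructor
    · rw [mul_assoc, hidem]
    · intro i hi
      rw [map_mul, ht i hi]
      linear_combination (-(t * β (h i) oneS)) * hidem
  have hD2 : ∀ t : T, (∀ i < m, β (h i) t = t) → ψ (t * oneS) = t * eH := by
    intro t ht
    rw [hψ, heH_sum, Finset.mul_sum]
    refine Finset.sum_congr rfl fun i hi => ?_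
    rw [map_mul, ht i (Finset.mem_range.mp hi), mul_assoc, hue]
  -- SaH closed under multiplication
  have hSmul : ∀ s s' : T, SaH s → SaH s' → SaH (s * s') := by
    intro s s' hs hs'
    have hs1 := ((hSaH s).mp hs).1
    have hs1' := ((hSaH s').mp hs').1
    rw [hSaH]
    constructor
    · rw [mul_assoc, hs1']
    · intro i hi
      have k1 := hkey s hs i hi
      have k2 := hkey s' hs' i hi
      calc β (h i) (s * s') * oneS
          = (β (h i) s * oneS) * (β (h i) s' * oneS) := by
            rw [map_mul]; linear_combination (-(β (h i) s * β (h i) s')) * hidem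
        _ = (s * β (h i) oneS) * (s' * β (h i) oneS) := by rw [k1, k2]
        _ = (s * s') * (β (h i) oneS * oneS) := by
            linear_combination s * s' * hu_idem (h i) - s' * β (h i) oneS * hs1
  -- invariance transported by normality
  have hg_inv : ∀ (g : G) (t : T), (∀ i < m, β (h i) t = t) →
      ∀ k < m, β (h k) (β g t) = β g t := by
    intro g t ht k hk
    obtain ⟨j, hj, hje⟩ := hnormal g⁻¹ k hk
    have hkg : h k * g = g * h j := by
      have : g⁻¹ * h k * g = h j := by rw [← hje, inv_inv]
      rw [← this]; group
    rw [← hβmul, hkg, hβmul, ht j hj]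

  have hbgeH_inv : ∀ g : G, ∀ k < m, β (h k) (β g eH) = β g eH :=
    fun g => hg_inv g eH heH_inv
  have hS_oneTil : ∀ g : G, SaH (oneTil g) := fun g => by
    rw [honeTil g]; exact hD1 _ (hbgeH_inv g)
  have hψ_oneTil : ∀ g : G, ψ (oneTil g) = β g eH * eH := fun g => by
    rw [honeTil g]; exact hD2 _ (hbgeH_inv g)
  have hbgeH_idem : ∀ g : G, β g eH * β g eH = β g eH := fun g => by
    rw [← map_mul, heH_idem]
  have hββ : ∀ (g : G) (x : T), β g (β g⁻¹ x) = x := fun g x => by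
    rw [← hβmul, mul_inv_cancel, hβone]
  refine ⟨?_, ?_, ?_, ?_⟩
  · -- (G1) set equality
    ext x
    simp only [Set.mem_setOf_eq]
    constructor
    · rintro ⟨s, hs, rfl⟩
      exact ⟨ψ s, fun i hi => hψ_inv s hs i hi, (hψ_eH s).symm⟩
    · rintro ⟨t, ht, rfl⟩
      exact ⟨t * oneS, hD1 t ht, (hD2 t ht).symm⟩
  · -- (G1) ideal property
    intro t ht x hx
    simp only [Set.mem_setOf_eq] at hx ⊢
    obtain ⟨s, hs, rfl⟩ := hx
    have htinv : ∀ i < m, β (h i) (t * ψ s) = t * ψ s := fun i hi => by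
      rw [map_mul, ht i hi, hψ_inv s hs i hi]
    refine ⟨t * ψ s * oneS, hD1 _ htinv, ?_⟩
    rw [hD2 _ htinv, mul_assoc, hψ_eH]
  · -- (G2)
    intro g
    constructor
    · ext x
      simp only [Set.mem_setOf_eq]
      constructor
      · rintro ⟨d, hd, rfl⟩
        rw [hDtil g] at hd
        simp only [Set.mem_setOf_eq] at hd
        obtain ⟨s, hs, rfl⟩ := hd
        refine ⟨ψ s, fun i hi => hψ_inv s hs i hi, ?_⟩
        rw [hψ_mul, hψ_oneTil]
        ring
      · rintro ⟨t, ht, rfl⟩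
        refine ⟨t * oneS * oneTil g, ?_, ?_⟩
        · rw [hDtil g]; exact ⟨t * oneS, hD1 t ht, rfl⟩
        · rw [hψ_mul, hD2 t ht, hψ_oneTil]
          linear_combination (-(t * β g eH)) * heH_idem
    · ext x
      simp only [Set.mem_setOf_eq, Set.mem_inter_iff]
      constructor
      · rintro ⟨d, hd, rfl⟩
        rw [hDtil g] at hd
        simp only [Set.mem_setOf_eq] at hd
        obtain ⟨s, hs, rfl⟩ := hd
        have hdS : SaH (s * oneTil g) := hSmul s _ hs (hS_oneTil g)
        constructor
        · exact ⟨s * oneTil g, hdS, rfl⟩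
        · have hxinv : ∀ k < m, β (h k) (β g⁻¹ (ψ (s * oneTil g)))
              = β g⁻¹ (ψ (s * oneTil g)) :=
            hg_inv g⁻¹ _ (hψ_inv _ hdS)
          refine ⟨β g⁻¹ (ψ (s * oneTil g)) * oneS, hD1 _ hxinv, ?_⟩
          rw [hD2 _ hxinv, map_mul, hββ g]
          rw [hψ_mul, hψ_oneTil]
          linear_combination (-(ψ s * eH)) * hbgeH_idem g
      · rintro ⟨⟨s, hs, rfl⟩, ⟨s', hs', hx2⟩⟩
        refine ⟨s * oneTil g, ?_, ?_⟩
        · rw [hDtil g]; exact ⟨s, hs, rfl⟩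
        · rw [hψ_mul, hψ_oneTil]
          have h2 : ψ s * β g eH = ψ s := by
            calc ψ s * β g eH = β g (ψ s') * β g eH := by rw [← hx2]
              _ = β g (ψ s' * eH) := by rw [map_mul]
              _ = β g (ψ s') := by rw [hψ_eH]
              _ = ψ s := hx2.symm
          calc ψ s = ψ s * β g eH := h2.symm
            _ = (ψ s * eH) * β g eH := by rw [hψ_eH]
            _ = ψ s * (β g eH * eH) := by ring
  · -- (G3)
    intro g s hs
    have hdS : SaH (s * oneTil g⁻¹) := hSmul s _ hs (hS_oneTil g⁻¹)
    have hψd : ψ (s * oneTil g⁻¹) = ψ s * (β g⁻¹ eH * eH) := by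
      rw [hψ_mul, hψ_oneTil]
    have htinv : ∀ i < m, β (h i) (β g (ψ s) * (eH * β g eH))
        = β g (ψ s) * (eH * β g eH) := by
      intro i hi
      rw [map_mul, map_mul, hg_inv g (ψ s) (hψ_inv s hs) i hi, heH_inv i hi,
        hbgeH_inv g i hi]
    have hL : αTil g (s * oneTil g⁻¹) = β g (ψ s) * (eH * β g eH) * oneS := by
      rw [hαTil, hψd, map_mul, map_mul, hββ g]
    have hR : β g (ψ (s * oneTil g⁻¹)) = β g (ψ s) * (eH * β g eH) := by
      rw [hψd, map_mul, map_mul, hββ g]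
    rw [hL, hR, hD2 _ htinv]
    linear_combination (β g (ψ s) * β g eH) * heH_idem
end

section
/- Assume in addition that S is a partial α-Galois extension of S^{α_G}, i.e. there exist n and elements x_i, y_i ∈ S (1 ≤ i ≤ n) with Σ_{i=1}^n x_i·β_g(y_i)·1_S = (1_S if g = 1, 0 otherwise) for all g ∈ G. Then S^{α_H} is a partial α̃-Galois extension of S^{α_G} for the induced partial action of G/H: there exist N and elements u_i, v_i ∈ S^{α_H} (1 ≤ i ≤ N) such that Σ_{i=1}^N u_i·α̃_{gH}(v_i·1̃_{g⁻¹H}) = (1_S if g ∈ H, 0 otherwise) for all g ∈ G. (Galois part of Theorem 3.1.) -/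
/-- Galois part of Theorem 3.1: if S is a partial α-Galois extension of S^{α_G}, then
S^{α_H} is a partial Galois extension of S^{α_G} for the induced partial action of G/H. -/
theorem stmt_10 {T : Type*} [CommRing T] {G : Type*} [Group G] [Fintype G]
    (β : G →* RingAut T) (oneS : T) (hidem : oneS * oneS = oneS)
    (hglob : ∏ g : G, (1 - β g oneS) = 0)
    (m : ℕ) (hm : 0 < m) (h : ℕ → G) (h1 : h 0 = 1)
    (hinj : ∀ i < m, ∀ j < m, h i = h j → i = j)
    (hmulc : ∀ i < m, ∀ j < m, ∃ k < m, h i * h j = h k)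
    (hnormal : ∀ g : G, ∀ i < m, ∃ j < m, g * h i * g⁻¹ = h j)
    (e : ℕ → T)
    (he : ∀ i, e i = (∏ j ∈ Finset.range i, (1 - β (h j) oneS)) * β (h i) oneS)
    (ψ : T → T) (hψ : ∀ t, ψ t = ∑ i ∈ Finset.range m, β (h i) t * e i)
    (eH : T) (heH : eH = ψ oneS)
    (SaH : T → Prop)
    (hSaH : ∀ s : T, SaH s ↔
      (s * oneS = s ∧ ∀ i < m, β (h i) s * oneS = s * (β (h i) oneS * oneS)))
    (oneTil : G → T) (honeTil : ∀ g : G, oneTil g = β g eH * oneS)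
    (Dtil : G → Set T) (hDtil : ∀ g : G, Dtil g = {x : T | ∃ s : T, SaH s ∧ x = s * oneTil g})
    (αTil : G → T → T) (hαTil : ∀ (g : G) (x : T), αTil g x = β g (ψ x) * oneS)
    (n : ℕ) (x y : ℕ → T)
    (hxS : ∀ i < n, x i * oneS = x i) (hyS : ∀ i < n, y i * oneS = y i)
    (hGal : ∀ g : G,
      (g = 1 → ∑ i ∈ Finset.range n, x i * β g (y i) * oneS = oneS) ∧
      (g ≠ 1 → ∑ i ∈ Finset.range n, x i * β g (y i) * oneS = 0)) :
    ∃ N : ℕ, ∃ u v : ℕ → T,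
      (∀ i < N, SaH (u i) ∧ SaH (v i)) ∧
      ∀ g : G,
        ((∃ j < m, g = h j) →
          ∑ i ∈ Finset.range N, u i * αTil g (v i * oneTil g⁻¹) = oneS) ∧
        ((¬ ∃ j < m, g = h j) →
          ∑ i ∈ Finset.range N, u i * αTil g (v i * oneTil g⁻¹) = 0) := by
  classical
  -- β composition
  have hβc : ∀ (p q : G) (t : T), β p (β q t) = β (p*q) t := by
    intro p q t; rw [map_mul]; rfl
  have hm2 : ∀ (w : G) (a b : T), β w (a * b) = β w a * β w b :=
    fun w a b => map_mul (β w) a b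
  -- idempotents
  have hβi : ∀ g : G, β g oneS * β g oneS = β g oneS := by
    intro g; rw [← map_mul, hidem]
  -- the finset H
  set Hs : Finset G := (Finset.range m).image h with hHsdef
  have hmem : ∀ w : G, w ∈ Hs ↔ ∃ j < m, h j = w := by
    intro w; simp [hHsdef, Finset.mem_image]
  have h1m : (1:G) ∈ Hs := (hmem 1).2 ⟨0, hm, h1⟩
  have hmul : ∀ w ∈ Hs, ∀ b ∈ Hs, w * b ∈ Hs := by
    intro w hw b hb
    obtain ⟨i, hi, hiw⟩ := (hmem w).1 hw
    obtain ⟨j, hj, hjb⟩ := (hmem b).1 hb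
    obtain ⟨k, hk, hke⟩ := hmulc i hi j hj
    exact (hmem _).2 ⟨k, hk, by rw [← hke, hiw, hjb]⟩
  have hinvm : ∀ w ∈ Hs, w⁻¹ ∈ Hs := by
    intro w hw
    have hsub : Finset.image (fun b => w * b) Hs ⊆ Hs := by
      intro z hz
      obtain ⟨b, hb, rfl⟩ := Finset.mem_image.1 hz
      exact hmul w hw b hb
    have hcard : Hs.card ≤ (Finset.image (fun b => w * b) Hs).card := by
      rw [Finset.card_image_of_injective _ (mul_right_injective w)]
    have heq : Finset.image (fun b => w * b) Hs = Hs :=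
      Finset.eq_of_subset_of_card_le hsub hcard
    have h1' : (1:G) ∈ Finset.image (fun b => w * b) Hs := by rw [heq]; exact h1m
    obtain ⟨b, hb, hb1⟩ := Finset.mem_image.1 h1'
    have hbw : b = w⁻¹ := by
      have := hb1
      have this : w * b = 1 := this
      exact eq_inv_of_mul_eq_one_right (by rw [this])
    rwa [hbw] at hb
  -- sum over range m = sum over Hs
  have hsumH : ∀ f : G → T, ∑ l ∈ Finset.range m, f (h l) = ∑ b ∈ Hs, f b := by
    intro f
    rw [hHsdef, Finset.sum_image]
    intro i hi j hj hij
    exact hinj i (Finset.mem_range.1 hi) j (Finset.mem_range.1 hj) hij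
  have hshift : ∀ w ∈ Hs, ∀ f : G → T, ∑ b ∈ Hs, f (w * b) = ∑ b ∈ Hs, f b := by
    intro w hw f
    refine Finset.sum_nbij' (fun b => w * b) (fun b => w⁻¹ * b) ?_ ?_ ?_ ?_ ?_
    · intro b hb; exact hmul w hw b hb
    · intro b hb; exact hmul _ (hinvm w hw) b hb
    · intro b _; simp
    · intro b _; simp
    · intro b _; rfl
  have hshiftm : ∀ w ∈ Hs, ∀ f : G → T,
      ∑ l ∈ Finset.range m, f (w * h l) = ∑ l ∈ Finset.range m, f (h l) := by
    intro w hw f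
    rw [hsumH (fun b => f (w * b)), hsumH f, hshift w hw]
  have hopow : ∀ k : ℕ, oneS ^ (k+1) = oneS := by
    intro k; induction k with
    | zero => simp
    | succ k ih => rw [pow_succ, ih, hidem]
  have hβpow : ∀ (g : G) (k : ℕ), (β g oneS) ^ (k+1) = β g oneS := by
    intro g k; induction k with
    | zero => simp
    | succ k ih => rw [pow_succ, ih, hβi]
  have ho2 : oneS ^ 2 = oneS := hopow 1
  have ho3 : oneS ^ 3 = oneS := hopow 2
  have ho4 : oneS ^ 4 = oneS := hopow 3
  have hβ2 : ∀ g : G, (β g oneS) ^ 2 = β g oneS := fun g => hβpow g 1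
  have hβ3 : ∀ g : G, (β g oneS) ^ 3 = β g oneS := fun g => hβpow g 2
  have hβ4 : ∀ g : G, (β g oneS) ^ 4 = β g oneS := fun g => hβpow g 3
  have hfpow : ∀ (f : RingAut T) (k : ℕ), (f oneS) ^ (k+1) = f oneS := by
    intro f k; induction k with
    | zero => simp
    | succ k ih => rw [pow_succ, ih, ← map_mul, hidem]
  have hf2 : ∀ f : RingAut T, (f oneS) ^ 2 = f oneS := fun f => hfpow f 1
  have hf3 : ∀ f : RingAut T, (f oneS) ^ 3 = f oneS := fun f => hfpow f 2
  have hf4 : ∀ f : RingAut T, (f oneS) ^ 4 = f oneS := fun f => hfpow f 3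
  -- the trace map
  set trH : T → T := fun s => ∑ p ∈ Finset.range m, β (h p) s * (β (h p) oneS * oneS)
    with htrHdef
  have htrHo : ∀ s, trH s * oneS = trH s := by
    intro s
    rw [htrHdef, Finset.sum_mul]
    refine Finset.sum_congr rfl fun p _ => ?_
    ring_nf
    try simp [ho2, ho3, ho4, hβ2, hβ3, hβ4, hf2, hf3, hf4]
    try ring_nf
  -- trace lands in the invariant ring
  have hSaHtr : ∀ s, SaH (trH s) := by
    intro s
    rw [hSaH]
    constructor
    · exact htrHo s
    · intro j hj
      have hjH : h j ∈ Hs := (hmem _).2 ⟨j, hj, rfl⟩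
      have key : ∑ l ∈ Finset.range m, (β (h j * h l) s * β (h j * h l) oneS)
          = ∑ l ∈ Finset.range m, (β (h l) s * β (h l) oneS) :=
        hshiftm (h j) hjH (fun b => β b s * β b oneS)
      calc β (h j) (trH s) * oneS
          = ∑ l ∈ Finset.range m, (β (h j * h l) s * β (h j * h l) oneS) * (β (h j) oneS * oneS) := by
            rw [htrHdef]; simp only [map_sum, Finset.sum_mul]
            refine Finset.sum_congr rfl fun l _ => ?_
            rw [map_mul, map_mul, hβc, hβc]
            ring_nf
            try simp [ho2, ho3, ho4, hβ2, hβ3, hβ4, hf2, hf3, hf4]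
            try ring_nf
        _ = ∑ l ∈ Finset.range m, (β (h l) s * β (h l) oneS) * (β (h j) oneS * oneS) := by
            rw [← Finset.sum_mul, key, Finset.sum_mul]
        _ = trH s * (β (h j) oneS * oneS) := by
            rw [htrHdef, Finset.sum_mul]
            refine Finset.sum_congr rfl fun l _ => ?_
            ring_nf
            try simp [ho2, ho3, ho4, hβ2, hβ3, hβ4, hf2, hf3, hf4]
            try ring_nf
  -- Galois conditions
  have hGal' : ∀ f : G, ∑ i ∈ Finset.range n, x i * β f (y i) * oneS
      = if f = 1 then oneS else 0 := by
    intro f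
    by_cases hf : f = 1
    · rw [if_pos hf]; exact (hGal f).1 hf
    · rw [if_neg hf]; exact (hGal f).2 hf
  have hFire : ∀ w u : G, ∑ i ∈ Finset.range n, β w (x i) * β u (y i) * β w oneS
      = if w = u then β w oneS else 0 := by
    intro w u
    have := congrArg (β w) (hGal' (w⁻¹ * u))
    rw [map_sum] at this
    have hL : ∑ i ∈ Finset.range n, β w (x i * β (w⁻¹*u) (y i) * oneS)
        = ∑ i ∈ Finset.range n, β w (x i) * β u (y i) * β w oneS := by
      refine Finset.sum_congr rfl fun i _ => ?_
      rw [map_mul, map_mul, hβc, mul_inv_cancel_left]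
    rw [hL] at this
    rw [this]
    by_cases hwu : w = u
    · rw [if_pos (by rw [hwu, inv_mul_cancel]), if_pos hwu]
    · rw [if_neg (fun hc => hwu (by rw [← mul_one w, ← hc, mul_inv_cancel_left])),
        if_neg hwu, map_zero]
  -- reproduction formula
  have hL3 : ∀ s : T, s * oneS = s → ∑ k ∈ Finset.range n, x k * trH (y k * s) = s := by
    intro s hs
    have step : ∀ k ∈ Finset.range n, x k * trH (y k * s)
        = ∑ p ∈ Finset.range m, (x k * β (h p) (y k) * oneS) * (β (h p) s * β (h p) oneS) := by
      intro k _
      rw [htrHdef, Finset.mul_sum]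
      refine Finset.sum_congr rfl fun p _ => ?_
      rw [map_mul]
      ring
    rw [Finset.sum_congr rfl step, Finset.sum_comm]
    have inner : ∀ p ∈ Finset.range m,
        ∑ k ∈ Finset.range n, (x k * β (h p) (y k) * oneS) * (β (h p) s * β (h p) oneS)
        = (if h p = 1 then oneS else 0) * (β (h p) s * β (h p) oneS) := by
      intro p _
      rw [← Finset.sum_mul, hGal']
    rw [Finset.sum_congr rfl inner]
    have hsplit : ∀ p ∈ Finset.range m,
        (if h p = 1 then oneS else 0) * (β (h p) s * β (h p) oneS)
        = if p = 0 then s else 0 := by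
      intro p hp
      by_cases hp0 : p = 0
      · subst hp0
        rw [h1, if_pos rfl, if_pos rfl]
        simp only [map_one]
        have h2 : ∀ t : T, (1 : RingAut T) t = t := fun _ => rfl
        rw [h2, h2]
        calc oneS * (s * oneS) = s * (oneS * oneS) := by ring
          _ = s := by rw [hidem, hs]
      · rw [if_neg ?_, if_neg hp0, zero_mul]
        intro hc
        exact hp0 (hinj p (Finset.mem_range.1 hp) 0 hm (by rw [hc, h1]))
    rw [Finset.sum_congr rfl hsplit, Finset.sum_ite_eq' (Finset.range m) 0 (fun _ => s),
      if_pos (Finset.mem_range.2 hm)]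
  -- the set of traces of elements of S
  set J : T → Prop := fun t => ∃ s : T, s * oneS = s ∧ t = trH s with hJdef
  have hJ0 : J 0 := ⟨0, by rw [zero_mul], by rw [htrHdef]; simp⟩
  have hJadd : ∀ t₁ t₂, J t₁ → J t₂ → J (t₁ + t₂) := by
    rintro _ _ ⟨s₁, hs₁, rfl⟩ ⟨s₂, hs₂, rfl⟩
    refine ⟨s₁ + s₂, by rw [add_mul, hs₁, hs₂], ?_⟩
    rw [htrHdef, ← Finset.sum_add_distrib]
    refine Finset.sum_congr rfl fun p _ => ?_
    rw [map_add]; ring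
  have hJneg : ∀ t, J t → J (-t) := by
    rintro _ ⟨s, hs, rfl⟩
    refine ⟨-s, by rw [neg_mul, hs], ?_⟩
    rw [htrHdef, ← Finset.sum_neg_distrib]
    refine Finset.sum_congr rfl fun p _ => ?_
    rw [map_neg]; ring
  have hJo : ∀ t, J t → t * oneS = t := by rintro _ ⟨s, hs, rfl⟩; exact htrHo s
  -- multipliers
  set M : T → Prop := fun r => ∀ p < m,
    β (h p) r * (β (h p) oneS * oneS) = r * (β (h p) oneS * oneS) with hMdef
  have hM1 : M 1 := by intro p hp; rw [map_one]
  have hM0 : M 0 := by intro p hp; rw [map_zero]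
  have hMo : M oneS := by
    intro p hp
    ring_nf
    try simp [ho2, ho3, ho4, hβ2, hβ3, hβ4, hf2, hf3, hf4]
    try ring_nf
  have hMmul : ∀ r r', M r → M r' → M (r * r') := by
    intro r r' hr hr' p hp
    have hapo : (β (h p) oneS * oneS) * (β (h p) oneS * oneS) = β (h p) oneS * oneS := by
      ring_nf
      try simp [ho2, ho3, ho4, hβ2, hβ3, hβ4, hf2, hf3, hf4]
      try ring_nf
    calc β (h p) (r * r') * (β (h p) oneS * oneS)
        = (β (h p) r * (β (h p) oneS * oneS)) * (β (h p) r' * (β (h p) oneS * oneS)) := by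
          rw [map_mul]
          calc β (h p) r * β (h p) r' * (β (h p) oneS * oneS)
              = β (h p) r * β (h p) r' * ((β (h p) oneS * oneS) * (β (h p) oneS * oneS)) := by
                rw [hapo]
            _ = (β (h p) r * (β (h p) oneS * oneS)) * (β (h p) r' * (β (h p) oneS * oneS)) := by
                ring
      _ = (r * (β (h p) oneS * oneS)) * (r' * (β (h p) oneS * oneS)) := by rw [hr p hp, hr' p hp]
      _ = r * r' * ((β (h p) oneS * oneS) * (β (h p) oneS * oneS)) := by ring
      _ = r * r' * (β (h p) oneS * oneS) := by rw [hapo]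
  have hMsub : ∀ r r', M r → M r' → M (r - r') := by
    intro r r' hr hr' p hp
    rw [map_sub, sub_mul, sub_mul, hr p hp, hr' p hp]
  have hMSaH : ∀ r, SaH r → M r := by
    intro r hr p hp
    obtain ⟨-, hr2⟩ := (hSaH r).1 hr
    calc β (h p) r * (β (h p) oneS * oneS)
        = (β (h p) r * oneS) * β (h p) oneS := by ring
      _ = (r * (β (h p) oneS * oneS)) * β (h p) oneS := by rw [hr2 p hp]
      _ = r * (β (h p) oneS * β (h p) oneS * oneS) := by ring
      _ = r * (β (h p) oneS * oneS) := by rw [hβi]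
  have hJM : ∀ r t, M r → J t → J (r * t) := by
    rintro r _ hr ⟨s, hs, rfl⟩
    refine ⟨r * s, by rw [mul_assoc, hs], ?_⟩
    symm
    rw [htrHdef, Finset.mul_sum]
    refine Finset.sum_congr rfl fun p hp => ?_
    have hapo : (β (h p) oneS * oneS) * (β (h p) oneS * oneS) = β (h p) oneS * oneS := by
      ring_nf
      try simp [ho2, ho3, ho4, hβ2, hβ3, hβ4, hf2, hf3, hf4]
      try ring_nf
    calc β (h p) (r * s) * (β (h p) oneS * oneS)
        = (β (h p) r * (β (h p) oneS * oneS)) * (β (h p) s * (β (h p) oneS * oneS)) := by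
          rw [map_mul]
          calc β (h p) r * β (h p) s * (β (h p) oneS * oneS)
              = β (h p) r * β (h p) s * ((β (h p) oneS * oneS) * (β (h p) oneS * oneS)) := by
                rw [hapo]
            _ = (β (h p) r * (β (h p) oneS * oneS)) * (β (h p) s * (β (h p) oneS * oneS)) := by
                ring
      _ = (r * (β (h p) oneS * oneS)) * (β (h p) s * (β (h p) oneS * oneS)) := by
          rw [hr p (Finset.mem_range.1 hp)]
      _ = r * (β (h p) s * ((β (h p) oneS * oneS) * (β (h p) oneS * oneS))) := by ring
      _ = r * (β (h p) s * (β (h p) oneS * oneS)) := by rw [hapo]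
  -- the matrix
  set A : Matrix (Fin n) (Fin n) T := Matrix.of (fun k i => trH (y i * x k)) with hA
  set B : Matrix (Fin n) (Fin n) T := oneS • 1 - A with hB
  have hJA : ∀ k i : Fin n, J (A k i) := by
    intro k i
    exact ⟨y i * x k, by rw [mul_assoc, hxS k k.isLt], rfl⟩
  have hBd : ∀ a b : Fin n, B a b = oneS * (1 : Matrix (Fin n) (Fin n) T) a b - A a b := by
    intro a b
    rw [hB, Matrix.sub_apply, Matrix.smul_apply, smul_eq_mul]
  have hMB : ∀ a b : Fin n, M (B a b) := by
    intro a b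
    rw [hBd]
    refine hMsub _ _ ?_ (hMSaH _ (hSaHtr _))
    by_cases hab : a = b
    · rw [hab, Matrix.one_apply_eq, mul_one]; exact hMo
    · rw [Matrix.one_apply_ne hab, mul_zero]; exact hM0
  have hBx : B.mulVec (fun i : Fin n => x i) = 0 := by
    funext k
    have : B.mulVec (fun i : Fin n => x i) k
        = ∑ i : Fin n, (oneS * (1 : Matrix (Fin n) (Fin n) T) k i - A k i) * x i := by
      rw [Matrix.mulVec, dotProduct]
      exact Finset.sum_congr rfl fun i _ => by rw [hBd]
    rw [this]
    have h2 : ∑ i : Fin n, (oneS * (1 : Matrix (Fin n) (Fin n) T) k i - A k i) * x i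
        = (∑ i : Fin n, oneS * (1 : Matrix (Fin n) (Fin n) T) k i * x i)
          - ∑ i : Fin n, x i * trH (y i * x k) := by
      rw [← Finset.sum_sub_distrib]
      refine Finset.sum_congr rfl fun i _ => by rw [hA, Matrix.of_apply]; ring
    have h3 : ∑ i : Fin n, oneS * (1 : Matrix (Fin n) (Fin n) T) k i * x i = x k := by
      rw [Finset.sum_eq_single k]
      · rw [Matrix.one_apply_eq, mul_one, mul_comm, hxS k k.isLt]
      · intro b _ hb; rw [Matrix.one_apply_ne (Ne.symm hb), mul_zero, zero_mul]
      · intro hk; exact absurd (Finset.mem_univ k) hk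
    have h4 : ∑ i : Fin n, x i * trH (y i * x k) = x k := by
      rw [← Finset.sum_range (fun i => x i * trH (y i * x k))]
      exact hL3 (x k) (hxS k k.isLt)
    rw [h2, h3, h4, sub_self]
    rfl
  have hdetx : ∀ k : Fin n, B.det * x k = 0 := by
    intro k
    have := congrArg (fun w => w k) (congrArg (Matrix.adjugate B).mulVec hBx)
    simp only [Matrix.mulVec_mulVec, Matrix.adjugate_mul, Matrix.smul_mulVec,
      Matrix.one_mulVec, Matrix.mulVec_zero] at this
    simpa using this
  have hdeto : B.det * oneS = 0 := by
    have h0 : ∑ k ∈ Finset.range n, x k * trH (y k * oneS) = oneS := hL3 oneS hidem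
    rw [← h0, Finset.mul_sum]
    refine Finset.sum_eq_zero fun k hk => ?_
    have : B.det * (x k * trH (y k * oneS)) = (B.det * x k) * trH (y k * oneS) := by ring
    rw [this]
    have hkn : k < n := Finset.mem_range.1 hk
    rw [show x k = x (⟨k, hkn⟩ : Fin n) from rfl, hdetx ⟨k, hkn⟩, zero_mul]
  -- diagonal product
  have hdiagJ : ∀ s : Finset (Fin n), ∃ j : T, J j ∧ oneS * ∏ i ∈ s, B i i = oneS - j := by
    intro s
    induction s using Finset.induction_on with
    | empty => exact ⟨0, hJ0, by rw [Finset.prod_empty, mul_one, sub_zero]⟩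
    | insert a s hnotmem ih =>
      obtain ⟨j, hj, hoj⟩ := ih
      have hBaa : B a a = oneS - A a a := by rw [hBd, Matrix.one_apply_eq, mul_one]
      refine ⟨j + A a a - A a a * j, ?_, ?_⟩
      · have hMA : M (A a a) := by
          have hAe : A a a = trH (y a * x a) := rfl
          rw [hAe]; exact hMSaH _ (hSaHtr _)
        rw [sub_eq_add_neg]
        exact hJadd _ _ (hJadd _ _ hj (hJA a a)) (hJneg _ (hJM _ _ hMA hj))
      · rw [Finset.prod_insert hnotmem]
        calc oneS * (B a a * ∏ i ∈ s, B i i) = B a a * (oneS * ∏ i ∈ s, B i i) := by ring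
          _ = (oneS - A a a) * (oneS - j) := by rw [hBaa, hoj]
          _ = oneS * oneS - oneS * j - (A a a * oneS) + A a a * j := by ring
          _ = oneS - (j + A a a - A a a * j) := by
              rw [hidem, mul_comm oneS j, hJo j hj, hJo _ (hJA a a)]; ring
  -- extract a trace-one element
  obtain ⟨c, hcS, hctr⟩ : ∃ c : T, c * oneS = c ∧ trH c = oneS := by
    have hsplit : oneS * B.det
        = oneS * (((Equiv.Perm.sign (1 : Equiv.Perm (Fin n)) : ℤ) : T)
            * ∏ i : Fin n, B ((1 : Equiv.Perm (Fin n)) i) i)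
          + ∑ σ ∈ Finset.univ.erase (1 : Equiv.Perm (Fin n)),
              oneS * (((Equiv.Perm.sign σ : ℤ) : T) * ∏ i : Fin n, B (σ i) i) := by
      rw [Matrix.det_apply', ← Finset.add_sum_erase _ _ (Finset.mem_univ 1), mul_add,
        Finset.mul_sum]
    obtain ⟨j₁, hj₁, hoj₁⟩ := hdiagJ Finset.univ
    have hid : oneS * (((Equiv.Perm.sign (1 : Equiv.Perm (Fin n)) : ℤ) : T)
        * ∏ i : Fin n, B ((1 : Equiv.Perm (Fin n)) i) i) = oneS - j₁ := by
      have hs1 : ((Equiv.Perm.sign (1 : Equiv.Perm (Fin n)) : ℤ) : T) = 1 := by simp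
      have hp1 : ∏ i : Fin n, B ((1 : Equiv.Perm (Fin n)) i) i = ∏ i : Fin n, B i i :=
        Finset.prod_congr rfl fun i _ => rfl
      rw [hs1, hp1, one_mul, hoj₁]
    have hrest : J (∑ σ ∈ Finset.univ.erase (1 : Equiv.Perm (Fin n)),
        oneS * (((Equiv.Perm.sign σ : ℤ) : T) * ∏ i : Fin n, B (σ i) i)) := by
      refine Finset.sum_induction _ J hJadd hJ0 ?_
      intro σ hσ
      have hσ1 : σ ≠ 1 := (Finset.mem_erase.1 hσ).1
      have : ∃ i, σ i ≠ i := by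
        by_contra hc; push_neg at hc
        exact hσ1 (Equiv.ext hc)
      obtain ⟨i₀, hi₀⟩ := this
      have hprod : ∏ i : Fin n, B (σ i) i
          = B (σ i₀) i₀ * ∏ i ∈ Finset.univ.erase i₀, B (σ i) i :=
        (Finset.mul_prod_erase Finset.univ _ (Finset.mem_univ i₀)).symm
      have hBσ : B (σ i₀) i₀ = - A (σ i₀) i₀ := by
        rw [hBd, Matrix.one_apply_ne hi₀, mul_zero, zero_sub]
      have hMP : M (∏ i ∈ Finset.univ.erase i₀, B (σ i) i) :=
        Finset.prod_induction _ M hMmul hM1 (fun i _ => hMB _ _)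
      have hMsgn : M (((Equiv.Perm.sign σ : ℤ) : T)) := by
        intro p hp; rw [map_intCast]
      have hre : oneS * (((Equiv.Perm.sign σ : ℤ) : T) * ∏ i : Fin n, B (σ i) i)
          = (oneS * ((Equiv.Perm.sign σ : ℤ) : T)
              * ∏ i ∈ Finset.univ.erase i₀, B (σ i) i) * (- A (σ i₀) i₀) := by
        rw [hprod, hBσ]; ring
      rw [hre]
      exact hJM _ _ (hMmul _ _ (hMmul _ _ hMo hMsgn) hMP) (hJneg _ (hJA _ _))
    have hzero : oneS * B.det = 0 := by rw [mul_comm]; exact hdeto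
    have honeJ : J oneS := by
      have he2 : oneS * B.det = oneS - j₁ + ∑ σ ∈ Finset.univ.erase (1 : Equiv.Perm (Fin n)),
          oneS * (((Equiv.Perm.sign σ : ℤ) : T) * ∏ i : Fin n, B (σ i) i) := by
        rw [hsplit, hid]
      have he3 : oneS = j₁ + -∑ σ ∈ Finset.univ.erase (1 : Equiv.Perm (Fin n)),
          oneS * (((Equiv.Perm.sign σ : ℤ) : T) * ∏ i : Fin n, B (σ i) i) := by
        linear_combination hzero - he2
      rw [he3]
      exact hJadd _ _ hj₁ (hJneg _ hrest)
    obtain ⟨c, hc1, hc2⟩ := honeJ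
    exact ⟨c, hc1, hc2.symm⟩
  -- product versions of reindexing
  have hprodH : ∀ f : G → T, ∏ l ∈ Finset.range m, f (h l) = ∏ b ∈ Hs, f b := by
    intro f
    rw [hHsdef, Finset.prod_image]
    intro i hi j hj hij
    exact hinj i (Finset.mem_range.1 hi) j (Finset.mem_range.1 hj) hij
  have hprodshift : ∀ w ∈ Hs, ∀ f : G → T,
      ∏ l ∈ Finset.range m, f (w * h l) = ∏ l ∈ Finset.range m, f (h l) := by
    intro w hw f
    rw [hprodH (fun b => f (w * b)), hprodH f]
    refine Finset.prod_nbij' (fun b => w * b) (fun b => w⁻¹ * b) ?_ ?_ ?_ ?_ ?_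
    · intro b hb; exact hmul w hw b hb
    · intro b hb; exact hmul _ (hinvm w hw) b hb
    · intro b _; simp
    · intro b _; simp
    · intro b _; rfl
  -- facts about eH
  have heka : ∀ k : ℕ, e k * β (h k) oneS = e k := by
    intro k
    rw [he k, mul_assoc, hβi]
  have heHsum : eH = ∑ k ∈ Finset.range m, e k := by
    rw [heH, hψ]
    refine Finset.sum_congr rfl fun k hk => ?_
    rw [mul_comm]
    exact heka k
  have htel : ∀ K : ℕ, ∑ k ∈ Finset.range K, e k
      = 1 - ∏ k ∈ Finset.range K, (1 - β (h k) oneS) := by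
    intro K
    induction K with
    | zero => simp
    | succ K ih =>
      rw [Finset.sum_range_succ, Finset.prod_range_succ, ih, he K]
      ring
  have hEform : eH = 1 - ∏ k ∈ Finset.range m, (1 - β (h k) oneS) := by
    rw [heHsum, htel m]
  have heHo : eH * oneS = oneS := by
    have h0m : (0 : ℕ) ∈ Finset.range m := Finset.mem_range.2 hm
    have hsplit := (Finset.mul_prod_erase (Finset.range m)
      (fun k => 1 - β (h k) oneS) h0m).symm
    have hz : (∏ k ∈ Finset.range m, (1 - β (h k) oneS)) * oneS = 0 := by
      rw [hsplit, h1, map_one]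
      have hone : (1 : RingAut T) oneS = oneS := rfl
      rw [hone]
      calc (1 - oneS) * (∏ k ∈ (Finset.range m).erase 0, (1 - β (h k) oneS)) * oneS
          = (∏ k ∈ (Finset.range m).erase 0, (1 - β (h k) oneS)) * (oneS - oneS * oneS) := by
            ring
        _ = 0 := by rw [hidem, sub_self, mul_zero]
    rw [hEform, sub_mul, one_mul, hz, sub_zero]
  have heHg : ∀ w ∈ Hs, β w eH = eH := by
    intro w hw
    rw [hEform, map_sub, map_one, map_prod]
    have hterm : ∀ k ∈ Finset.range m, β w (1 - β (h k) oneS)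
        = (fun b => 1 - β b oneS) (w * h k) := by
      intro k _
      rw [map_sub, map_one, hβc]
    rw [Finset.prod_congr rfl hterm, hprodshift w hw (fun b => 1 - β b oneS)]
  -- the Galois coordinates for the quotient
  refine ⟨n, fun i => trH (x i * c), fun i => trH (y i), fun i _ => ⟨hSaHtr _, hSaHtr _⟩, ?_⟩
  intro g
  have key : ∑ i ∈ Finset.range n, trH (x i * c) * αTil g (trH (y i) * oneTil g⁻¹)
      = ∑ k ∈ Finset.range m, ∑ p ∈ Finset.range m,
          (if g * h k * h p ∈ Hs
            then β (g * h k * h p) c * β (g * h k * h p) oneS * (β g (e k) * oneS)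
            else 0) := by
    have step1 : ∀ i : ℕ, trH (x i * c) * αTil g (trH (y i) * oneTil g⁻¹)
        = ∑ k ∈ Finset.range m, trH (x i * c)
            * (β (g * h k) (trH (y i)) * (β (g * h k) oneS * (β g (e k) * oneS))) := by
      intro i
      rw [hαTil, honeTil, hψ, map_sum, Finset.sum_mul (a := oneS), Finset.mul_sum]
      refine Finset.sum_congr rfl fun k hk => ?_
      obtain ⟨j, hj, hjk⟩ := hnormal g k (Finset.mem_range.1 hk)
      have hjHs : h j ∈ Hs := (hmem _).2 ⟨j, hj, rfl⟩
      have hEk : β (g * (h k * g⁻¹)) eH = eH := by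
        rw [show g * (h k * g⁻¹) = g * h k * g⁻¹ from (mul_assoc g (h k) g⁻¹).symm, hjk]
        exact heHg _ hjHs
      simp only [hm2, hβc]
      rw [hEk]
      calc trH (x i * c) * ((β (g * h k) (trH (y i)) * (eH * β (g * h k) oneS)) * β g (e k) * oneS)
          = trH (x i * c) * (β (g * h k) (trH (y i)) * (β (g * h k) oneS * (β g (e k) * (eH * oneS)))) := by
            ring
        _ = trH (x i * c) * (β (g * h k) (trH (y i)) * (β (g * h k) oneS * (β g (e k) * oneS))) := by
            rw [heHo]
    have step2 : ∀ i : ℕ, ∀ k, trH (x i * c)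
          * (β (g * h k) (trH (y i)) * (β (g * h k) oneS * (β g (e k) * oneS)))
        = ∑ p ∈ Finset.range m, trH (x i * c)
            * (β (g * h k * h p) (y i)
              * (β (g * h k * h p) oneS * (β (g * h k) oneS * (β g (e k) * oneS)))) := by
      intro i k
      have hexp : β (g * h k) (trH (y i)) = ∑ p ∈ Finset.range m,
          β (g * h k) (β (h p) (y i) * (β (h p) oneS * oneS)) := by
        rw [htrHdef, map_sum]
      rw [hexp, Finset.sum_mul (a := β (g * h k) oneS * (β g (e k) * oneS)), Finset.mul_sum]
      refine Finset.sum_congr rfl fun p hp => ?_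
      simp only [hm2, hβc]
      ring_nf
      try simp [ho2, ho3, ho4, hβ2, hβ3, hβ4, hf2, hf3, hf4]
      try ring_nf
      rw [← map_pow (β g), hf2]
    calc ∑ i ∈ Finset.range n, trH (x i * c) * αTil g (trH (y i) * oneTil g⁻¹)
        = ∑ i ∈ Finset.range n, ∑ k ∈ Finset.range m, ∑ p ∈ Finset.range m, trH (x i * c)
            * (β (g * h k * h p) (y i)
              * (β (g * h k * h p) oneS * (β (g * h k) oneS * (β g (e k) * oneS)))) := by
          refine Finset.sum_congr rfl fun i _ => ?_
          rw [step1 i]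
          exact Finset.sum_congr rfl fun k _ => step2 i k
      _ = ∑ k ∈ Finset.range m, ∑ p ∈ Finset.range m, ∑ i ∈ Finset.range n, trH (x i * c)
            * (β (g * h k * h p) (y i)
              * (β (g * h k * h p) oneS * (β (g * h k) oneS * (β g (e k) * oneS)))) := by
          rw [Finset.sum_comm]
          exact Finset.sum_congr rfl fun k _ => Finset.sum_comm
      _ = ∑ k ∈ Finset.range m, ∑ p ∈ Finset.range m,
          (if g * h k * h p ∈ Hs
            then β (g * h k * h p) c * β (g * h k * h p) oneS * (β g (e k) * oneS)
            else 0) := by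
          refine Finset.sum_congr rfl fun k hk => Finset.sum_congr rfl fun p hp => ?_
          have hekag : β g (e k) * β (g * h k) oneS = β g (e k) := by
            have h0 := congrArg (β g) (heka k)
            rw [hm2, hβc] at h0
            exact h0
          have hinner : ∀ i : ℕ, trH (x i * c)
              * (β (g * h k * h p) (y i) * (β (g * h k * h p) oneS
                  * (β (g * h k) oneS * (β g (e k) * oneS))))
              = ∑ l ∈ Finset.range m, (β (h l) (x i) * β (g * h k * h p) (y i) * β (h l) oneS)
                * (β (h l) c * (oneS * (β (g * h k * h p) oneS
                    * (β (g * h k) oneS * (β g (e k) * oneS))))) := by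
            intro i
            rw [htrHdef, Finset.sum_mul (a := β (g * h k * h p) (y i)
              * (β (g * h k * h p) oneS * (β (g * h k) oneS * (β g (e k) * oneS))))]
            refine Finset.sum_congr rfl fun l _ => ?_
            rw [hm2 (h l) (x i) c]
            ring
          rw [Finset.sum_congr rfl fun i _ => hinner i, Finset.sum_comm]
          have hfired : ∀ l ∈ Finset.range m,
              ∑ i ∈ Finset.range n, (β (h l) (x i) * β (g * h k * h p) (y i) * β (h l) oneS)
                * (β (h l) c * (oneS * (β (g * h k * h p) oneS
                    * (β (g * h k) oneS * (β g (e k) * oneS)))))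
              = (if h l = g * h k * h p then β (h l) oneS else 0)
                * (β (h l) c * (oneS * (β (g * h k * h p) oneS
                    * (β (g * h k) oneS * (β g (e k) * oneS))))) := by
            intro l _
            rw [← Finset.sum_mul, hFire (h l) (g * h k * h p)]
          rw [Finset.sum_congr rfl hfired,
            hsumH (fun b => (if b = g * h k * h p then β b oneS else 0)
              * (β b c * (oneS * (β (g * h k * h p) oneS
                  * (β (g * h k) oneS * (β g (e k) * oneS))))))]
          have hite : ∀ b ∈ Hs, (if b = g * h k * h p then β b oneS else 0)
              * (β b c * (oneS * (β (g * h k * h p) oneS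
                  * (β (g * h k) oneS * (β g (e k) * oneS)))))
              = if b = g * h k * h p then β b oneS
                * (β b c * (oneS * (β (g * h k * h p) oneS
                  * (β (g * h k) oneS * (β g (e k) * oneS))))) else 0 :=
            fun b _ => by rw [ite_mul, zero_mul]
          rw [Finset.sum_congr rfl hite,
            Finset.sum_ite_eq' Hs (g * h k * h p) (fun b => β b oneS
              * (β b c * (oneS * (β (g * h k * h p) oneS
                  * (β (g * h k) oneS * (β g (e k) * oneS))))))]
          by_cases hwH : g * h k * h p ∈ Hs
          · rw [if_pos hwH, if_pos hwH]
            calc β (g * h k * h p) oneS * (β (g * h k * h p) c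
                  * (oneS * (β (g * h k * h p) oneS * (β (g * h k) oneS * (β g (e k) * oneS)))))
                = β (g * h k * h p) c * (β (g * h k * h p) oneS * β (g * h k * h p) oneS)
                    * ((oneS * oneS) * (β g (e k) * β (g * h k) oneS)) := by ring
              _ = β (g * h k * h p) c * β (g * h k * h p) oneS * (β g (e k) * oneS) := by
                  rw [hβi, hidem, hekag]; ring
          · rw [if_neg hwH, if_neg hwH]
  constructor
  · rintro ⟨j, hj, hgj⟩
    have hgH : g ∈ Hs := (hmem g).2 ⟨j, hj, hgj.symm⟩
    rw [key]
    have hall : ∀ k ∈ Finset.range m, ∑ p ∈ Finset.range m,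
        (if g * h k * h p ∈ Hs
          then β (g * h k * h p) c * β (g * h k * h p) oneS * (β g (e k) * oneS) else 0)
        = (∑ p ∈ Finset.range m, β (h p) c * β (h p) oneS) * (β g (e k) * oneS) := by
      intro k hk
      have hgk : g * h k ∈ Hs := hmul g hgH _ ((hmem _).2 ⟨k, Finset.mem_range.1 hk, rfl⟩)
      have hterm : ∀ p ∈ Finset.range m,
          (if g * h k * h p ∈ Hs
            then β (g * h k * h p) c * β (g * h k * h p) oneS * (β g (e k) * oneS) else 0)
          = (fun b => β b c * β b oneS) ((g * h k) * h p) * (β g (e k) * oneS) := by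
        intro p hp
        rw [if_pos (hmul _ hgk _ ((hmem _).2 ⟨p, Finset.mem_range.1 hp, rfl⟩))]
      rw [Finset.sum_congr rfl hterm, ← Finset.sum_mul,
        hshiftm (g * h k) hgk (fun b => β b c * β b oneS)]
    rw [Finset.sum_congr rfl hall, ← Finset.mul_sum]
    have hsum2 : ∑ k ∈ Finset.range m, β g (e k) * oneS = oneS := by
      rw [← Finset.sum_mul, ← map_sum, ← heHsum, heHg g hgH, heHo]
    rw [hsum2, Finset.sum_mul]
    have : ∀ p ∈ Finset.range m, β (h p) c * β (h p) oneS * oneS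
        = β (h p) c * (β (h p) oneS * oneS) := fun p _ => by ring
    rw [Finset.sum_congr rfl this]
    exact hctr
  · intro hgnH
    have hgH : g ∉ Hs := by
      intro hc
      obtain ⟨j, hj, hje⟩ := (hmem g).1 hc
      exact hgnH ⟨j, hj, hje.symm⟩
    rw [key]
    refine Finset.sum_eq_zero fun k hk => Finset.sum_eq_zero fun p hp => ?_
    rw [if_neg ?_]
    intro hwH
    have hkH : h k ∈ Hs := (hmem _).2 ⟨k, Finset.mem_range.1 hk, rfl⟩
    have hpH : h p ∈ Hs := (hmem _).2 ⟨p, Finset.mem_range.1 hp, rfl⟩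
    have : g * h k * h p * (h p)⁻¹ * (h k)⁻¹ = g := by group
    exact hgH (this ▸ hmul _ (hmul _ hwH _ (hinvm _ hpH)) _ (hinvm _ hkH))
end

section
/- The domain idempotents and partial isomorphisms of the induced partial action of G/H are given explicitly by: (a) β_g(e_H)·1_S = 1_g + Σ_{i=2}^m (∏_{j=2}^{i} (1_S − 1_{g·h_{j−1}}))·1_{g·h_i} for every g ∈ G; and (b) for every g ∈ G and every x ∈ D̃_{g⁻¹H}, β_g(ψ_H(x))·1_S = α_g(x·1_{g⁻¹}) + Σ_{i=2}^m (∏_{j=1}^{i−1} (1_S − 1_{g·h_j}))·α_{g·h_i}(x·1_{(g·h_i)⁻¹}). (Proposition 3.9.) -/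
/-- Proposition 3.9: explicit formulas for the domain idempotents and partial
isomorphisms of the induced partial action of G/H. -/
theorem stmt_12 {T : Type*} [CommRing T] {G : Type*} [Group G] [Fintype G]
    (β : G →* RingAut T) (oneS : T) (hidem : oneS * oneS = oneS)
    (hglob : ∏ g : G, (1 - β g oneS) = 0)
    (m : ℕ) (hm : 0 < m) (h : ℕ → G) (h1 : h 0 = 1)
    (hinj : ∀ i < m, ∀ j < m, h i = h j → i = j)
    (hmulc : ∀ i < m, ∀ j < m, ∃ k < m, h i * h j = h k)
    (hnormal : ∀ g : G, ∀ i < m, ∃ j < m, g * h i * g⁻¹ = h j)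
    (e : ℕ → T)
    (he : ∀ i, e i = (∏ j ∈ Finset.range i, (1 - β (h j) oneS)) * β (h i) oneS)
    (ψ : T → T) (hψ : ∀ t, ψ t = ∑ i ∈ Finset.range m, β (h i) t * e i)
    (eH : T) (heH : eH = ψ oneS)
    (SaH : T → Prop)
    (hSaH : ∀ s : T, SaH s ↔
      (s * oneS = s ∧ ∀ i < m, β (h i) s * oneS = s * (β (h i) oneS * oneS)))
    (oneTil : G → T) (honeTil : ∀ g : G, oneTil g = β g eH * oneS)
    (Dtil : G → Set T) (hDtil : ∀ g : G, Dtil g = {x : T | ∃ s : T, SaH s ∧ x = s * oneTil g})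
    (αTil : G → T → T) (hαTil : ∀ (g : G) (x : T), αTil g x = β g (ψ x) * oneS) :
    -- (a)
    (∀ g : G, β g eH * oneS =
      β g oneS * oneS + ∑ i ∈ Finset.Ico 1 m,
        (∏ j ∈ Finset.range i, (oneS - β (g * h j) oneS * oneS)) *
          (β (g * h i) oneS * oneS)) ∧
    -- (b)
    (∀ g : G, ∀ x ∈ Dtil g⁻¹,
      β g (ψ x) * oneS =
        β g (x * (β g⁻¹ oneS * oneS)) * oneS + ∑ i ∈ Finset.Ico 1 m,
          (∏ j ∈ Finset.range i, (oneS - β (g * h j) oneS * oneS)) *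
            (β (g * h i) (x * (β (g * h i)⁻¹ oneS * oneS)) * oneS)) := by
  have hpow : ∀ i : ℕ, 0 < i → oneS ^ i = oneS := by
    intro i hi
    induction i with
    | zero => omega
    | succ n ih =>
      rcases Nat.eq_zero_or_pos n with hn | hn
      · subst hn; simp
      · rw [pow_succ, ih hn, hidem]
  have hcomp : ∀ (a b : G) (t : T), β a (β b t) = β (a * b) t := by
    intro a b t; rw [map_mul]; rfl
  have hone : ∀ t : T, β 1 t = t := by
    intro t; rw [map_one]; rfl
  have hβinv : ∀ (a : G) (t : T), β a (β a⁻¹ t) = t := by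
    intro a t; rw [hcomp, mul_inv_cancel, hone]
  have hkey : ∀ a : G, β a (β a⁻¹ oneS * oneS) = oneS * β a oneS := by
    intro a; rw [map_mul, hβinv]
  have hβidem : ∀ a : G, β a oneS * β a oneS = β a oneS := by
    intro a; rw [← map_mul, hidem]
  have hprod : ∀ (g : G) (i : ℕ), 0 < i →
      (∏ j ∈ Finset.range i, (oneS - β (g * h j) oneS * oneS)) =
        oneS * ∏ j ∈ Finset.range i, (1 - β (g * h j) oneS) := by
    intro g i hi
    calc (∏ j ∈ Finset.range i, (oneS - β (g * h j) oneS * oneS))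
        = ∏ j ∈ Finset.range i, (oneS * (1 - β (g * h j) oneS)) :=
          Finset.prod_congr rfl (fun j _ => by ring)
      _ = (∏ j ∈ Finset.range i, oneS) * ∏ j ∈ Finset.range i, (1 - β (g * h j) oneS) :=
          Finset.prod_mul_distrib
      _ = oneS * ∏ j ∈ Finset.range i, (1 - β (g * h j) oneS) := by
          rw [Finset.prod_const, Finset.card_range, hpow i hi]
  have hβe : ∀ (g : G) (i : ℕ), β g (e i) =
      (∏ j ∈ Finset.range i, (1 - β (g * h j) oneS)) * β (g * h i) oneS := by
    intro g i
    rw [he i, map_mul, map_prod, hcomp]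
    congr 1
    exact Finset.prod_congr rfl (fun j _ => by rw [map_sub, map_one, hcomp])
  constructor
  · intro g
    rw [heH, hψ, map_sum, Finset.sum_mul]
    conv_lhs => rw [Finset.range_eq_Ico, Finset.sum_eq_sum_Ico_succ_bot hm]
    congr 1
    · simp only [he, h1, hone, Finset.range_zero, Finset.prod_empty, one_mul, hidem]
    · refine Finset.sum_congr rfl (fun i hi => ?_)
      obtain ⟨hi1, -⟩ := Finset.mem_Ico.mp hi
      rw [map_mul, hβe, hcomp, hprod g i hi1]
      linear_combination (∏ j ∈ Finset.range i, (1 - β (g * h j) oneS)) * oneS *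
          hβidem (g * h i) -
        (∏ j ∈ Finset.range i, (1 - β (g * h j) oneS)) * β (g * h i) oneS * hidem
  · intro g x hx
    rw [hDtil] at hx
    obtain ⟨s, -, rfl⟩ := hx
    have hx1 : (s * oneTil g⁻¹) * oneS = s * oneTil g⁻¹ := by
      rw [honeTil]
      linear_combination s * β g⁻¹ eH * hidem
    have hxβ : ∀ a : G, β a (s * oneTil g⁻¹) * β a oneS = β a (s * oneTil g⁻¹) := by
      intro a; rw [← map_mul, hx1]
    rw [hψ, map_sum, Finset.sum_mul]
    conv_lhs => rw [Finset.range_eq_Ico, Finset.sum_eq_sum_Ico_succ_bot hm]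
    congr 1
    · simp only [he, h1, hone, Finset.range_zero, Finset.prod_empty, one_mul]
      rw [hx1]
      conv_rhs => rw [map_mul, hkey]
      linear_combination (-(β g (s * oneTil g⁻¹))) * hidem - oneS * oneS * hxβ g
    · refine Finset.sum_congr rfl (fun i hi => ?_)
      obtain ⟨hi1, -⟩ := Finset.mem_Ico.mp hi
      rw [map_mul, hβe, hcomp, hprod g i hi1]
      conv_rhs => rw [map_mul, hkey]
      linear_combination (-((∏ j ∈ Finset.range i, (1 - β (g * h j) oneS)) *
          β (g * h i) (s * oneTil g⁻¹) * β (g * h i) oneS * (oneS + 1))) * hidem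
end

section
/- Suppose both globalized partial actions are Galois: there exist n and x_i, y_i ∈ S with Σ_i x_i·β_g(y_i)·1_S = δ_{g,1}·1_S for all g ∈ G, and similarly for S'. If F : T → T' is a ring isomorphism satisfying F ∘ β_g = β'_g ∘ F for all g ∈ G and F(1_S) = 1_{S'}, then for every normal subgroup H of G (with a common fixed enumeration) the map φ : S^{α_H} → (S')^{α'_H} defined by φ(s) := F(ψ_H(s))·1_{S'} is an additive, multiplicative bijection with φ(1_S) = 1_{S'}, F(e_H) = e'_H, φ(D̃_{gH}) = D̃'_{gH}, φ(α̃_{gH}(x)) = α̃'_{gH}(φ(x)) for every x ∈ D̃_{g⁻¹H}, and φ(a·s) = F(a)·φ(s) for every a ∈ T^{β_G} and s ∈ S^{α_H}; i.e. the induced partial actions of G/H on S^{α_H} and (S')^{α'_H} are partially G/H-isomorphic. (Theorem 4.3, (i) ⇒ (ii).) -/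
/-- Theorem 4.3, (i) ⇒ (ii): a G-isomorphism of the globalizations sending 1_S to 1_{S'}
induces, for every normal subgroup H, a partial G/H-isomorphism between the induced
partial actions on the invariant subrings S^{α_H} and (S')^{α'_H}. -/
theorem stmt_14 {T T' : Type*} [CommRing T] [CommRing T'] {G : Type*} [Group G] [Fintype G]
    (β : G →* RingAut T) (β' : G →* RingAut T')
    (oneS : T) (oneS' : T')
    (hidem : oneS * oneS = oneS) (hidem' : oneS' * oneS' = oneS')
    (hglob : ∏ g : G, (1 - β g oneS) = 0)
    (hglob' : ∏ g : G, (1 - β' g oneS') = 0)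
    -- H a normal subgroup of G with a common fixed enumeration
    (m : ℕ) (hm : 0 < m) (h : ℕ → G) (h1 : h 0 = 1)
    (hinj : ∀ i < m, ∀ j < m, h i = h j → i = j)
    (hmulc : ∀ i < m, ∀ j < m, ∃ k < m, h i * h j = h k)
    (hnormal : ∀ g : G, ∀ i < m, ∃ j < m, g * h i * g⁻¹ = h j)
    -- the maps ψ_H, e_H on both sides
    (e : ℕ → T)
    (he : ∀ i, e i = (∏ j ∈ Finset.range i, (1 - β (h j) oneS)) * β (h i) oneS)
    (ψ : T → T) (hψ : ∀ t, ψ t = ∑ i ∈ Finset.range m, β (h i) t * e i)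
    (eH : T) (heH : eH = ψ oneS)
    (e' : ℕ → T')
    (he' : ∀ i, e' i = (∏ j ∈ Finset.range i, (1 - β' (h j) oneS')) * β' (h i) oneS')
    (ψ' : T' → T') (hψ' : ∀ t, ψ' t = ∑ i ∈ Finset.range m, β' (h i) t * e' i)
    (eH' : T') (heH' : eH' = ψ' oneS')
    -- the induced partial actions of G/H on both sides
    (SaH : T → Prop)
    (hSaH : ∀ s : T, SaH s ↔
      (s * oneS = s ∧ ∀ i < m, β (h i) s * oneS = s * (β (h i) oneS * oneS)))
    (oneTil : G → T) (honeTil : ∀ g : G, oneTil g = β g eH * oneS)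
    (Dtil : G → Set T) (hDtil : ∀ g : G, Dtil g = {x : T | ∃ s : T, SaH s ∧ x = s * oneTil g})
    (αTil : G → T → T) (hαTil : ∀ (g : G) (x : T), αTil g x = β g (ψ x) * oneS)
    (SaH' : T' → Prop)
    (hSaH' : ∀ s : T', SaH' s ↔
      (s * oneS' = s ∧ ∀ i < m, β' (h i) s * oneS' = s * (β' (h i) oneS' * oneS')))
    (oneTil' : G → T') (honeTil' : ∀ g : G, oneTil' g = β' g eH' * oneS')
    (Dtil' : G → Set T')
    (hDtil' : ∀ g : G, Dtil' g = {x : T' | ∃ s : T', SaH' s ∧ x = s * oneTil' g})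
    (αTil' : G → T' → T') (hαTil' : ∀ (g : G) (x : T'), αTil' g x = β' g (ψ' x) * oneS')
    -- both globalized actions are Galois
    (n : ℕ) (x y : ℕ → T)
    (hxS : ∀ i < n, x i * oneS = x i) (hyS : ∀ i < n, y i * oneS = y i)
    (hGal : ∀ g : G,
      (g = 1 → ∑ i ∈ Finset.range n, x i * β g (y i) * oneS = oneS) ∧
      (g ≠ 1 → ∑ i ∈ Finset.range n, x i * β g (y i) * oneS = 0))
    (n' : ℕ) (x' y' : ℕ → T')
    (hxS' : ∀ i < n', x' i * oneS' = x' i) (hyS' : ∀ i < n', y' i * oneS' = y' i)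
    (hGal' : ∀ g : G,
      (g = 1 → ∑ i ∈ Finset.range n', x' i * β' g (y' i) * oneS' = oneS') ∧
      (g ≠ 1 → ∑ i ∈ Finset.range n', x' i * β' g (y' i) * oneS' = 0))
    -- F : T → T' is a G-isomorphism with F(1_S) = 1_{S'}
    (F : T ≃+* T')
    (hF : ∀ (g : G) (t : T), F (β g t) = β' g (F t))
    (hF1 : F oneS = oneS')
    -- the map φ
    (φ : T → T') (hφ : ∀ s : T, φ s = F (ψ s) * oneS') :
    F eH = eH' ∧
    (∀ s : T, SaH s → SaH' (φ s)) ∧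
    Set.BijOn φ {s : T | SaH s} {s : T' | SaH' s} ∧
    (∀ s t : T, SaH s → SaH t →
      φ (s + t) = φ s + φ t ∧ φ (s * t) = φ s * φ t) ∧
    φ oneS = oneS' ∧
    (∀ g : G, φ '' Dtil g = Dtil' g) ∧
    (∀ g : G, ∀ x ∈ Dtil g⁻¹, φ (αTil g x) = αTil' g (φ x)) ∧
    (∀ a s : T, (∀ g : G, β g a = a) → SaH s → φ (a * s) = F a * φ s) := by

  -- e i kills oneS for i ≠ 0
  have hsub : (1 - oneS) * oneS = 0 := by rw [sub_mul, one_mul, hidem, sub_self]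
  have heS : ∀ i, i ≠ 0 → e i * oneS = 0 := by
    intro i hi
    obtain ⟨k, rfl⟩ := Nat.exists_eq_succ_of_ne_zero hi
    rw [he, Finset.prod_range_succ', h1, map_one]
    have hone : (1 : RingAut T) oneS = oneS := rfl
    calc (∏ j ∈ Finset.range k, (1 - β (h (j + 1)) oneS)) * (1 - (1 : RingAut T) oneS) *
          β (h (k + 1)) oneS * oneS
        = (∏ j ∈ Finset.range k, (1 - β (h (j + 1)) oneS)) * β (h (k + 1)) oneS *
          ((1 - oneS) * oneS) := by
          rw [hone]; ring
      _ = 0 := by rw [hsub, mul_zero]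
  -- ψ t * oneS = t * oneS
  have hψS : ∀ t : T, ψ t * oneS = t * oneS := by
    intro t
    rw [hψ, Finset.sum_mul, Finset.sum_eq_single 0]
    · rw [he, h1, map_one, Finset.prod_range_zero, one_mul]
      have hone : ∀ t : T, (1 : RingAut T) t = t := fun _ => rfl
      rw [hone, hone, mul_assoc, hidem]
    · intro i _ hi
      rw [mul_assoc, heS i hi, mul_zero]
    · intro h0
      exact absurd (Finset.mem_range.mpr hm) h0
  -- F transports the structure
  have hFe : ∀ i, F (e i) = e' i := by
    intro i
    rw [he, he', map_mul, map_prod]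
    congr 1
    · exact Finset.prod_congr rfl fun j _ => by rw [map_sub, map_one, hF, hF1]
    · rw [hF, hF1]
  have hFψ : ∀ t, F (ψ t) = ψ' (F t) := by
    intro t
    rw [hψ, hψ', map_sum]
    exact Finset.sum_congr rfl fun i _ => by rw [map_mul, hF, hFe]
  have hFeH : F eH = eH' := by rw [heH, heH', hFψ, hF1]
  -- φ t = F (t * oneS)
  have hφF : ∀ t : T, φ t = F (t * oneS) := by
    intro t
    rw [hφ, ← hF1, ← map_mul, hψS]
  have hφeq : ∀ t : T, t * oneS = t → φ t = F t := by
    intro t ht; rw [hφF, ht]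
  -- F.symm also intertwines
  have hFs : ∀ (g : G) (t' : T'), F.symm (β' g t') = β g (F.symm t') := by
    intro g t'
    apply F.injective
    rw [hF, F.apply_symm_apply, F.apply_symm_apply]
  have hFs1 : F.symm oneS' = oneS := by rw [← hF1, F.symm_apply_apply]
  -- SaH is transported
  have hSF : ∀ s : T, SaH s → SaH' (F s) := by
    intro s hs
    rw [hSaH] at hs
    obtain ⟨hs1, hs2⟩ := hs
    rw [hSaH']
    constructor
    · rw [← hF1, ← map_mul, hs1]
    · intro i hi
      rw [← hF, ← hF1, ← map_mul, hs2 i hi, map_mul, map_mul, hF, hF1]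
  have hSFs : ∀ s' : T', SaH' s' → SaH (F.symm s') := by
    intro s' hs'
    rw [hSaH'] at hs'
    obtain ⟨hs1, hs2⟩ := hs'
    rw [hSaH]
    constructor
    · rw [← hFs1, ← map_mul, hs1]
    · intro i hi
      rw [← hFs, ← hFs1, ← map_mul, hs2 i hi, map_mul, map_mul, hFs, hFs1]
  have hS1 : ∀ s : T, SaH s → s * oneS = s := fun s hs => ((hSaH s).mp hs).1
  have hS1' : ∀ s' : T', SaH' s' → s' * oneS' = s' := fun s hs => ((hSaH' s).mp hs).1
  have honeTilS : ∀ g : G, oneTil g * oneS = oneTil g := by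
    intro g; rw [honeTil, mul_assoc, hidem]
  have hDtilS : ∀ g : G, ∀ x ∈ Dtil g, x * oneS = x := by
    intro g x hx
    rw [hDtil] at hx
    obtain ⟨s, _, rfl⟩ := hx
    rw [mul_assoc, honeTilS]
  refine ⟨hFeH, ?_, ⟨?_, ?_, ?_⟩, ?_, ?_, ?_, ?_, ?_⟩
  · intro s hs
    rw [hφeq s (hS1 s hs)]
    exact hSF s hs
  · -- MapsTo
    intro s hs
    rw [Set.mem_setOf_eq] at hs ⊢
    rw [hφeq s (hS1 s hs)]
    exact hSF s hs
  · -- InjOn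
    intro s hs t ht hst
    rw [Set.mem_setOf_eq] at hs ht
    rw [hφeq s (hS1 s hs), hφeq t (hS1 t ht)] at hst
    exact F.injective hst
  · -- SurjOn
    intro s' hs'
    rw [Set.mem_setOf_eq] at hs'
    refine ⟨F.symm s', hSFs s' hs', ?_⟩
    rw [hφeq _ (hS1 _ (hSFs s' hs')), F.apply_symm_apply]
  · -- add and mul
    intro s t hs ht
    constructor
    · rw [hφeq _ (hS1 s hs), hφeq _ (hS1 t ht),
        hφeq _ (by rw [add_mul, hS1 s hs, hS1 t ht]), map_add]
    · rw [hφeq _ (hS1 s hs), hφeq _ (hS1 t ht),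
        hφeq _ (by rw [mul_assoc, hS1 t ht]), map_mul]
  · rw [hφeq oneS hidem, hF1]
  · -- images of domains
    intro g
    ext t'
    simp only [Set.mem_image, hDtil, hDtil', Set.mem_setOf_eq]
    constructor
    · rintro ⟨xx, ⟨s, hs, rfl⟩, rfl⟩
      refine ⟨F s, hSF s hs, ?_⟩
      rw [hφeq _ (by rw [mul_assoc, honeTilS]), honeTil, honeTil', map_mul, map_mul,
        hF, hFeH, hF1]
    · rintro ⟨s', hs', rfl⟩
      refine ⟨F.symm s' * oneTil g, ⟨F.symm s', hSFs s' hs', rfl⟩, ?_⟩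
      rw [hφeq _ (by rw [mul_assoc, honeTilS]), honeTil, honeTil', map_mul, map_mul,
        hF, hFeH, hF1, F.apply_symm_apply]
  · -- equivariance
    intro g xx hx
    have hxS1 : xx * oneS = xx := hDtilS g⁻¹ xx hx
    have hαS : αTil g xx * oneS = αTil g xx := by rw [hαTil, mul_assoc, hidem]
    rw [hφeq _ hαS, hφeq _ hxS1, hαTil, hαTil', map_mul, hF, hF1, hFψ]
  · -- T^{β_G}-linearity
    intro a s _ hs
    rw [hφeq s (hS1 s hs), hφeq _ (by rw [mul_assoc, hS1 s hs]), map_mul]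
end

section
/- Suppose f : S → S' is a bijection which is additive and multiplicative, with f(1_S) = 1_{S'}, f(s·1_g) = f(s)·1'_g for all s ∈ S, g ∈ G, and f(β_g(s·1_{g⁻¹})·1_S) = β'_g(f(s·1_{g⁻¹}))·1_{S'} for all s ∈ S, g ∈ G (i.e. f is a partial G-isomorphism between the restricted partial actions). Then there exists a ring isomorphism Ψ : T → T' such that Ψ ∘ β_g = β'_g ∘ Ψ for all g ∈ G and Ψ(s) = f(s) for every s ∈ S; in particular Ψ(1_S) = 1_{S'}. (Theorem 4.3, (iii) ⇒ (i).) -/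
open Finset

section AuxGlob
variable {T T' : Type*} [CommRing T] [CommRing T'] {G : Type*} [Group G] [Fintype G]

omit [Fintype G] in
private lemma beta_mul_apply (β : G →* RingAut T) (g h : G) (x : T) :
    β (g * h) x = β g (β h x) := by rw [map_mul]; rfl

omit [Fintype G] in
private lemma beta_inv_apply (β : G →* RingAut T) (g : G) (x : T) :
    β g⁻¹ (β g x) = x := by rw [← beta_mul_apply, inv_mul_cancel, map_one]; rfl

omit [Fintype G] in
private lemma beta_inv_apply' (β : G →* RingAut T) (g : G) (x : T) :
    β g (β g⁻¹ x) = x := by simpa using beta_inv_apply β g⁻¹ x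

private lemma aux_sum_id (β : G →* RingAut T) (e : T)
    (hglob : ∏ g : G, (1 - β g e) = 0) :
    ∑ F : Finset G, (if F.Nonempty then (-1 : T) ^ (F.card + 1) * ∏ k ∈ F, β k e else 0) = 1 := by
  classical
  have h : (∏ g : G, ((-(β g e)) + 1)) = 0 := by
    simpa [sub_eq_neg_add] using hglob
  rw [Finset.prod_add] at h
  have h2 : ∑ F : Finset G, (-1 : T) ^ F.card * ∏ k ∈ F, β k e = 0 := by
    rw [Finset.powerset_univ] at h
    calc ∑ F : Finset G, (-1 : T) ^ F.card * ∏ k ∈ F, β k e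
        = ∑ F : Finset G, (∏ k ∈ F, -(β k e)) * ∏ k ∈ Finset.univ \ F, (1:T) := by
          refine Finset.sum_congr rfl fun F _ => ?_
          rw [Finset.prod_const_one, mul_one]
          rw [show (∏ k ∈ F, -(β k e)) = ∏ k ∈ F, (-1 : T) * β k e from
            Finset.prod_congr rfl fun k _ => (neg_one_mul _).symm]
          rw [Finset.prod_mul_distrib, Finset.prod_const]
      _ = 0 := h
  have h3 : ∀ F : Finset G,
      (if F.Nonempty then (-1 : T) ^ (F.card + 1) * ∏ k ∈ F, β k e else 0)
        = -((-1 : T) ^ F.card * ∏ k ∈ F, β k e) + (if F = ∅ then 1 else 0) := by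
    intro F
    by_cases hF : F = ∅
    · subst hF; simp
    · rw [if_pos (Finset.nonempty_iff_ne_empty.2 hF), if_neg hF, pow_succ]
      ring
  rw [Finset.sum_congr rfl fun F _ => h3 F, Finset.sum_add_distrib, Finset.sum_neg_distrib,
    h2, neg_zero, zero_add]
  simp

open Classical in
noncomputable def auxPhi (β : G →* RingAut T) (β' : G →* RingAut T') (e : T) (f : T → T')
    (t : T) : T' :=
  ∑ F : Finset G, if h : F.Nonempty then
    (-1 : T') ^ (F.card + 1) * β' h.choose (f (β h.choose⁻¹ (t * ∏ k ∈ F, β k e))) else 0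

private lemma aux_key (β : G →* RingAut T) (β' : G →* RingAut T') (e : T) (e' : T')
    (he : e * e = e)
    (hglob : ∏ g : G, (1 - β g e) = 0)
    (f : T → T')
    (hadd : ∀ s t : T, s * e = s → t * e = t → f (s + t) = f s + f t)
    (hstar : ∀ (s : T) (g : G), s * e = s → β' g (f s) * e' = f (β g s * e))
    (t : T) (g : G) :
    β' g (auxPhi β β' e f t) * e' = f (β g t * e) := by
  classical
  have hf0 : f 0 = 0 := by
    have h := hadd 0 0 (by simp) (by simp)
    simp only [add_zero] at h
    exact (left_eq_add.mp h)
  have hfneg : ∀ s : T, s * e = s → f (-s) = - f s := by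
    intro s hs
    have h := hadd s (-s) hs (by rw [neg_mul, hs])
    rw [add_neg_cancel, hf0] at h
    exact (neg_eq_of_add_eq_zero_right h.symm).symm
  have hfsum : ∀ (I : Finset (Finset G)) (a : Finset G → T),
      (∀ i, a i * e = a i) → f (∑ i ∈ I, a i) = ∑ i ∈ I, f (a i) := by
    intro I a ha
    induction I using Finset.induction_on with
    | empty => simpa using hf0
    | insert _ _ hnot ih =>
        rw [Finset.sum_insert hnot, Finset.sum_insert hnot,
          hadd _ _ (ha _) (by rw [Finset.sum_mul]; exact Finset.sum_congr rfl fun i _ => ha i), ih]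
  have huk : ∀ (F : Finset G) (k : G), k ∈ F → t * (∏ k ∈ F, β k e) * β k e = t * ∏ k ∈ F, β k e := by
    intro F k hk
    have hbe : β k e * β k e = β k e := by rw [← map_mul, he]
    rw [← Finset.prod_erase_mul F _ hk, ← mul_assoc, mul_assoc _ (β k e) (β k e), hbe]
  have hterm : ∀ F : Finset G,
      β' g (if h : F.Nonempty then
          (-1 : T') ^ (F.card + 1) * β' h.choose (f (β h.choose⁻¹ (t * ∏ k ∈ F, β k e))) else 0) * e'
        = f (if F.Nonempty then (-1 : T) ^ (F.card + 1) * (β g (t * ∏ k ∈ F, β k e) * e) else 0) := by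
    intro F
    by_cases hF : F.Nonempty
    · rw [dif_pos hF, if_pos hF]
      have hkF : hF.choose ∈ F := hF.choose_spec
      have hsS : β hF.choose⁻¹ (t * ∏ k ∈ F, β k e) * e = β hF.choose⁻¹ (t * ∏ k ∈ F, β k e) := by
        have h4 := congrArg (β hF.choose⁻¹) (huk F _ hkF)
        rw [map_mul, beta_inv_apply] at h4
        exact h4
      rw [map_mul, map_pow, map_neg, map_one, mul_assoc, ← beta_mul_apply β' g hF.choose,
        hstar _ _ hsS]
      have h5 : β (g * hF.choose) (β hF.choose⁻¹ (t * ∏ k ∈ F, β k e)) * e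
          = β g (t * ∏ k ∈ F, β k e) * e := by
        rw [beta_mul_apply, beta_inv_apply']
      rw [h5]
      rcases Nat.even_or_odd (F.card + 1) with hpar | hpar
      · rw [hpar.neg_one_pow, hpar.neg_one_pow, one_mul, one_mul]
      · rw [hpar.neg_one_pow, hpar.neg_one_pow, neg_one_mul, neg_one_mul,
          hfneg _ (by rw [mul_assoc, he])]
    · rw [dif_neg hF, if_neg hF, map_zero, zero_mul, hf0]
  calc β' g (auxPhi β β' e f t) * e'
      = ∑ F : Finset G, β' g (if h : F.Nonempty then
          (-1 : T') ^ (F.card + 1) * β' h.choose (f (β h.choose⁻¹ (t * ∏ k ∈ F, β k e))) else 0) * e' := by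
        rw [auxPhi, map_sum, Finset.sum_mul]
    _ = ∑ F : Finset G, f (if F.Nonempty then (-1 : T) ^ (F.card + 1) * (β g (t * ∏ k ∈ F, β k e) * e) else 0) :=
        Finset.sum_congr rfl fun F _ => hterm F
    _ = f (∑ F : Finset G, if F.Nonempty then (-1 : T) ^ (F.card + 1) * (β g (t * ∏ k ∈ F, β k e) * e) else 0) := by
        refine (hfsum _ _ fun F => ?_).symm
        by_cases hF : F.Nonempty
        · rw [if_pos hF, mul_assoc, mul_assoc, he]
        · rw [if_neg hF, zero_mul]
    _ = f (β g t * e) := by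
        congr 1
        have h6 : ∀ F : Finset G,
            (if F.Nonempty then (-1 : T) ^ (F.card + 1) * (β g (t * ∏ k ∈ F, β k e) * e) else 0)
              = (β g t * e) * β g (if F.Nonempty then (-1 : T) ^ (F.card + 1) * ∏ k ∈ F, β k e else 0) := by
          intro F
          by_cases hF : F.Nonempty
          · rw [if_pos hF, if_pos hF, map_mul, map_mul, map_pow, map_neg, map_one]
            ring
          · rw [if_neg hF, if_neg hF, map_zero, mul_zero]
        rw [Finset.sum_congr rfl fun F _ => h6 F, ← Finset.mul_sum, ← map_sum,
          aux_sum_id β e hglob, map_one, mul_one]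

private lemma aux_inj (β : G →* RingAut T) (e : T)
    (hglob : ∏ g : G, (1 - β g e) = 0) (t : T) (h : ∀ g : G, β g t * e = 0) : t = 0 := by
  classical
  have h2 : ∀ g : G, t * β g e = 0 := by
    intro g
    have h3 := congrArg (β g) (h g⁻¹)
    rw [map_mul, map_zero, beta_inv_apply'] at h3
    exact h3
  have h3 : ∀ s : Finset G, t * ∏ g ∈ s, (1 - β g e) = t := by
    intro s
    induction s using Finset.induction_on with
    | empty => simp
    | insert _ _ hnot ih =>
        rw [Finset.prod_insert hnot, ← mul_assoc, mul_sub, mul_one, h2, sub_zero, ih]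
  have h4 := h3 Finset.univ
  rw [hglob, mul_zero] at h4
  exact h4.symm

end AuxGlob

/-- Theorem 4.3, (iii) ⇒ (i): a partial G-isomorphism f : S → S' between the restricted
partial actions extends to a G-equivariant ring isomorphism Ψ : T → T' of the
globalizations, with Ψ extending f (in particular Ψ(1_S) = 1_{S'}). -/
theorem stmt_15 {T T' : Type*} [CommRing T] [CommRing T'] {G : Type*} [Group G] [Fintype G]
    (β : G →* RingAut T) (β' : G →* RingAut T')
    (oneS : T) (oneS' : T')
    (hidem : oneS * oneS = oneS) (hidem' : oneS' * oneS' = oneS')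
    (hglob : ∏ g : G, (1 - β g oneS) = 0)
    (hglob' : ∏ g : G, (1 - β' g oneS') = 0)
    -- f is a partial G-isomorphism between the restricted partial actions
    (f : T → T')
    (hbij : Set.BijOn f {s : T | s * oneS = s} {s : T' | s * oneS' = s})
    (hadd : ∀ s t : T, s * oneS = s → t * oneS = t → f (s + t) = f s + f t)
    (hmul : ∀ s t : T, s * oneS = s → t * oneS = t → f (s * t) = f s * f t)
    (hone : f oneS = oneS')
    (hfE : ∀ (s : T) (g : G), s * oneS = s →
      f (s * (β g oneS * oneS)) = f s * (β' g oneS' * oneS'))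
    (hfα : ∀ (s : T) (g : G), s * oneS = s →
      f (β g (s * (β g⁻¹ oneS * oneS)) * oneS) =
        β' g (f (s * (β g⁻¹ oneS * oneS))) * oneS') :
    ∃ Ψ : T ≃+* T',
      (∀ (g : G) (t : T), Ψ (β g t) = β' g (Ψ t)) ∧
      (∀ s : T, s * oneS = s → Ψ s = f s) := by
  classical
  -- f maps S into S'
  have hfS : ∀ s : T, s * oneS = s → f s * oneS' = f s := fun s hs => hbij.mapsTo hs
  -- the key "star" property of f
  have hstar : ∀ (s : T) (g : G), s * oneS = s → β' g (f s) * oneS' = f (β g s * oneS) := by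
    intro s g hs
    have h1 := hfα s g hs
    have h2 := hfE s g⁻¹ hs
    have e1 : β g (s * (β g⁻¹ oneS * oneS)) * oneS = β g s * oneS := by
      rw [map_mul, map_mul, beta_inv_apply']
      have : β g s * β g oneS = β g s := by rw [← map_mul, hs]
      calc β g s * (oneS * β g oneS) * oneS = β g s * β g oneS * (oneS * oneS) := by ring
        _ = β g s * oneS := by rw [this, hidem]
    rw [e1, h2] at h1
    have e2 : β' g (f s * (β' g⁻¹ oneS' * oneS')) * oneS' = β' g (f s) * oneS' := by
      rw [map_mul, map_mul, beta_inv_apply']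
      have : β' g (f s) * β' g oneS' = β' g (f s) := by rw [← map_mul, hfS s hs]
      calc β' g (f s) * (oneS' * β' g oneS') * oneS'
          = β' g (f s) * β' g oneS' * (oneS' * oneS') := by ring
        _ = β' g (f s) * oneS' := by rw [this, hidem']
    rw [e2] at h1
    exact h1.symm
  -- the inverse partial map
  set finv : T' → T := Function.invFunOn f {s : T | s * oneS = s} with hfinv
  have hfinvS : ∀ s' : T', s' * oneS' = s' → finv s' * oneS = finv s' :=
    fun s' hs' => hbij.surjOn.mapsTo_invFunOn hs'
  have hfinv_right : ∀ s' : T', s' * oneS' = s' → f (finv s') = s' :=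
    fun s' hs' => hbij.surjOn.rightInvOn_invFunOn hs'
  have hfinv_left : ∀ s : T, s * oneS = s → finv (f s) = s :=
    fun s hs => hbij.injOn.leftInvOn_invFunOn hs
  have hadd' : ∀ s t : T', s * oneS' = s → t * oneS' = t → finv (s + t) = finv s + finv t := by
    intro s t hs ht
    have hsum : (s + t) * oneS' = s + t := by rw [add_mul, hs, ht]
    have hmem : (finv s + finv t) * oneS = finv s + finv t := by
      rw [add_mul, hfinvS s hs, hfinvS t ht]
    refine hbij.injOn (hfinvS _ hsum) hmem ?_
    rw [hfinv_right _ hsum, hadd _ _ (hfinvS s hs) (hfinvS t ht),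
      hfinv_right s hs, hfinv_right t ht]
  have hstar' : ∀ (s' : T') (g : G), s' * oneS' = s' →
      β g (finv s') * oneS = finv (β' g s' * oneS') := by
    intro s' g hs'
    have hs : finv s' * oneS = finv s' := hfinvS s' hs'
    have h1 := hstar (finv s') g hs
    rw [hfinv_right s' hs'] at h1
    have hmem : β g (finv s') * oneS * oneS = β g (finv s') * oneS := by
      rw [mul_assoc, hidem]
    rw [h1, hfinv_left _ hmem]
  -- the two candidate maps
  set φ : T → T' := auxPhi β β' oneS f with hφ
  set φ' : T' → T := auxPhi β' β oneS' finv with hφ'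
  have key : ∀ (t : T) (g : G), β' g (φ t) * oneS' = f (β g t * oneS) :=
    fun t g => aux_key β β' oneS oneS' hidem hglob f hadd hstar t g
  have key' : ∀ (t' : T') (g : G), β g (φ' t') * oneS = finv (β' g t' * oneS') :=
    fun t' g => aux_key β' β oneS' oneS hidem' hglob' finv hadd' hstar' t' g
  have inj : ∀ x : T, (∀ g : G, β g x * oneS = 0) → x = 0 :=
    fun x hx => aux_inj β oneS hglob x hx
  have inj' : ∀ x : T', (∀ g : G, β' g x * oneS' = 0) → x = 0 :=
    fun x hx => aux_inj β' oneS' hglob' x hx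
  -- inverse properties
  have hleft : ∀ t : T, φ' (φ t) = t := by
    intro t
    have h0 : φ' (φ t) - t = 0 := by
      refine inj _ fun g => ?_
      have h1 : β g (φ' (φ t)) * oneS = β g t * oneS := by
        rw [key' (φ t) g, key t g, hfinv_left _ (by rw [mul_assoc, hidem])]
      rw [map_sub, sub_mul, h1, sub_self]
    exact sub_eq_zero.mp h0
  have hright : ∀ t' : T', φ (φ' t') = t' := by
    intro t'
    have h0 : φ (φ' t') - t' = 0 := by
      refine inj' _ fun g => ?_
      have h1 : β' g (φ (φ' t')) * oneS' = β' g t' * oneS' := by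
        rw [key (φ' t') g, key' t' g, hfinv_right _ (by rw [mul_assoc, hidem'])]
      rw [map_sub, sub_mul, h1, sub_self]
    exact sub_eq_zero.mp h0
  -- ring hom properties
  have hΦadd : ∀ t u : T, φ (t + u) = φ t + φ u := by
    intro t u
    have h0 : φ (t + u) - (φ t + φ u) = 0 := by
      refine inj' _ fun g => ?_
      have h1 : β g (t + u) * oneS = β g t * oneS + β g u * oneS := by
        rw [map_add, add_mul]
      have h2 : β' g (φ t + φ u) * oneS' = f (β g t * oneS) + f (β g u * oneS) := by
        rw [map_add, add_mul, key, key]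
      rw [map_sub, sub_mul, key, h2, h1,
        hadd _ _ (by rw [mul_assoc, hidem]) (by rw [mul_assoc, hidem]), sub_self]
    exact sub_eq_zero.mp h0
  have hΦmul : ∀ t u : T, φ (t * u) = φ t * φ u := by
    intro t u
    have h0 : φ (t * u) - φ t * φ u = 0 := by
      refine inj' _ fun g => ?_
      have h2 : β' g (φ t * φ u) * oneS' = (β' g (φ t) * oneS') * (β' g (φ u) * oneS') := by
        rw [map_mul]
        calc β' g (φ t) * β' g (φ u) * oneS'
            = β' g (φ t) * β' g (φ u) * (oneS' * oneS') := by rw [hidem']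
          _ = (β' g (φ t) * oneS') * (β' g (φ u) * oneS') := by ring
      have h3 : (β g t * oneS) * (β g u * oneS) = β g (t * u) * oneS := by
        rw [map_mul]
        calc β g t * oneS * (β g u * oneS) = β g t * β g u * (oneS * oneS) := by ring
          _ = β g t * β g u * oneS := by rw [hidem]
      rw [map_sub, sub_mul, key, h2, key, key,
        ← hmul _ _ (by rw [mul_assoc, hidem]) (by rw [mul_assoc, hidem]), h3, sub_self]
    exact sub_eq_zero.mp h0
  -- equivariance
  have hΦequiv : ∀ (g : G) (t : T), φ (β g t) = β' g (φ t) := by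
    intro g t
    have h0 : φ (β g t) - β' g (φ t) = 0 := by
      refine inj' _ fun k => ?_
      have h1 : β' k (β' g (φ t)) * oneS' = f (β k (β g t) * oneS) := by
        rw [← beta_mul_apply β' k g, key t (k * g), beta_mul_apply]
      rw [map_sub, sub_mul, key, h1, sub_self]
    exact sub_eq_zero.mp h0
  -- extension of f
  have hΦext : ∀ s : T, s * oneS = s → φ s = f s := by
    intro s hs
    have h0 : φ s - f s = 0 := by
      refine inj' _ fun g => ?_
      rw [map_sub, sub_mul, key, hstar s g hs, sub_self]
    exact sub_eq_zero.mp h0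
  exact ⟨{ toFun := φ, invFun := φ', left_inv := hleft, right_inv := hright,
           map_mul' := fun x y => hΦmul x y, map_add' := fun x y => hΦadd x y },
    fun g t => hΦequiv g t, fun s hs => hΦext s hs⟩
end
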